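/- arXiv:1907.11012 — 9 statements merged into one kernel-verified Lean document; each statement's English description precedes it below -/
import Mathlib

section
/- Suppose the unique solution (W_1,…,W_N) of the window IFS has vol(W_i) > 0 for every 1 ≤ i ≤ N (where vol denotes Lebesgue measure on ℝ^m). Then the solution is row-wise measure-disjoint: for each i, any two of the sets Q·W_j + t with 1 ≤ j ≤ N and t ∈ T_{ij} that correspond to distinct pairs (j,t) intersect in a Lebesgue null set. Moreover, there is a number η > 0 such that vol(W_i) = η·v_i holds for all 1 ≤ i ≤ N, where |v⟩ = (v_1,…,v_N) is the right Perron–Frobenius eigenvector of M normalised by Σ_i v_i = 1. -/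
open MeasureTheory Filter Matrix Topology Set

open Pointwise

/-- A finite family of finite-measure measurable sets whose union has measure equal to the
sum of the measures is pairwise a.e.-disjoint. -/
lemma measure_inter_null_of_sum_eq {α ι : Type*} [MeasurableSpace α] (μ : Measure α)
    (S : Finset ι) (A : ι → Set α) (hmeas : ∀ p ∈ S, MeasurableSet (A p))
    (hfin : ∀ p ∈ S, μ (A p) ≠ ⊤)
    (heq : μ (⋃ p ∈ S, A p) = ∑ p ∈ S, μ (A p))
    {p q : ι} (hp : p ∈ S) (hq : q ∈ S) (hpq : p ≠ q) :
    μ (A p ∩ A q) = 0 := by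
  classical
  have hsub : (⋃ r ∈ S, A r) ⊆ (A p ∪ A q) ∪ ⋃ r ∈ S \ ({p, q} : Finset ι), A r := by
    intro x hx
    simp only [Set.mem_iUnion, exists_prop] at hx
    obtain ⟨r, hrS, hxr⟩ := hx
    rcases eq_or_ne r p with rfl | hrp
    · exact Or.inl (Or.inl hxr)
    rcases eq_or_ne r q with rfl | hrq
    · exact Or.inl (Or.inr hxr)
    · refine Or.inr ?_
      simp only [Set.mem_iUnion, exists_prop]
      exact ⟨r, Finset.mem_sdiff.mpr ⟨hrS, by simp [hrp, hrq]⟩, hxr⟩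
  have hsdfin : (∑ r ∈ S \ ({p, q} : Finset ι), μ (A r)) ≠ ⊤ := by
    refine (ENNReal.sum_lt_top.mpr ?_).ne
    intro r hr
    exact (hfin r (Finset.mem_sdiff.mp hr).1).lt_top
  have h1 : μ (⋃ r ∈ S, A r) ≤ μ (A p ∪ A q) + ∑ r ∈ S \ ({p, q} : Finset ι), μ (A r) := by
    refine (measure_mono hsub).trans ?_
    refine (measure_union_le _ _).trans ?_
    exact add_le_add (le_refl _) (measure_biUnion_finset_le _ _)
  have hsplit : (∑ r ∈ S, μ (A r)) =
      μ (A p) + μ (A q) + ∑ r ∈ S \ ({p, q} : Finset ι), μ (A r) := by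
    have hsub2 : ({p, q} : Finset ι) ⊆ S := by
      intro x hx
      rcases Finset.mem_insert.mp hx with rfl | hx
      · exact hp
      · rcases Finset.mem_singleton.mp hx with rfl; exact hq
    rw [← Finset.sum_sdiff hsub2, Finset.sum_pair hpq]
    ring
  have h2 : μ (A p) + μ (A q) ≤ μ (A p ∪ A q) := by
    have := heq ▸ h1
    rw [hsplit] at this
    exact (ENNReal.add_le_add_iff_right hsdfin).mp this
  have h3 : μ (A p ∪ A q) + μ (A p ∩ A q) = μ (A p) + μ (A q) :=
    measure_union_add_inter (A p) (hmeas q hq)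
  have hufin : μ (A p ∪ A q) ≠ ⊤ := by
    refine ((measure_union_le _ _).trans_lt ?_).ne
    exact ENNReal.add_lt_top.mpr ⟨(hfin p hp).lt_top, (hfin q hq).lt_top⟩
  have h4 : μ (A p ∪ A q) + μ (A p ∩ A q) ≤ μ (A p ∪ A q) + 0 := by
    rw [add_zero]; exact h3.le.trans h2
  exact le_antisymm ((ENNReal.add_le_add_iff_left hufin).mp h4) zero_le

/-- Elementary Perron–Frobenius comparison: if `M` is nonnegative with `M^k > 0`,
`v > 0` is an eigenvector for `lam > 0`, `w > 0` and `lam • w ≤ M w` pointwise,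
then `w` is a positive multiple of `v`. -/
lemma pf_aux {N : ℕ} (M : Matrix (Fin N) (Fin N) ℝ) (hMnn : ∀ i j, 0 ≤ M i j)
    {k : ℕ} (hk : ∀ i j, 0 < (M ^ k) i j)
    {lam : ℝ} (hlam : 0 < lam) {v w : Fin N → ℝ}
    (hv : M.mulVec v = lam • v) (hvpos : ∀ i, 0 < v i)
    (hwpos : ∀ i, 0 < w i) (hN : 0 < N)
    (hineq : ∀ i, lam * w i ≤ M.mulVec w i) :
    ∃ η : ℝ, 0 < η ∧ ∀ i, w i = η * v i := by
  haveI : Nonempty (Fin N) := ⟨⟨0, hN⟩⟩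
  obtain ⟨i1, hi1⟩ := Finite.exists_max (fun j => w j / v j)
  set c : ℝ := w i1 / v i1 with hc
  have hcpos : 0 < c := div_pos (hwpos i1) (hvpos i1)
  set u : Fin N → ℝ := c • v - w with hu
  have hu0 : ∀ j, 0 ≤ u j := by
    intro j
    have : w j / v j ≤ c := hi1 j
    have := (div_le_iff₀ (hvpos j)).mp this
    simp only [hu, Pi.sub_apply, Pi.smul_apply, smul_eq_mul]
    linarith [this]
  have hui1 : u i1 = 0 := by
    simp only [hu, Pi.sub_apply, Pi.smul_apply, smul_eq_mul, hc]
    rw [div_mul_cancel₀ _ (hvpos i1).ne', sub_self]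
  have hMu : ∀ i, M.mulVec u i ≤ lam * u i := by
    intro i
    have h1 : M.mulVec u = c • M.mulVec v - M.mulVec w := by
      rw [hu, Matrix.mulVec_sub, Matrix.mulVec_smul]
    have h2 : M.mulVec u i = c * (lam * v i) - M.mulVec w i := by
      rw [h1]; simp [hv]
    rw [h2]
    have := hineq i
    simp only [hu, Pi.sub_apply, Pi.smul_apply, smul_eq_mul]
    nlinarith [this]
  have hpow : ∀ n, ∀ i, (M ^ n).mulVec u i ≤ lam ^ n * u i := by
    intro n
    induction n with
    | zero => intro i; simp [Matrix.one_mulVec]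
    | succ n ih =>
      intro i
      have hstep : (M ^ (n + 1)).mulVec u = M.mulVec ((M ^ n).mulVec u) := by
        rw [Matrix.mulVec_mulVec, ← pow_succ']
      rw [hstep]
      have h1 : M.mulVec ((M ^ n).mulVec u) i ≤ ∑ j, M i j * (lam ^ n * u j) := by
        simp only [Matrix.mulVec, dotProduct]
        exact Finset.sum_le_sum fun j _ =>
          mul_le_mul_of_nonneg_left (ih j) (hMnn i j)
      have h2 : (∑ j, M i j * (lam ^ n * u j)) = lam ^ n * M.mulVec u i := by
        simp only [Matrix.mulVec, dotProduct, Finset.mul_sum]; congr 1; ext j; ring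
      have h3 : lam ^ n * M.mulVec u i ≤ lam ^ n * (lam * u i) :=
        mul_le_mul_of_nonneg_left (hMu i) (pow_nonneg hlam.le n)
      calc M.mulVec ((M ^ n).mulVec u) i ≤ lam ^ n * M.mulVec u i := h2 ▸ h1
        _ ≤ lam ^ n * (lam * u i) := h3
        _ = lam ^ (n + 1) * u i := by ring
  have hsum0 : (∑ j, (M ^ k) i1 j * u j) = 0 := by
    have hle : (∑ j, (M ^ k) i1 j * u j) ≤ 0 := by
      have := hpow k i1
      simp only [Matrix.mulVec, dotProduct] at this
      rw [hui1, mul_zero] at this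
      exact this
    have hge : 0 ≤ ∑ j, (M ^ k) i1 j * u j :=
      Finset.sum_nonneg fun j _ => mul_nonneg (hk i1 j).le (hu0 j)
    linarith
  have huzero : ∀ j, u j = 0 := by
    intro j
    have := (Finset.sum_eq_zero_iff_of_nonneg
      (fun j _ => mul_nonneg (hk i1 j).le (hu0 j))).mp hsum0 j (Finset.mem_univ j)
    rcases mul_eq_zero.mp this with h | h
    · exact absurd h (hk i1 j).ne'
    · exact h
  refine ⟨c, hcpos, fun j => ?_⟩
  have := huzero j
  simp only [hu, Pi.sub_apply, Pi.smul_apply, smul_eq_mul] at this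
  linarith

/-- if the unique solution of the window IFS has windows of positive
Lebesgue measure, then the solution is row-wise measure-disjoint, and there is
`η > 0` with `vol(W_i) = η·v_i` for all `i`, where `v` is the normalised right
Perron–Frobenius eigenvector of `M`. -/
theorem stmt1
    {N m : ℕ} (hN : 1 ≤ N) (hm : 1 ≤ m)
    (T : Fin N → Fin N → Finset (EuclideanSpace ℝ (Fin m)))
    (M : Matrix (Fin N) (Fin N) ℝ)
    (hM : ∀ i j, M i j = (T i j).card)
    (hprim : ∃ k : ℕ, ∀ i j, 0 < (M ^ k) i j)
    (lam : ℝ) (hlam : 1 < lam)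
    (v : Fin N → ℝ)
    (hv : M.mulVec v = lam • v) (hvpos : ∀ i, 0 < v i) (hvsum : ∑ i, v i = 1)
    (Q : EuclideanSpace ℝ (Fin m) →L[ℝ] EuclideanSpace ℝ (Fin m))
    (hQbij : Function.Bijective Q)
    (hQcontr : ‖Q‖ < 1)
    (hQdet : |Q.det| = 1 / lam)
    (W : Fin N → Set (EuclideanSpace ℝ (Fin m)))
    (hWne : ∀ i, (W i).Nonempty) (hWcp : ∀ i, IsCompact (W i))
    (hIFS : ∀ i, W i = ⋃ j, ⋃ t ∈ T i j, (fun x => Q x + t) '' W j)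
    (hvol : ∀ i, 0 < volume (W i)) :
    (∀ i j j' : Fin N, ∀ t ∈ T i j, ∀ t' ∈ T i j', (j, t) ≠ (j', t') →
      volume (((fun x => Q x + t) '' W j) ∩ ((fun x => Q x + t') '' W j')) = 0) ∧
    (∃ η : ℝ, 0 < η ∧ ∀ i, volume (W i) = ENNReal.ofReal (η * v i)) := by
  classical
  obtain ⟨k, hk⟩ := hprim
  have hlam0 : (0 : ℝ) < lam := lt_trans one_pos hlam
  have hMnn : ∀ i j, 0 ≤ M i j := fun i j => by rw [hM i j]; exact_mod_cast Nat.zero_le _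
  -- volume of pieces
  have hpiecevol : ∀ (j : Fin N) (t : EuclideanSpace ℝ (Fin m)),
      volume ((fun x => Q x + t) '' W j) = ENNReal.ofReal (1 / lam) * volume (W j) := by
    intro j t
    have h1 : (fun x => Q x + t) '' W j = t +ᵥ (⇑Q '' W j) := by
      rw [← Set.image_vadd, ← Set.image_comp]
      congr 1
      funext x
      simp [add_comm]
    rw [h1, measure_vadd, Measure.addHaar_image_continuousLinearMap, hQdet]
  have hcpW : ∀ (j : Fin N) (t : EuclideanSpace ℝ (Fin m)), IsCompact ((fun x => Q x + t) '' W j) := by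
    intro j t
    exact (hWcp j).image (by fun_prop)
  have hfin : ∀ j, volume (W j) ≠ ⊤ := fun j => ((hWcp j).measure_lt_top).ne
  set w : Fin N → ℝ := fun j => (volume (W j)).toReal with hw
  have hwpos : ∀ j, 0 < w j := fun j => ENNReal.toReal_pos (hvol j).ne' (hfin j)
  -- indexed family of pieces
  set A : (Σ _ : Fin N, EuclideanSpace ℝ (Fin m)) → Set (EuclideanSpace ℝ (Fin m)) := fun p => (fun x => Q x + p.2) '' W p.1 with hA
  have huni : ∀ i, W i = ⋃ p ∈ Finset.univ.sigma (T i), A p := by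
    intro i
    rw [hIFS i]
    ext x
    simp [A, Finset.mem_sigma, Sigma.exists]
  have hsum : ∀ i, (∑ p ∈ Finset.univ.sigma (T i), volume (A p)) =
      ∑ j, ((T i j).card : ENNReal) * (ENNReal.ofReal (1 / lam) * volume (W j)) := by
    intro i
    rw [Finset.sum_sigma]
    refine Finset.sum_congr rfl fun j _ => ?_
    simp only [hA]
    rw [Finset.sum_congr rfl fun t _ => hpiecevol j t, Finset.sum_const, nsmul_eq_mul]
  have hsumfin : ∀ i, (∑ p ∈ Finset.univ.sigma (T i), volume (A p)) ≠ ⊤ := by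
    intro i
    rw [hsum i]
    refine (ENNReal.sum_lt_top.mpr fun j _ => ?_).ne
    exact ENNReal.mul_lt_top (by simp) (ENNReal.mul_lt_top ENNReal.ofReal_lt_top (hfin j).lt_top)
  have hsumtoReal : ∀ i, (∑ p ∈ Finset.univ.sigma (T i), volume (A p)).toReal =
      ∑ j, M i j * ((1 / lam) * w j) := by
    intro i
    rw [hsum i, ENNReal.toReal_sum (fun j _ => by
      exact (ENNReal.mul_lt_top (by simp)
        (ENNReal.mul_lt_top ENNReal.ofReal_lt_top (hfin j).lt_top)).ne)]
    refine Finset.sum_congr rfl fun j _ => ?_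
    rw [hM i j]
    simp [hw, ENNReal.toReal_mul, ENNReal.toReal_ofReal (by positivity : (0:ℝ) ≤ 1 / lam)]
    exact Or.inl (Or.inl hlam0.le)
  -- subadditivity inequality
  have hineq : ∀ i, lam * w i ≤ M.mulVec w i := by
    intro i
    have hle : volume (W i) ≤ ∑ p ∈ Finset.univ.sigma (T i), volume (A p) := by
      rw [huni i]
      exact measure_biUnion_finset_le _ _
    have hle' : w i ≤ ∑ j, M i j * ((1 / lam) * w j) := by
      rw [hw, ← hsumtoReal i]
      exact ENNReal.toReal_mono (hsumfin i) hle
    have : lam * w i ≤ lam * ∑ j, M i j * ((1 / lam) * w j) :=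
      mul_le_mul_of_nonneg_left hle' hlam0.le
    refine this.trans (le_of_eq ?_)
    simp only [Matrix.mulVec, dotProduct, Finset.mul_sum]
    refine Finset.sum_congr rfl fun j _ => ?_
    field_simp
  obtain ⟨η, hη, hwv⟩ := pf_aux M hMnn hk hlam0 hv hvpos hwpos (lt_of_lt_of_le one_pos hN) hineq
  -- eigen equation for w
  have heig : ∀ i, (∑ j, M i j * w j) = lam * w i := by
    intro i
    have hvi : (∑ j, M i j * v j) = lam * v i := by
      have := congrFun hv i
      simpa [Matrix.mulVec, dotProduct] using this
    calc (∑ j, M i j * w j) = ∑ j, M i j * (η * v j) := by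
          exact Finset.sum_congr rfl fun j _ => by rw [hwv j]
      _ = η * ∑ j, M i j * v j := by rw [Finset.mul_sum]; exact Finset.sum_congr rfl fun j _ => by ring
      _ = η * (lam * v i) := by rw [hvi]
      _ = lam * w i := by rw [hwv i]; ring
  -- exact measure additivity
  have hEqvol : ∀ i, volume (W i) = ∑ p ∈ Finset.univ.sigma (T i), volume (A p) := by
    intro i
    have h1 : (∑ p ∈ Finset.univ.sigma (T i), volume (A p)).toReal = w i := by
      rw [hsumtoReal i]
      have : (∑ j, M i j * ((1 / lam) * w j)) = (1 / lam) * ∑ j, M i j * w j := by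
        rw [Finset.mul_sum]; exact Finset.sum_congr rfl fun j _ => by ring
      rw [this, heig i]
      field_simp
    rw [← (ENNReal.toReal_eq_toReal_iff' (hfin i) (hsumfin i))]
    rw [h1]
  constructor
  · intro i j j' t ht t' ht' hne
    have hp : (⟨j, t⟩ : Σ _ : Fin N, EuclideanSpace ℝ (Fin m)) ∈ Finset.univ.sigma (T i) := by
      simp [Finset.mem_sigma, ht]
    have hq : (⟨j', t'⟩ : Σ _ : Fin N, EuclideanSpace ℝ (Fin m)) ∈ Finset.univ.sigma (T i) := by
      simp [Finset.mem_sigma, ht']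
    have hpq : (⟨j, t⟩ : Σ _ : Fin N, EuclideanSpace ℝ (Fin m)) ≠ ⟨j', t'⟩ := by
      intro h
      apply hne
      obtain ⟨h1, h2⟩ := Sigma.mk.inj_iff.mp h
      exact Prod.ext h1 (eq_of_heq h2)
    have := measure_inter_null_of_sum_eq volume (Finset.univ.sigma (T i)) A
      (fun p _ => ((hcpW p.1 p.2).isClosed).measurableSet)
      (fun p _ => ((hcpW p.1 p.2).measure_lt_top).ne)
      ((huni i) ▸ hEqvol i) hp hq hpq
    exact this
  · refine ⟨η, hη, fun i => ?_⟩
    rw [← ENNReal.ofReal_toReal (hfin i)]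
    exact congrArg _ (hwv i)
end

section
/- Suppose the unique solution (W_1,…,W_N) of the window IFS is row-wise measure-disjoint (for each i, any two of the sets Q·W_j + t with t ∈ T_{ij} corresponding to distinct pairs (j,t) intersect in a Lebesgue null set). Define f_i(y) = ∫_{W_i} exp(2πi⟨x,y⟩) dx for y ∈ ℝ^m. Then each f_i is continuous, and with R = Qᵀ one has the transfer-matrix relation f_i(y) = λ^{−1} Σ_{j=1}^{N} B_{ij}(y) · f_j(R y) for all y ∈ ℝ^m and all 1 ≤ i ≤ N. -/
open MeasureTheory Filter Matrix Topology Set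

/-- with `f_i(y) = ∫_{W_i} e^{2πi⟨x,y⟩} dx`, each `f_i` is continuous
and, with `R = Qᵀ`, one has `f_i(y) = λ⁻¹ Σ_j B_{ij}(y) f_j(Ry)`. -/
theorem stmt5
    {N m : ℕ} (hN : 1 ≤ N) (hm : 1 ≤ m)
    (T : Fin N → Fin N → Finset (EuclideanSpace ℝ (Fin m)))
    (M : Matrix (Fin N) (Fin N) ℝ)
    (hM : ∀ i j, M i j = (T i j).card)
    (hprim : ∃ k : ℕ, ∀ i j, 0 < (M ^ k) i j)
    (lam : ℝ) (hlam : 1 < lam)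
    (B : EuclideanSpace ℝ (Fin m) → Matrix (Fin N) (Fin N) ℂ)
    (hB : ∀ y i j, B y i j =
      ∑ x ∈ T i j, Complex.exp (2 * Real.pi * Complex.I * ((inner ℝ x y : ℝ) : ℂ)))
    (Q : EuclideanSpace ℝ (Fin m) →L[ℝ] EuclideanSpace ℝ (Fin m))
    (hQbij : Function.Bijective Q)
    (hQcontr : ‖Q‖ < 1)
    (hQdet : |Q.det| = 1 / lam)
    (W : Fin N → Set (EuclideanSpace ℝ (Fin m)))
    (hWne : ∀ i, (W i).Nonempty) (hWcp : ∀ i, IsCompact (W i))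
    (hIFS : ∀ i, W i = ⋃ j, ⋃ t ∈ T i j, (fun x => Q x + t) '' W j)
    (hdisj : ∀ i j j' : Fin N, ∀ t ∈ T i j, ∀ t' ∈ T i j', (j, t) ≠ (j', t') →
      volume (((fun x => Q x + t) '' W j) ∩ ((fun x => Q x + t') '' W j')) = 0)
    (f : Fin N → EuclideanSpace ℝ (Fin m) → ℂ)
    (hf : ∀ i y, f i y =
      ∫ x in W i, Complex.exp (2 * Real.pi * Complex.I * ((inner ℝ x y : ℝ) : ℂ))) :
    (∀ i, Continuous (f i)) ∧
    (∀ (y : EuclideanSpace ℝ (Fin m)) (i : Fin N),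
      f i y = ((lam : ℂ))⁻¹ *
        ∑ j, B y i j * f j (ContinuousLinearMap.adjoint Q y)) := by
  classical
  have hnorm : ∀ r : ℝ, ‖Complex.exp (2 * Real.pi * Complex.I * (r : ℂ))‖ = 1 := by
    intro r
    rw [Complex.norm_exp]
    norm_num [Complex.mul_re, Complex.mul_im]
  have hcont_x : ∀ y : EuclideanSpace ℝ (Fin m),
      Continuous fun x : EuclideanSpace ℝ (Fin m) =>
        Complex.exp (2 * Real.pi * Complex.I * ((inner ℝ x y : ℝ) : ℂ)) := by
    intro y
    exact Complex.continuous_exp.comp <| continuous_const.mul <|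
      Complex.continuous_ofReal.comp <| continuous_id.inner continuous_const
  constructor
  · -- continuity
    intro i
    have hfi : f i = fun y => ∫ x in W i,
        Complex.exp (2 * Real.pi * Complex.I * ((inner ℝ x y : ℝ) : ℂ)) := funext (hf i)
    rw [hfi]
    haveI : IsFiniteMeasure (volume.restrict (W i)) :=
      ⟨by rw [Measure.restrict_apply_univ]; exact (hWcp i).measure_lt_top⟩
    apply continuous_of_dominated (bound := fun _ => (1 : ℝ))
    · intro y; exact (hcont_x y).aestronglyMeasurable
    · intro y; filter_upwards with x; rw [hnorm]
    · exact integrable_const 1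
    · filter_upwards with x
      exact Complex.continuous_exp.comp <| continuous_const.mul <|
        Complex.continuous_ofReal.comp <| continuous_const.inner continuous_id
  · intro y i
    set R := ContinuousLinearMap.adjoint Q with hRdef
    set e : EuclideanSpace ℝ (Fin m) → EuclideanSpace ℝ (Fin m) → ℂ :=
      fun z x => Complex.exp (2 * Real.pi * Complex.I * ((inner ℝ x z : ℝ) : ℂ)) with he
    -- index type
    set ι := (j : Fin N) × {t // t ∈ T i j} with hι
    set S : ι → Set (EuclideanSpace ℝ (Fin m)) :=
      fun p => (fun x => Q x + (p.2 : EuclideanSpace ℝ (Fin m))) '' W p.1 with hS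
    have hUnion : W i = ⋃ p : ι, S p := by
      rw [hIFS i]
      ext x
      simp only [mem_iUnion, hS]
      constructor
      · rintro ⟨j, t, ht, hx⟩; exact ⟨⟨j, t, ht⟩, hx⟩
      · rintro ⟨⟨j, t, ht⟩, hx⟩; exact ⟨j, t, ht, hx⟩
    have hinj : Function.Injective Q := hQbij.1
    have hSmeas : ∀ p : ι, MeasurableSet (S p) := by
      intro p
      exact ((hWcp p.1).image ((Q.continuous).add continuous_const)).measurableSet
    have hstep1 : f i y = ∑' p : ι, ∫ x in S p, e y x := by
      rw [hf i y, hUnion]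
      apply integral_iUnion_ae (fun p => (hSmeas p).nullMeasurableSet)
      · intro p q hpq
        obtain ⟨j, t, ht⟩ := p
        obtain ⟨j', t', ht'⟩ := q
        apply hdisj i j j' t ht t' ht'
        intro hcontra
        apply hpq
        simp only [Prod.mk.injEq] at hcontra
        obtain ⟨h1, h2⟩ := hcontra
        subst h1; subst h2; rfl
      · rw [← hUnion]
        exact ((hcont_x y).continuousOn).integrableOn_compact (hWcp i)
    rw [hstep1, tsum_fintype]
    -- evaluate each integral
    have hterm : ∀ p : ι, ∫ x in S p, e y x =
        ((lam : ℂ))⁻¹ * (e y (p.2 : EuclideanSpace ℝ (Fin m)) * f p.1 (R y)) := by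
      rintro ⟨j, t, ht⟩
      have hchg : ∫ x in (fun x => Q x + (t : EuclideanSpace ℝ (Fin m))) '' W j, e y x
          = ∫ u in W j, |Q.det| • e y (Q u + t) := by
        apply integral_image_eq_integral_abs_det_fderiv_smul volume (hWcp j).measurableSet
          (f' := fun _ => (Q : EuclideanSpace ℝ (Fin m) →L[ℝ] EuclideanSpace ℝ (Fin m)))
        · intro x _
          exact ((Q.hasFDerivAt).add_const _).hasFDerivWithinAt
        · intro a _ b _ hab
          exact hinj (by simpa using hab)
      have hkey : ∀ u : EuclideanSpace ℝ (Fin m),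
          e y (Q u + (t : EuclideanSpace ℝ (Fin m))) = e y t * e (R y) u := by
        intro u
        have h2 : (inner ℝ u (R y) : ℝ) = (inner ℝ (Q u) y : ℝ) := by
          rw [hRdef]
          calc (inner ℝ u (ContinuousLinearMap.adjoint Q y) : ℝ)
              = (inner ℝ (ContinuousLinearMap.adjoint Q y) u : ℝ) := real_inner_comm _ _
            _ = (inner ℝ y (Q u) : ℝ) := ContinuousLinearMap.adjoint_inner_left Q u y
            _ = (inner ℝ (Q u) y : ℝ) := real_inner_comm _ _
        have h1 : (inner ℝ (Q u + (t : EuclideanSpace ℝ (Fin m))) y : ℝ)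
            = (inner ℝ (t : EuclideanSpace ℝ (Fin m)) y : ℝ) + (inner ℝ u (R y) : ℝ) := by
          rw [inner_add_left, h2]; ring
        simp only [he, h1]
        push_cast
        rw [mul_add, Complex.exp_add]
      have hfj : f j (R y) = ∫ u in W j, e (R y) u := hf j (R y)
      rw [hS]
      simp only
      rw [hchg]
      have : ∀ u, |Q.det| • e y (Q u + (t : EuclideanSpace ℝ (Fin m)))
          = ((lam : ℂ))⁻¹ * e y t * e (R y) u := by
        intro u
        rw [hkey u]
        rw [Complex.real_smul, hQdet]
        push_cast
        ring
      simp only [this]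
      rw [integral_const_mul, hfj]
      ring
    simp only [hterm]
    -- sum over sigma
    rw [← Finset.univ_sigma_univ, Finset.sum_sigma, Finset.mul_sum]
    refine Finset.sum_congr rfl fun j _ => ?_
    rw [hB y i j, Finset.sum_mul, Finset.mul_sum,
      ← Finset.sum_coe_sort (T i j) (fun t => ((lam : ℂ))⁻¹ * (e y t * f j (R y)))]
end

section
/- The sequence of matrix functions (λ^{−n}(B^{(n)}(y) − M^n))_{n∈ℕ} is equicontinuous at y = 0: for every ε > 0 there exists δ = δ(ε) > 0 such that for all n ∈ ℕ and all y ∈ ℝ^m with ‖y‖₂ < δ one has λ^{−n}·‖B^{(n)}(y) − M^n‖₂ < ε. -/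
open MeasureTheory Filter Matrix Topology Set

lemma stmt7_coord_le {m : ℕ} (x : EuclideanSpace ℂ (Fin m)) (j : Fin m) : ‖x j‖ ≤ ‖x‖ := by
  rw [EuclideanSpace.norm_eq]
  rw [show ‖x j‖ = Real.sqrt (‖x j‖ ^ 2) from (Real.sqrt_sq (norm_nonneg _)).symm]
  apply Real.sqrt_le_sqrt
  exact Finset.single_le_sum (f := fun i => ‖x i‖ ^ 2) (fun i _ => sq_nonneg _) (Finset.mem_univ j)

lemma stmt7_opnorm_le {N : ℕ} (A : Matrix (Fin N) (Fin N) ℂ) :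
    ‖Matrix.toEuclideanCLM (𝕜 := ℂ) A‖ ≤ ∑ i, ∑ j, ‖A i j‖ := by
  apply ContinuousLinearMap.opNorm_le_bound _
    (Finset.sum_nonneg fun i _ => Finset.sum_nonneg fun j _ => norm_nonneg _)
  intro x
  have hcoord : ∀ i : Fin N, (Matrix.toEuclideanCLM (𝕜 := ℂ) A x) i = ∑ j, A i j * x j := by
    intro i
    have := congrFun (Matrix.ofLp_toEuclideanCLM (𝕜 := ℂ) A x) i
    simpa [Matrix.toLin'_apply, Matrix.mulVec, dotProduct] using this
  calc ‖Matrix.toEuclideanCLM (𝕜 := ℂ) A x‖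
      = Real.sqrt (∑ i, ‖(Matrix.toEuclideanCLM (𝕜 := ℂ) A x) i‖ ^ 2) :=
        EuclideanSpace.norm_eq _
    _ ≤ Real.sqrt ((∑ i, ‖(Matrix.toEuclideanCLM (𝕜 := ℂ) A x) i‖) ^ 2) :=
        Real.sqrt_le_sqrt (Finset.sum_sq_le_sq_sum_of_nonneg fun i _ => norm_nonneg _)
    _ = ∑ i, ‖(Matrix.toEuclideanCLM (𝕜 := ℂ) A x) i‖ :=
        Real.sqrt_sq (Finset.sum_nonneg fun i _ => norm_nonneg _)
    _ ≤ ∑ i, ∑ j, ‖A i j‖ * ‖x‖ := by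
        apply Finset.sum_le_sum
        intro i _
        rw [hcoord i]
        calc ‖∑ j, A i j * x j‖ ≤ ∑ j, ‖A i j * x j‖ := norm_sum_le _ _
          _ ≤ ∑ j, ‖A i j‖ * ‖x‖ := by
              apply Finset.sum_le_sum
              intro j _
              rw [norm_mul]
              exact mul_le_mul_of_nonneg_left (stmt7_coord_le x j) (norm_nonneg _)
    _ = (∑ i, ∑ j, ‖A i j‖) * ‖x‖ := by rw [Finset.sum_mul]; congr 1; ext i; rw [Finset.sum_mul]

lemma stmt7_exp_sub_one (t : ℝ) : ‖Complex.exp ((t : ℂ) * Complex.I) - 1‖ ≤ |t| := by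
  have h2 : ‖Complex.exp ((t : ℂ) * Complex.I) - 1‖ ^ 2 = 2 - 2 * Real.cos t := by
    rw [Complex.sq_norm, Complex.normSq_apply]
    simp [Complex.exp_mul_I, Complex.cos_ofReal_re, Complex.sin_ofReal_re]
    nlinarith [Real.sin_sq_add_cos_sq t]
  have h3 : ‖Complex.exp ((t : ℂ) * Complex.I) - 1‖ ^ 2 ≤ |t| ^ 2 := by
    rw [h2, sq_abs]
    have := Real.one_sub_sq_div_two_le_cos (x := t)
    nlinarith
  nlinarith [norm_nonneg (Complex.exp ((t : ℂ) * Complex.I) - 1), abs_nonneg t]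

set_option maxHeartbeats 1000000 in
/-- the sequence `(λ⁻ⁿ(B⁽ⁿ⁾(y) − Mⁿ))ₙ` is equicontinuous at `y = 0`:
for every `ε > 0` there is `δ > 0` with `λ⁻ⁿ‖B⁽ⁿ⁾(y) − Mⁿ‖₂ < ε` for all `n` and
all `‖y‖₂ < δ`. -/
theorem stmt7
    {N m : ℕ} (hN : 1 ≤ N) (hm : 1 ≤ m)
    (T : Fin N → Fin N → Finset (EuclideanSpace ℝ (Fin m)))
    (M : Matrix (Fin N) (Fin N) ℝ)
    (hM : ∀ i j, M i j = (T i j).card)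
    (hprim : ∃ k : ℕ, ∀ i j, 0 < (M ^ k) i j)
    (lam : ℝ) (hlam : 1 < lam)
    (u v : Fin N → ℝ)
    (hu : M.vecMul u = lam • u) (hv : M.mulVec v = lam • v)
    (hupos : ∀ i, 0 < u i) (hvpos : ∀ i, 0 < v i)
    (hvsum : ∑ i, v i = 1) (huv : ∑ i, u i * v i = 1)
    (B : EuclideanSpace ℝ (Fin m) → Matrix (Fin N) (Fin N) ℂ)
    (hB : ∀ y i j, B y i j =
      ∑ x ∈ T i j, Complex.exp (2 * Real.pi * Complex.I * ((inner ℝ x y : ℝ) : ℂ)))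
    (R : EuclideanSpace ℝ (Fin m) →L[ℝ] EuclideanSpace ℝ (Fin m))
    (hRnormal : R.comp (ContinuousLinearMap.adjoint R) =
      (ContinuousLinearMap.adjoint R).comp R)
    (hRcontr : ‖R‖ < 1)
    (Bc : ℕ → EuclideanSpace ℝ (Fin m) → Matrix (Fin N) (Fin N) ℂ)
    (hBc0 : ∀ y, Bc 0 y = 1)
    (hBcS : ∀ n y, Bc (n + 1) y = B y * Bc n (R y)) :
    ∀ ε : ℝ, 0 < ε → ∃ δ : ℝ, 0 < δ ∧
      ∀ (n : ℕ) (y : EuclideanSpace ℝ (Fin m)), ‖y‖ < δ →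
        (lam ^ n)⁻¹ *
          ‖Matrix.toEuclideanCLM (𝕜 := ℂ)
            (Bc n y - (M ^ n).map Complex.ofReal)‖ < ε := by
  classical
  intro ε hε
  have hlam0 : (0:ℝ) < lam := lt_trans one_pos hlam
  have hlam1 : (1:ℝ) ≤ lam := le_of_lt hlam
  set M' : Matrix (Fin N) (Fin N) ℂ := M.map Complex.ofReal with hM'def
  -- map commutes with powers
  have hmap : ∀ k : ℕ, M' ^ k = (M ^ k).map Complex.ofReal := by
    intro k
    induction k with
    | zero =>
      simp only [pow_zero]
      ext i j
      by_cases h : i = j <;> simp [Matrix.one_apply, Matrix.map_apply, h]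
    | succ k ih =>
      rw [pow_succ, pow_succ, ih]
      ext i j
      simp [Matrix.mul_apply, Matrix.map_apply, hM'def]
  have hMnn : ∀ i j, 0 ≤ M i j := by intro i j; rw [hM]; positivity
  have hMpnn : ∀ (k : ℕ) i j, 0 ≤ (M ^ k) i j := by
    intro k
    induction k with
    | zero =>
      intro i j; rw [pow_zero]
      by_cases h : i = j <;> simp [Matrix.one_apply, h]
    | succ k ih =>
      intro i j
      rw [pow_succ, Matrix.mul_apply]
      exact Finset.sum_nonneg fun a _ => mul_nonneg (ih i a) (hMnn a j)
  have hvpow : ∀ k : ℕ, (M ^ k).mulVec v = (lam ^ k) • v := by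
    intro k
    induction k with
    | zero => simp [Matrix.one_mulVec]
    | succ k ih =>
      rw [pow_succ', ← Matrix.mulVec_mulVec, ih, Matrix.mulVec_smul, hv, smul_smul,
        pow_succ]
  have hMk : ∀ (k : ℕ) i j, (M ^ k) i j ≤ lam ^ k * (v i / v j) := by
    intro k i j
    have h := congrFun (hvpow k) i
    simp only [Matrix.mulVec, dotProduct, Pi.smul_apply, smul_eq_mul] at h
    have hterm : (M ^ k) i j * v j ≤ lam ^ k * v i := by
      rw [← h]
      exact Finset.single_le_sum (f := fun a => (M ^ k) i a * v a)
        (fun a _ => mul_nonneg (hMpnn k i a) (le_of_lt (hvpos a))) (Finset.mem_univ j)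
    rw [mul_div_assoc'] at *
    rw [le_div_iff₀ (hvpos j)]
    exact hterm
  set CM : ℝ := ∑ i, ∑ j, v i / v j with hCMdef
  have hCMnn : 0 ≤ CM :=
    Finset.sum_nonneg fun i _ => Finset.sum_nonneg fun j _ =>
      le_of_lt (div_pos (hvpos i) (hvpos j))
  have hsumMk : ∀ k : ℕ, (∑ i, ∑ j, (M ^ k) i j) ≤ lam ^ k * CM := by
    intro k
    rw [hCMdef, Finset.mul_sum]
    refine Finset.sum_le_sum fun i _ => ?_
    rw [Finset.mul_sum]
    exact Finset.sum_le_sum fun j _ => hMk k i j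
  have hnormMk : ∀ k : ℕ, ‖Matrix.toEuclideanCLM (𝕜 := ℂ) (M' ^ k)‖ ≤ lam ^ k * CM := by
    intro k
    refine le_trans (stmt7_opnorm_le _) (le_trans (le_of_eq ?_) (hsumMk k))
    refine Finset.sum_congr rfl fun i _ => Finset.sum_congr rfl fun j _ => ?_
    rw [hmap k, Matrix.map_apply, Complex.norm_real, Real.norm_of_nonneg (hMpnn k i j)]
  -- entries of B bounded by M
  have hBentry : ∀ z i j, ‖B z i j‖ ≤ M i j := by
    intro z i j
    rw [hB, hM]
    refine le_trans (norm_sum_le _ _) ?_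
    rw [show ((T i j).card : ℝ) = ∑ _x ∈ T i j, (1:ℝ) by simp]
    refine Finset.sum_le_sum fun x _ => ?_
    have hrw : (2 * (Real.pi : ℂ) * Complex.I * ((inner ℝ x z : ℝ) : ℂ)) =
        ((2 * Real.pi * (inner ℝ x z : ℝ) : ℝ) : ℂ) * Complex.I := by push_cast; ring
    rw [hrw, Complex.norm_exp_ofReal_mul_I]
  have hBcEntry : ∀ (n : ℕ) z i j, ‖Bc n z i j‖ ≤ (M ^ n) i j := by
    intro n
    induction n with
    | zero =>
      intro z i j
      rw [hBc0, pow_zero]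
      by_cases h : i = j <;> simp [Matrix.one_apply, h]
    | succ n ih =>
      intro z i j
      rw [hBcS, Matrix.mul_apply, pow_succ', Matrix.mul_apply]
      refine le_trans (norm_sum_le _ _) (Finset.sum_le_sum fun a _ => ?_)
      rw [norm_mul]
      exact mul_le_mul (hBentry z i a) (ih (R z) a j) (norm_nonneg _) (hMnn i a)
  have hnormBc : ∀ (n : ℕ) z, ‖Matrix.toEuclideanCLM (𝕜 := ℂ) (Bc n z)‖ ≤ lam ^ n * CM := by
    intro n z
    refine le_trans (stmt7_opnorm_le _) (le_trans ?_ (hsumMk n))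
    exact Finset.sum_le_sum fun i _ => Finset.sum_le_sum fun j _ => hBcEntry n z i j
  -- Lipschitz constant
  set cL : ℝ := ∑ i, ∑ j, ∑ x ∈ T i j, 2 * Real.pi * ‖x‖ with hcLdef
  have hcLnn : 0 ≤ cL := by
    refine Finset.sum_nonneg fun i _ => Finset.sum_nonneg fun j _ =>
      Finset.sum_nonneg fun x _ => ?_
    positivity
  have hdiffEntry : ∀ z i j, ‖(B z - M') i j‖ ≤ (∑ x ∈ T i j, 2 * Real.pi * ‖x‖) * ‖z‖ := by
    intro z i j
    have hMe : (M' i j) = ∑ _x ∈ T i j, (1 : ℂ) := by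
      rw [hM'def, Matrix.map_apply, hM]; push_cast; simp
    rw [Matrix.sub_apply, hB, hMe, ← Finset.sum_sub_distrib, Finset.sum_mul]
    refine le_trans (norm_sum_le _ _) (Finset.sum_le_sum fun x _ => ?_)
    have hrw : (2 * (Real.pi : ℂ) * Complex.I * ((inner ℝ x z : ℝ) : ℂ)) =
        ((2 * Real.pi * (inner ℝ x z : ℝ) : ℝ) : ℂ) * Complex.I := by push_cast; ring
    rw [hrw]
    refine le_trans (stmt7_exp_sub_one _) ?_
    rw [abs_mul, abs_mul]
    have h1 : |(2:ℝ)| * |Real.pi| = 2 * Real.pi := by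
      rw [abs_of_nonneg (by norm_num : (0:ℝ) ≤ 2), abs_of_nonneg Real.pi_pos.le]
    rw [h1]
    nlinarith [mul_le_mul_of_nonneg_left (abs_real_inner_le_norm x z)
      (by positivity : (0:ℝ) ≤ 2 * Real.pi)]
  have hnormBdiff : ∀ z, ‖Matrix.toEuclideanCLM (𝕜 := ℂ) (B z - M')‖ ≤ cL * ‖z‖ := by
    intro z
    refine le_trans (stmt7_opnorm_le _) ?_
    rw [hcLdef, Finset.sum_mul]
    refine Finset.sum_le_sum fun i _ => ?_
    rw [Finset.sum_mul]
    exact Finset.sum_le_sum fun j _ => hdiffEntry z i j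
  -- iterates of R
  have hRk : ∀ (k : ℕ) (z : EuclideanSpace ℝ (Fin m)), ‖(R ^ k) z‖ ≤ ‖R‖ ^ k * ‖z‖ := by
    intro k
    induction k with
    | zero =>
      intro z
      simp only [pow_zero, one_mul, ContinuousLinearMap.one_apply]
      exact le_rfl
    | succ k ih =>
      intro z
      rw [pow_succ, show ((R ^ k) * R) z = (R ^ k) (R z) from rfl]
      refine le_trans (ih (R z)) ?_
      rw [pow_succ, mul_assoc]
      exact mul_le_mul_of_nonneg_left (R.le_opNorm z) (pow_nonneg (norm_nonneg R) k)
  have hRapp : ∀ (k : ℕ) (z : EuclideanSpace ℝ (Fin m)), (R ^ k) (R z) = (R ^ (k+1)) z := by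
    intro k z
    rw [pow_succ]; rfl
  -- telescoping identity
  have hTel : ∀ (n : ℕ) (y : EuclideanSpace ℝ (Fin m)),
      Bc n y - M' ^ n = ∑ k ∈ Finset.range n,
        M' ^ k * (B ((R ^ k) y) - M') * Bc (n - 1 - k) ((R ^ (k+1)) y) := by
    intro n
    induction n with
    | zero => intro y; simp [hBc0]
    | succ n ih =>
      intro y
      rw [Finset.sum_range_succ']
      have key : Bc (n+1) y - M' ^ (n+1) =
          M' * (Bc n (R y) - M' ^ n) + (B y - M') * Bc n (R y) := by
        rw [hBcS, pow_succ' M' n, mul_sub, sub_mul]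
        abel
      rw [key, ih (R y), Finset.mul_sum]
      congr 1
      · refine Finset.sum_congr rfl fun k _ => ?_
        rw [hRapp k y, hRapp (k+1) y,
          show n + 1 - 1 - (k + 1) = n - 1 - k by omega, pow_succ' M' k]
        rw [mul_assoc, mul_assoc, mul_assoc]
      · simp [hRapp 0 y]
  -- geometric sum bound
  have h1t : 0 < 1 - ‖R‖ := by linarith
  have hgeo : ∀ n : ℕ, (∑ k ∈ Finset.range n, ‖R‖ ^ k) ≤ (1 - ‖R‖)⁻¹ := by
    intro n
    have hne : ‖R‖ ≠ 1 := ne_of_lt hRcontr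
    rw [geom_sum_eq hne]
    rw [div_le_iff_of_neg (by linarith : ‖R‖ - 1 < 0)]
    have hfe : (1 - ‖R‖)⁻¹ * (‖R‖ - 1) = -1 := by
      have hh : ‖R‖ - 1 = -(1 - ‖R‖) := by ring
      rw [hh, mul_neg, inv_mul_cancel₀ (ne_of_gt h1t)]
    rw [hfe]
    nlinarith [pow_nonneg (norm_nonneg R) n]
  set K : ℝ := CM * cL * CM * (1 - ‖R‖)⁻¹ with hKdef
  have hCnn : 0 ≤ CM * cL * CM := mul_nonneg (mul_nonneg hCMnn hcLnn) hCMnn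
  have hKnn : 0 ≤ K := mul_nonneg hCnn (inv_nonneg.mpr h1t.le)
  have hmain : ∀ (n : ℕ) (y : EuclideanSpace ℝ (Fin m)),
      ‖Matrix.toEuclideanCLM (𝕜 := ℂ) (Bc n y - (M ^ n).map Complex.ofReal)‖
        ≤ K * ‖y‖ * lam ^ n := by
    intro n y
    rw [← hmap n, hTel n y, map_sum]
    refine le_trans (norm_sum_le _ _) ?_
    have hterm : ∀ k ∈ Finset.range n,
        ‖Matrix.toEuclideanCLM (𝕜 := ℂ)
          (M' ^ k * (B ((R ^ k) y) - M') * Bc (n-1-k) ((R ^ (k+1)) y))‖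
          ≤ (CM * cL * CM) * ‖y‖ * lam ^ (n-1) * ‖R‖ ^ k := by
      intro k hk
      rw [_root_.map_mul, _root_.map_mul]
      refine le_trans (norm_mul_le _ _) ?_
      have hA := hnormMk k
      have hBd : ‖Matrix.toEuclideanCLM (𝕜 := ℂ) (B ((R ^ k) y) - M')‖
          ≤ cL * (‖R‖ ^ k * ‖y‖) :=
        le_trans (hnormBdiff _) (mul_le_mul_of_nonneg_left (hRk k y) hcLnn)
      have hC := hnormBc (n-1-k) ((R ^ (k+1)) y)
      have step1 : ‖Matrix.toEuclideanCLM (𝕜 := ℂ) (M' ^ k) *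
            Matrix.toEuclideanCLM (𝕜 := ℂ) (B ((R ^ k) y) - M')‖
          ≤ (lam ^ k * CM) * (cL * (‖R‖ ^ k * ‖y‖)) :=
        le_trans (norm_mul_le _ _) (mul_le_mul hA hBd (norm_nonneg _)
          (by positivity))
      refine le_trans (mul_le_mul step1 hC (norm_nonneg _)
        (by positivity)) ?_
      have hkn : k + (n - 1 - k) = n - 1 := by
        have := Finset.mem_range.mp hk; omega
      have hpw : lam ^ k * lam ^ (n-1-k) = lam ^ (n-1) := by
        rw [← pow_add, hkn]
      refine le_of_eq ?_
      rw [← hpw]; ring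
    refine le_trans (Finset.sum_le_sum hterm) ?_
    rw [← Finset.mul_sum]
    have hyl : 0 ≤ (CM * cL * CM) * ‖y‖ * lam ^ (n-1) :=
      mul_nonneg (mul_nonneg hCnn (norm_nonneg y)) (pow_nonneg hlam0.le _)
    refine le_trans (mul_le_mul_of_nonneg_left (hgeo n) hyl) ?_
    have hple : lam ^ (n-1) ≤ lam ^ n := pow_le_pow_right₀ hlam1 (Nat.sub_le n 1)
    calc (CM * cL * CM) * ‖y‖ * lam ^ (n-1) * (1 - ‖R‖)⁻¹
        ≤ (CM * cL * CM) * ‖y‖ * lam ^ n * (1 - ‖R‖)⁻¹ := by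
          refine mul_le_mul_of_nonneg_right ?_ (inv_nonneg.mpr h1t.le)
          exact mul_le_mul_of_nonneg_left hple (mul_nonneg hCnn (norm_nonneg y))
      _ = K * ‖y‖ * lam ^ n := by rw [hKdef]; ring
  refine ⟨ε / (K + 1), div_pos hε (by linarith : (0:ℝ) < K + 1), ?_⟩
  intro n y hy
  have hpow : (0:ℝ) < lam ^ n := pow_pos hlam0 n
  have hstep : (lam ^ n)⁻¹ *
      ‖Matrix.toEuclideanCLM (𝕜 := ℂ) (Bc n y - (M ^ n).map Complex.ofReal)‖
      ≤ K * ‖y‖ := by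
    have h2 : (lam ^ n)⁻¹ * (K * ‖y‖ * lam ^ n) = K * ‖y‖ := by
      field_simp
    rw [← h2]
    exact mul_le_mul_of_nonneg_left (hmain n y) (inv_nonneg.mpr hpow.le)
  refine lt_of_le_of_lt hstep ?_
  have hd : (ε / (K+1)) * K + (ε / (K+1)) = ε := by
    field_simp
  have hdpos : 0 < ε / (K+1) := by positivity
  nlinarith [mul_le_mul_of_nonneg_left (le_of_lt hy) hKnn]
end

section
/- For every ε > 0, there exist δ' = δ'(ε) > 0 and n₀ = n₀(ε) ∈ ℕ such that ‖λ^{−n} B^{(n)}(y) − P‖₂ < ε holds for all integers n ≥ n₀ and all y ∈ ℝ^m with ‖y‖₂ < δ', where P = |v⟩⟨u| is the rank-one Perron projector of M. -/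
open MeasureTheory Filter Matrix Topology Set

namespace Stmt8Aux
open Finset


lemma exp_circle_abs (t : ℝ) :
    ‖Complex.exp (2 * Real.pi * Complex.I * (t:ℂ))‖ = 1 := by
  rw [Complex.norm_exp]
  have h : (2 * (Real.pi:ℂ) * Complex.I * (t:ℂ)).re = 0 := by
    simp [Complex.mul_re, Complex.mul_im]
  rw [h, Real.exp_zero]

lemma exp_circle_sub_one (t : ℝ) :
    ‖Complex.exp (2 * Real.pi * Complex.I * (t:ℂ)) - 1‖
      ≤ 4 * Real.pi * |t| := by
  have habs : ‖2 * Real.pi * Complex.I * (t:ℂ)‖ = 2 * Real.pi * |t| := by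
    rw [norm_mul, norm_mul, norm_mul]
    simp [abs_of_pos Real.pi_pos]
  rcases le_or_gt (‖2 * Real.pi * Complex.I * (t:ℂ)‖) 1 with h | h
  · have := Complex.norm_exp_sub_one_le (x := 2 * Real.pi * Complex.I * (t:ℂ)) h
    rw [habs] at this
    calc _ ≤ 2 * (2 * Real.pi * |t|) := this
    _ = 4 * Real.pi * |t| := by ring
  · have h2 : ‖Complex.exp (2 * Real.pi * Complex.I * (t:ℂ)) - 1‖
        ≤ 2 := by
      calc _ ≤ ‖Complex.exp (2 * Real.pi * Complex.I * (t:ℂ))‖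
            + ‖(1:ℂ)‖ := by
            exact (norm_sub_le _ _)
      _ = 2 := by rw [exp_circle_abs]; simp; norm_num
    rw [habs] at h
    calc _ ≤ 2 := h2
    _ ≤ 2 * (2 * Real.pi * |t|) := by nlinarith
    _ = 4 * Real.pi * |t| := by ring

lemma coord_le_norm {N : ℕ} (x : EuclideanSpace ℂ (Fin N)) (j : Fin N) : ‖x j‖ ≤ ‖x‖ := by
  rw [EuclideanSpace.norm_eq]
  calc ‖x j‖ = Real.sqrt (‖x j‖^2) := (Real.sqrt_sq (norm_nonneg _)).symm
  _ ≤ _ := Real.sqrt_le_sqrt (Finset.single_le_sum (f := fun i => ‖x i‖^2)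
      (fun i _ => by positivity) (Finset.mem_univ j))

lemma opnorm_le_sum {N : ℕ} (A : Matrix (Fin N) (Fin N) ℂ) :
    ‖Matrix.toEuclideanCLM (𝕜 := ℂ) A‖ ≤ ∑ i, ∑ j, ‖A i j‖ := by
  apply ContinuousLinearMap.opNorm_le_bound _ (by positivity)
  intro x
  have hentry : ∀ i, (Matrix.toEuclideanCLM (𝕜 := ℂ) A x) i = ∑ j, A i j * x j :=
    fun i => rfl
  rw [EuclideanSpace.norm_eq]
  have h1 : Real.sqrt (∑ i, ‖(Matrix.toEuclideanCLM (𝕜 := ℂ) A x) i‖^2)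
      ≤ ∑ i, ‖(Matrix.toEuclideanCLM (𝕜 := ℂ) A x) i‖ := by
    refine (Real.sqrt_le_sqrt (Finset.sum_sq_le_sq_sum_of_nonneg
      (fun i _ => norm_nonneg _))).trans_eq ?_
    exact Real.sqrt_sq (Finset.sum_nonneg fun i _ => norm_nonneg _)
  refine h1.trans ?_
  rw [Finset.sum_mul]
  refine Finset.sum_le_sum fun i _ => ?_
  rw [hentry i, Finset.sum_mul]
  refine (norm_sum_le _ _).trans (Finset.sum_le_sum fun j _ => ?_)
  rw [norm_mul]
  have : ‖A i j‖ = ‖A i j‖ := rfl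
  rw [this]
  exact mul_le_mul_of_nonneg_left (coord_le_norm x j) (norm_nonneg _)

lemma osc_contract {N : ℕ} (hne : (Finset.univ : Finset (Fin N)).Nonempty)
    (A : Matrix (Fin N) (Fin N) ℝ) (δ : ℝ) (hδ : 0 ≤ δ)
    (hA : ∀ i j, δ ≤ A i j) (hAnn : ∀ i j, 0 ≤ A i j)
    (hrow : ∀ i, ∑ j, A i j = 1) (f : Fin N → ℝ) :
    univ.sup' hne (A.mulVec f) - univ.inf' hne (A.mulVec f)
      ≤ (1 - δ) * (univ.sup' hne f - univ.inf' hne f) := by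
  obtain ⟨j0, -, hj0⟩ := Finset.exists_mem_eq_inf' hne f
  obtain ⟨j1, -, hj1⟩ := Finset.exists_mem_eq_sup' hne f
  set a := univ.inf' hne f with ha
  set b := univ.sup' hne f with hb
  have hfa : ∀ j, a ≤ f j := fun j => Finset.inf'_le f (mem_univ j)
  have hfb : ∀ j, f j ≤ b := fun j => Finset.le_sup' f (mem_univ j)
  have hab : a ≤ b := hj0 ▸ hfb j0
  have hup : ∀ i, A.mulVec f i ≤ b - δ * (b - a) := by
    intro i
    have hsplit : A.mulVec f i = A i j0 * f j0 + ∑ j ∈ univ.erase j0, A i j * f j := by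
      rw [Matrix.mulVec, dotProduct, ← Finset.add_sum_erase _ _ (mem_univ j0)]
    have h2 : ∑ j ∈ univ.erase j0, A i j * f j ≤ (1 - A i j0) * b := by
      have hr : ∑ j ∈ univ.erase j0, A i j = 1 - A i j0 := by
        rw [← hrow i, ← Finset.add_sum_erase _ _ (mem_univ j0)]; ring
      rw [← hr, Finset.sum_mul]
      exact Finset.sum_le_sum fun j _ => mul_le_mul_of_nonneg_left (hfb j) (hAnn i j)
    calc A.mulVec f i ≤ A i j0 * a + (1 - A i j0) * b := by
          rw [hsplit, ← hj0]; exact add_le_add_right h2 _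
    _ = b - A i j0 * (b - a) := by ring
    _ ≤ b - δ * (b - a) := by nlinarith [hA i j0, sub_nonneg.mpr hab]
  have hlow : ∀ i, a + δ * (b - a) ≤ A.mulVec f i := by
    intro i
    have hsplit : A.mulVec f i = A i j1 * f j1 + ∑ j ∈ univ.erase j1, A i j * f j := by
      rw [Matrix.mulVec, dotProduct, ← Finset.add_sum_erase _ _ (mem_univ j1)]
    have h2 : (1 - A i j1) * a ≤ ∑ j ∈ univ.erase j1, A i j * f j := by
      have hr : ∑ j ∈ univ.erase j1, A i j = 1 - A i j1 := by
        rw [← hrow i, ← Finset.add_sum_erase _ _ (mem_univ j1)]; ring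
      rw [← hr, Finset.sum_mul]
      exact Finset.sum_le_sum fun j _ => mul_le_mul_of_nonneg_left (hfa j) (hAnn i j)
    calc a + δ * (b - a) ≤ a + A i j1 * (b - a) := by nlinarith [hA i j1, sub_nonneg.mpr hab]
    _ = A i j1 * b + (1 - A i j1) * a := by ring
    _ ≤ A.mulVec f i := by rw [hsplit, ← hj1]; exact add_le_add_right h2 _
  have h3 : univ.sup' hne (A.mulVec f) ≤ b - δ * (b - a) :=
    Finset.sup'_le hne _ fun i _ => hup i
  have h4 : a + δ * (b - a) ≤ univ.inf' hne (A.mulVec f) :=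
    Finset.le_inf' hne _ fun i _ => hlow i
  nlinarith [mul_nonneg hδ (sub_nonneg.mpr hab)]

lemma perron_conv {N : ℕ} (hne : (Finset.univ : Finset (Fin N)).Nonempty)
    (M : Matrix (Fin N) (Fin N) ℝ) (hMnn : ∀ i j, 0 ≤ M i j)
    (hprim : ∃ k : ℕ, ∀ i j, 0 < (M ^ k) i j)
    (lam : ℝ) (hlam : 1 < lam) (u v : Fin N → ℝ)
    (hu : M.vecMul u = lam • u) (hv : M.mulVec v = lam • v)
    (hupos : ∀ i, 0 < u i) (hvpos : ∀ i, 0 < v i)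
    (hvsum : ∑ i, v i = 1) (huv : ∑ i, u i * v i = 1) :
    ∀ ε : ℝ, 0 < ε → ∃ n₀ : ℕ, ∀ n, n₀ ≤ n → ∀ i j,
      |(M ^ n) i j / lam ^ n - v i * u j| ≤ ε := by
  have hlam0 : (0:ℝ) < lam := lt_trans one_pos hlam
  have hMv : ∀ i, ∑ j, M i j * v j = lam * v i := by
    intro i
    have := congrFun hv i
    simpa [Matrix.mulVec, dotProduct] using this
  have huM : ∀ j, ∑ i, u i * M i j = lam * u j := by
    intro j
    have := congrFun hu j
    simpa [Matrix.vecMul, dotProduct] using this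
  set S : Matrix (Fin N) (Fin N) ℝ := Matrix.of fun i j => M i j * v j / (lam * v i) with hS
  have hSapp : ∀ i j, S i j = M i j * v j / (lam * v i) := fun i j => rfl
  have hSnn : ∀ i j, 0 ≤ S i j := fun i j => by
    rw [hSapp]
    exact div_nonneg (mul_nonneg (hMnn i j) (hvpos j).le)
      (mul_nonneg hlam0.le (hvpos i).le)
  have hSrow : ∀ i, ∑ j, S i j = 1 := by
    intro i
    simp only [hSapp]
    rw [← Finset.sum_div, hMv i]
    exact div_self (mul_pos hlam0 (hvpos i)).ne'
  have hSn : ∀ (n : ℕ) i j, (S ^ n) i j = (M ^ n) i j * v j / (lam ^ n * v i) := by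
    intro n
    induction n with
    | zero =>
      intro i j
      by_cases h : i = j
      · subst h
        simp only [pow_zero, Matrix.one_apply_eq, one_mul]
        rw [div_self (hvpos i).ne']
      · simp [pow_zero, Matrix.one_apply_ne h]
    | succ n ih =>
      intro i j
      rw [pow_succ, pow_succ, Matrix.mul_apply, Matrix.mul_apply, Finset.sum_mul,
        Finset.sum_div]
      refine Finset.sum_congr rfl fun k _ => ?_
      rw [ih i k, hSapp k j]
      have hvk := (hvpos k).ne'
      have hvi := (hvpos i).ne'
      have hvj := (hvpos j).ne'
      field_simp
      ring
  have hSrown : ∀ (n : ℕ) i, ∑ j, (S ^ n) i j = 1 := by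
    intro n
    induction n with
    | zero => intro i; simp [Matrix.one_apply]
    | succ n ih =>
      intro i
      rw [show (S:Matrix (Fin N) (Fin N) ℝ) ^ (n+1) = S ^ n * S from pow_succ S n]
      simp only [Matrix.mul_apply]
      rw [Finset.sum_comm]
      calc ∑ k, ∑ j, (S ^ n) i k * S k j = ∑ k, (S ^ n) i k * ∑ j, S k j := by
            simp [Finset.mul_sum]
      _ = 1 := by simp [hSrow, ih i]
  have hSnnn : ∀ (n : ℕ) i j, 0 ≤ (S ^ n) i j := by
    intro n i j
    rw [hSn]
    have hMn : ∀ (n : ℕ) i j, 0 ≤ (M ^ n) i j := by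
      intro n
      induction n with
      | zero => intro i j; by_cases h : i = j <;> simp [h, Matrix.one_apply]
      | succ n ih =>
        intro i j
        rw [pow_succ, Matrix.mul_apply]
        exact Finset.sum_nonneg fun k _ => mul_nonneg (ih i k) (hMnn k j)
    exact div_nonneg (mul_nonneg (hMn n i j) (hvpos j).le)
      (mul_nonneg (pow_nonneg hlam0.le n) (hvpos i).le)
  have hSle1 : ∀ (n : ℕ) i j, (S ^ n) i j ≤ 1 := by
    intro n i j
    calc (S ^ n) i j ≤ ∑ l, (S ^ n) i l :=
          Finset.single_le_sum (fun l _ => hSnnn n i l) (Finset.mem_univ j)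
    _ = 1 := hSrown n i
  -- stationary distribution
  set pi : Fin N → ℝ := fun i => u i * v i with hpi
  have hpinn : ∀ i, 0 ≤ pi i := fun i => (mul_pos (hupos i) (hvpos i)).le
  have hstat1 : ∀ j, ∑ i, pi i * S i j = pi j := by
    intro j
    have h1 : ∀ i, pi i * S i j = (u i * M i j) * (v j / lam) := by
      intro i
      rw [hpi, hSapp]
      have h2 := (hvpos i).ne'
      have h3 := hlam0.ne'
      field_simp
    rw [Finset.sum_congr rfl fun i _ => h1 i, ← Finset.sum_mul, huM j]
    rw [hpi]
    field_simp
  have hstatn : ∀ (n : ℕ) j, ∑ i, pi i * (S ^ n) i j = pi j := by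
    intro n
    induction n with
    | zero =>
      intro j
      simp only [pow_zero]
      rw [Finset.sum_congr rfl fun i (_ : i ∈ Finset.univ) => by
        rw [Matrix.one_apply]]
      simp
    | succ n ih =>
      intro j
      rw [show (S:Matrix (Fin N) (Fin N) ℝ) ^ (n+1) = S * S ^ n from pow_succ' S n]
      simp only [Matrix.mul_apply, Finset.mul_sum]
      rw [Finset.sum_comm]
      calc ∑ k, ∑ i, pi i * (S i k * (S ^ n) k j)
          = ∑ k, (∑ i, pi i * S i k) * (S ^ n) k j := by
            congr 1; ext k; rw [Finset.sum_mul]; congr 1; ext i; ring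
      _ = ∑ k, pi k * (S ^ n) k j := by
            refine Finset.sum_congr rfl fun k _ => ?_; rw [hstat1 k]
      _ = pi j := ih j
  -- primitivity of S with exponent ≥ 1
  have hMn_nn : ∀ (n : ℕ) i j, 0 ≤ (M ^ n) i j := by
    intro n
    induction n with
    | zero => intro i j; by_cases h : i = j <;> simp [h, Matrix.one_apply]
    | succ n ih =>
      intro i j
      rw [pow_succ, Matrix.mul_apply]
      exact Finset.sum_nonneg fun k _ => mul_nonneg (ih i k) (hMnn k j)
  obtain ⟨k0, hk0⟩ := hprim
  have hcolM : ∀ j, ∃ l, 0 < M l j := by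
    intro j
    by_contra h
    push_neg at h
    have hz : ∀ l, M l j = 0 := fun l => le_antisymm (h l) (hMnn l j)
    have : ∑ i, u i * M i j = 0 := by simp [hz]
    rw [huM j] at this
    exact absurd this (mul_pos hlam0 (hupos j)).ne'
  set k := k0 + 1 with hk
  have hMk : ∀ i j, 0 < (M ^ k) i j := by
    intro i j
    obtain ⟨l, hl⟩ := hcolM j
    rw [hk, pow_succ, Matrix.mul_apply]
    refine Finset.sum_pos' (fun t _ => mul_nonneg (hMn_nn k0 i t) (hMnn t j))
      ⟨l, Finset.mem_univ l, mul_pos (hk0 i l) hl⟩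
  have hSk : ∀ i j, 0 < (S ^ k) i j := by
    intro i j
    rw [hSn]
    exact div_pos (mul_pos (hMk i j) (hvpos j))
      (mul_pos (pow_pos hlam0 k) (hvpos i))
  have hneP : (Finset.univ : Finset (Fin N × Fin N)).Nonempty := by
    obtain ⟨i0, -⟩ := id hne
    exact ⟨(i0, i0), Finset.mem_univ _⟩
  set δ : ℝ := Finset.univ.inf' hneP (fun p : Fin N × Fin N => (S ^ k) p.1 p.2) with hδdef
  have hδpos : 0 < δ := by
    rw [hδdef, Finset.lt_inf'_iff]
    exact fun p _ => hSk p.1 p.2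
  have hδle : ∀ i j, δ ≤ (S ^ k) i j := fun i j =>
    Finset.inf'_le _ (Finset.mem_univ (i, j))
  have hδ1 : δ ≤ 1 := by
    obtain ⟨i0, -⟩ := id hne
    exact (hδle i0 i0).trans (hSle1 k i0 i0)
  -- oscillation
  let osc : ℕ → Fin N → ℝ := fun n j =>
    univ.sup' hne (fun i => (S ^ n) i j) - univ.inf' hne (fun i => (S ^ n) i j)
  have hosc : ∀ n j, osc n j =
    univ.sup' hne (fun i => (S ^ n) i j) - univ.inf' hne (fun i => (S ^ n) i j) :=
    fun n j => rfl
  have hosc_nn : ∀ n j, 0 ≤ osc n j := by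
    intro n j
    obtain ⟨i0, -⟩ := id hne
    have h1 := Finset.inf'_le (fun i => (S ^ n) i j) (Finset.mem_univ i0)
    have h2 := Finset.le_sup' (fun i => (S ^ n) i j) (Finset.mem_univ i0)
    simp only [hosc]
    linarith
  have hcol : ∀ (p n : ℕ) j, (fun i => (S ^ (p + n)) i j)
      = (S ^ p).mulVec (fun l => (S ^ n) l j) := by
    intro p n j
    funext i
    rw [pow_add, Matrix.mul_apply]
    rfl
  have hosc_contr : ∀ n j, osc (k + n) j ≤ (1 - δ) * osc n j := by
    intro n j
    simp only [hosc]
    rw [hcol k n j]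
    exact osc_contract hne (S ^ k) δ hδpos.le hδle (hSnnn k) (hSrown k) _
  have hosc_mono : ∀ n j, osc (1 + n) j ≤ osc n j := by
    intro n j
    have h := by
      simpa using osc_contract hne (S ^ 1) 0 le_rfl
        (fun i j => by simpa using hSnnn 1 i j) (hSnnn 1) (hSrown 1)
        (fun l => (S ^ n) l j)
    simp only [hosc]
    rw [hcol 1 n j]
    simpa using h
  have hosc_mono' : ∀ j a b, a ≤ b → osc b j ≤ osc a j := by
    intro j a b hab
    induction b, hab using Nat.le_induction with
    | base => exact le_rfl
    | succ n hn ih =>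
      have := hosc_mono n j
      rw [Nat.add_comm 1 n] at this
      exact this.trans ih
  have hosc0 : ∀ j, osc 0 j ≤ 1 := by
    intro j
    simp only [hosc]
    have h1 : univ.sup' hne (fun i => (S ^ 0) i j) ≤ 1 := by
      refine Finset.sup'_le hne _ fun i _ => ?_
      exact hSle1 0 i j
    have h2 : (0:ℝ) ≤ univ.inf' hne (fun i => (S ^ 0) i j) := by
      refine Finset.le_inf' hne _ fun i _ => ?_
      exact hSnnn 0 i j
    linarith
  have hoscq : ∀ (q : ℕ) j, osc (q * k) j ≤ (1 - δ) ^ q := by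
    intro q
    induction q with
    | zero => intro j; simpa using hosc0 j
    | succ q ih =>
      intro j
      have h1 : (q + 1) * k = k + q * k := by ring
      rw [h1]
      calc osc (k + q * k) j ≤ (1 - δ) * osc (q * k) j := hosc_contr (q * k) j
      _ ≤ (1 - δ) * (1 - δ) ^ q :=
          mul_le_mul_of_nonneg_left (ih j) (by linarith)
      _ = (1 - δ) ^ (q + 1) := by ring
  -- distance to stationary
  have hpiosc : ∀ n i j, |(S ^ n) i j - pi j| ≤ osc n j := by
    intro n i j
    have hkey : pi j - (S ^ n) i j = ∑ i', pi i' * ((S ^ n) i' j - (S ^ n) i j) := by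
      have : ∑ i', pi i' * ((S ^ n) i' j - (S ^ n) i j)
          = (∑ i', pi i' * (S ^ n) i' j) - (∑ i', pi i') * (S ^ n) i j := by
        rw [Finset.sum_mul, ← Finset.sum_sub_distrib]
        congr 1; ext i'; ring
      rw [this, hstatn n j]
      have hpis : ∑ i', pi i' = 1 := huv
      rw [hpis, one_mul]
    have hbd : ∀ i', |(S ^ n) i' j - (S ^ n) i j| ≤ osc n j := by
      intro i'
      have h1 : (S ^ n) i' j ≤ univ.sup' hne (fun i => (S ^ n) i j) :=
        Finset.le_sup' (fun i => (S ^ n) i j) (Finset.mem_univ i')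
      have h2 : univ.inf' hne (fun i => (S ^ n) i j) ≤ (S ^ n) i j :=
        Finset.inf'_le (fun i => (S ^ n) i j) (Finset.mem_univ i)
      have h3 : (S ^ n) i j ≤ univ.sup' hne (fun i => (S ^ n) i j) :=
        Finset.le_sup' (fun i => (S ^ n) i j) (Finset.mem_univ i)
      have h4 : univ.inf' hne (fun i => (S ^ n) i j) ≤ (S ^ n) i' j :=
        Finset.inf'_le (fun i => (S ^ n) i j) (Finset.mem_univ i')
      rw [abs_le, hosc]
      constructor <;> linarith
    rw [abs_sub_comm, hkey]
    calc |∑ i', pi i' * ((S ^ n) i' j - (S ^ n) i j)|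
        ≤ ∑ i', |pi i' * ((S ^ n) i' j - (S ^ n) i j)| := Finset.abs_sum_le_sum_abs _ _
    _ ≤ ∑ i', pi i' * osc n j := by
        refine Finset.sum_le_sum fun i' _ => ?_
        rw [abs_mul, abs_of_nonneg (hpinn i')]
        exact mul_le_mul_of_nonneg_left (hbd i') (hpinn i')
    _ = osc n j := by rw [← Finset.sum_mul, huv, one_mul]
  -- conclusion
  intro ε hε
  set vmin : ℝ := univ.inf' hne v with hvmin
  have hvminpos : 0 < vmin := by
    rw [hvmin, Finset.lt_inf'_iff]
    exact fun i _ => hvpos i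
  have hvminle : ∀ j, vmin ≤ v j := fun j => Finset.inf'_le v (Finset.mem_univ j)
  have hvle1 : ∀ i, v i ≤ 1 := by
    intro i
    calc v i ≤ ∑ j, v j := Finset.single_le_sum (fun j _ => (hvpos j).le) (Finset.mem_univ i)
    _ = 1 := hvsum
  obtain ⟨q, hq⟩ := exists_pow_lt_of_lt_one (mul_pos hε hvminpos) (by linarith : 1 - δ < 1)
  refine ⟨q * k, fun n hn i j => ?_⟩
  have hrepr : (M ^ n) i j / lam ^ n - v i * u j = (v i / v j) * ((S ^ n) i j - pi j) := by
    rw [hSn n i j, hpi]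
    have h1 := (hvpos i).ne'
    have h2 := (hvpos j).ne'
    have h3 := (pow_pos hlam0 n).ne'
    field_simp
  rw [hrepr, abs_mul, abs_of_pos (div_pos (hvpos i) (hvpos j))]
  have hb1 : |(S ^ n) i j - pi j| ≤ (1 - δ) ^ q :=
    (hpiosc n i j).trans ((hosc_mono' j (q * k) n hn).trans (hoscq q j))
  have hb2 : v i / v j ≤ 1 / vmin :=
    div_le_div₀ (by norm_num) (hvle1 i) hvminpos (hvminle j)
  have hstep : v i / v j * |(S ^ n) i j - pi j| ≤ 1 / vmin * (1 - δ) ^ q :=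
    mul_le_mul hb2 hb1 (abs_nonneg _) (one_div_nonneg.mpr hvminpos.le)
  have hfin : 1 / vmin * (1 - δ) ^ q ≤ ε := by
    rw [div_mul_eq_mul_div, one_mul, div_le_iff₀ hvminpos]
    linarith
  exact hstep.trans hfin


lemma cocycle_est {N m : ℕ} (hne : (Finset.univ : Finset (Fin N)).Nonempty)
    (T : Fin N → Fin N → Finset (EuclideanSpace ℝ (Fin m)))
    (M : Matrix (Fin N) (Fin N) ℝ) (hM : ∀ i j, M i j = (T i j).card)
    (lam : ℝ) (hlam : 1 < lam) (v : Fin N → ℝ) (hvpos : ∀ i, 0 < v i)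
    (hvsum : ∑ i, v i = 1)
    (hMv : ∀ i, ∑ j, M i j * v j = lam * v i)
    (B : EuclideanSpace ℝ (Fin m) → Matrix (Fin N) (Fin N) ℂ)
    (hB : ∀ y i j, B y i j =
      ∑ x ∈ T i j, Complex.exp (2 * Real.pi * Complex.I * ((inner ℝ x y : ℝ) : ℂ)))
    (R : EuclideanSpace ℝ (Fin m) →L[ℝ] EuclideanSpace ℝ (Fin m)) (hRcontr : ‖R‖ < 1)
    (Bc : ℕ → EuclideanSpace ℝ (Fin m) → Matrix (Fin N) (Fin N) ℂ)
    (hBc0 : ∀ y, Bc 0 y = 1) (hBcS : ∀ n y, Bc (n + 1) y = B y * Bc n (R y)) :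
    ∃ D : ℝ, 0 < D ∧ ∀ n y i j,
      ‖Bc n y i j - (((M ^ n) i j : ℝ) : ℂ)‖ ≤ D * lam ^ n * ‖y‖ := by
  have hlam0 : (0:ℝ) < lam := lt_trans one_pos hlam
  have hMnn : ∀ i j, 0 ≤ M i j := fun i j => by rw [hM]; positivity
  set vmin : ℝ := univ.inf' hne v with hvmin
  have hvminpos : 0 < vmin := by
    rw [hvmin, Finset.lt_inf'_iff]
    exact fun i _ => hvpos i
  have hvminle : ∀ j, vmin ≤ v j := fun j => Finset.inf'_le v (Finset.mem_univ j)
  have hvle1 : ∀ i, v i ≤ 1 := by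
    intro i
    calc v i ≤ ∑ j, v j := Finset.single_le_sum (fun j _ => (hvpos j).le) (Finset.mem_univ i)
    _ = 1 := hvsum
  set θ : ℝ := ‖R‖ with hθ
  have hθ0 : 0 ≤ θ := norm_nonneg R
  have hθ1 : θ < 1 := hRcontr
  set X : ℝ := ∑ i, ∑ j, ∑ x ∈ T i j, ‖x‖ with hX
  have hXnn : 0 ≤ X := by
    rw [hX]; positivity
  set C : ℝ := 4 * Real.pi * X + 1 with hC
  have hCpos : 0 < C := by
    rw [hC]
    have := Real.pi_pos
    nlinarith
  -- entrywise bounds on B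
  have hBabs : ∀ y i k, ‖B y i k‖ ≤ M i k := by
    intro y i k
    rw [hB, hM]
    calc ‖∑ x ∈ T i k, Complex.exp (2 * Real.pi * Complex.I * ((inner ℝ x y : ℝ) : ℂ))‖
        ≤ ∑ x ∈ T i k, ‖Complex.exp (2 * Real.pi * Complex.I * ((inner ℝ x y : ℝ) : ℂ))‖ :=
          norm_sum_le _ _
    _ = ∑ _x ∈ T i k, (1:ℝ) := Finset.sum_congr rfl fun x _ => exp_circle_abs _
    _ = (T i k).card := by simp
  have hBdiff : ∀ (y : EuclideanSpace ℝ (Fin m)) i k,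
      ‖B y i k - ((M i k : ℝ) : ℂ)‖ ≤ C * ‖y‖ := by
    intro y i k
    have hcast : ((M i k : ℝ) : ℂ) = ∑ _x ∈ T i k, (1:ℂ) := by
      rw [hM]; simp
    rw [hB, hcast, ← Finset.sum_sub_distrib]
    calc ‖∑ x ∈ T i k,
          (Complex.exp (2 * Real.pi * Complex.I * ((inner ℝ x y : ℝ) : ℂ)) - 1)‖
        ≤ ∑ x ∈ T i k, ‖Complex.exp (2 * Real.pi * Complex.I * ((inner ℝ x y : ℝ) : ℂ)) - 1‖ :=
          norm_sum_le _ _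
    _ ≤ ∑ x ∈ T i k, 4 * Real.pi * (‖x‖ * ‖y‖) := by
        refine Finset.sum_le_sum fun x _ => ?_
        refine (exp_circle_sub_one _).trans ?_
        have h1 : |(inner ℝ x y : ℝ)| ≤ ‖x‖ * ‖y‖ := abs_real_inner_le_norm x y
        have := Real.pi_pos
        nlinarith
    _ = (4 * Real.pi * ∑ x ∈ T i k, ‖x‖) * ‖y‖ := by
        simp only [Finset.mul_sum, Finset.sum_mul]
        exact Finset.sum_congr rfl fun x _ => by ring
    _ ≤ C * ‖y‖ := by
        have hsub : ∑ x ∈ T i k, ‖x‖ ≤ X := by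
          rw [hX]
          calc ∑ x ∈ T i k, ‖x‖ ≤ ∑ j, ∑ x ∈ T i j, ‖x‖ :=
              Finset.single_le_sum (f := fun j => ∑ x ∈ T i j, ‖x‖)
                (fun j _ => by positivity) (Finset.mem_univ k)
          _ ≤ X := by
              rw [hX]
              exact Finset.single_le_sum (f := fun i => ∑ j, ∑ x ∈ T i j, ‖x‖)
                (fun i _ => by positivity) (Finset.mem_univ i)
        have h5 : 4 * Real.pi * ∑ x ∈ T i k, ‖x‖ ≤ C := by
          rw [hC]
          nlinarith [Real.pi_pos]
        exact mul_le_mul_of_nonneg_right h5 (norm_nonneg y)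
  -- entrywise bounds on powers of M
  have hMn_nn : ∀ (n : ℕ) i j, 0 ≤ (M ^ n) i j := by
    intro n
    induction n with
    | zero => intro i j; by_cases h : i = j <;> simp [h, Matrix.one_apply]
    | succ n ih =>
      intro i j
      rw [pow_succ, Matrix.mul_apply]
      exact Finset.sum_nonneg fun k _ => mul_nonneg (ih i k) (hMnn k j)
  have hMn_le : ∀ (n : ℕ) k j, (M ^ n) k j ≤ lam ^ n * v k / vmin := by
    intro n
    induction n with
    | zero =>
      intro k j
      have h1 : ((1:Matrix (Fin N) (Fin N) ℝ)) k j ≤ 1 := by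
        by_cases h : k = j <;> simp [h, Matrix.one_apply]
      have h2 : (1:ℝ) ≤ v k / vmin := (one_le_div hvminpos).mpr (hvminle k)
      simpa using h1.trans h2
    | succ n ih =>
      intro k j
      rw [pow_succ', Matrix.mul_apply]
      calc ∑ l, M k l * (M ^ n) l j ≤ ∑ l, M k l * (lam ^ n * v l / vmin) := by
            refine Finset.sum_le_sum fun l _ => ?_
            exact mul_le_mul_of_nonneg_left (ih l j) (hMnn k l)
      _ = (lam ^ n / vmin) * ∑ l, M k l * v l := by
            rw [Finset.mul_sum]
            exact Finset.sum_congr rfl fun l _ => by ring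
      _ = lam ^ (n+1) * v k / vmin := by rw [hMv k]; ring
  -- geometric sum bound
  have hgeo : ∀ n : ℕ, ∑ t ∈ Finset.range n, θ ^ t ≤ 1 / (1 - θ) := by
    intro n
    have hmul := geom_sum_mul θ n
    rw [le_div_iff₀ (by linarith : (0:ℝ) < 1 - θ)]
    have hp : 0 ≤ θ ^ n := pow_nonneg hθ0 n
    nlinarith
  have hgeonn : ∀ n : ℕ, 0 ≤ ∑ t ∈ Finset.range n, θ ^ t :=
    fun n => Finset.sum_nonneg fun t _ => pow_nonneg hθ0 t
  set D₀ : ℝ := C / vmin ^ 2 with hD₀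
  have hD₀pos : 0 < D₀ := by rw [hD₀]; positivity
  -- main induction
  have hmain : ∀ (n : ℕ) (y : EuclideanSpace ℝ (Fin m)) i j,
      ‖Bc n y i j - (((M ^ n) i j : ℝ) : ℂ)‖
        ≤ D₀ * v i * lam ^ n * ‖y‖ * (∑ t ∈ Finset.range n, θ ^ t) := by
    intro n
    induction n with
    | zero =>
      intro y i j
      rw [hBc0 y]
      simp only [pow_zero, Finset.range_zero, Finset.sum_empty, mul_zero]
      by_cases h : i = j
      · simp [h, Matrix.one_apply]
      · simp [Matrix.one_apply, h]
    | succ n ih =>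
      intro y i j
      have hsplit : Bc (n+1) y i j - (((M ^ (n+1)) i j : ℝ) : ℂ)
          = ∑ k, (B y i k * (Bc n (R y) k j - (((M ^ n) k j : ℝ) : ℂ))
              + (B y i k - ((M i k : ℝ) : ℂ)) * (((M ^ n) k j : ℝ) : ℂ)) := by
        rw [hBcS n y, Matrix.mul_apply, pow_succ' M n, Matrix.mul_apply]
        push_cast
        rw [← Finset.sum_sub_distrib]
        exact Finset.sum_congr rfl fun k _ => by ring
      have hRy : ‖R y‖ ≤ θ * ‖y‖ := R.le_opNorm y
      have hterm : ∀ k, ‖B y i k * (Bc n (R y) k j - (((M ^ n) k j : ℝ) : ℂ))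
              + (B y i k - ((M i k : ℝ) : ℂ)) * (((M ^ n) k j : ℝ) : ℂ)‖
          ≤ M i k * v k * (D₀ * lam ^ n * (θ * ‖y‖) * (∑ t ∈ Finset.range n, θ ^ t))
            + (C * ‖y‖ * lam ^ n / vmin) * v k := by
        intro k
        refine (norm_add_le _ _).trans ?_
        rw [norm_mul, norm_mul]
        have h1 : ‖Bc n (R y) k j - (((M ^ n) k j : ℝ) : ℂ)‖
            ≤ D₀ * v k * lam ^ n * (θ * ‖y‖) * (∑ t ∈ Finset.range n, θ ^ t) := by
          refine (ih (R y) k j).trans ?_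
          have hc : 0 ≤ D₀ * v k * lam ^ n :=
            mul_nonneg (mul_nonneg hD₀pos.le (hvpos k).le) (pow_nonneg hlam0.le n)
          have := mul_le_mul_of_nonneg_left hRy hc
          calc D₀ * v k * lam ^ n * ‖R y‖ * (∑ t ∈ Finset.range n, θ ^ t)
              ≤ D₀ * v k * lam ^ n * (θ * ‖y‖) * (∑ t ∈ Finset.range n, θ ^ t) :=
                mul_le_mul_of_nonneg_right this (hgeonn n)
          _ = _ := rfl
        have h2 : ‖(((M ^ n) k j : ℝ) : ℂ)‖ ≤ lam ^ n * v k / vmin := by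
          rw [Complex.norm_real, Real.norm_eq_abs, abs_of_nonneg (hMn_nn n k j)]
          exact hMn_le n k j
        have hb1 : ‖B y i k‖ * ‖Bc n (R y) k j - (((M ^ n) k j : ℝ) : ℂ)‖
            ≤ M i k * (D₀ * v k * lam ^ n * (θ * ‖y‖) * (∑ t ∈ Finset.range n, θ ^ t)) := by
          refine mul_le_mul (hBabs y i k) h1 (norm_nonneg _) (hMnn i k)
        have hb2 : ‖B y i k - ((M i k : ℝ) : ℂ)‖ * ‖(((M ^ n) k j : ℝ) : ℂ)‖
            ≤ (C * ‖y‖) * (lam ^ n * v k / vmin) := by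
          refine mul_le_mul (hBdiff y i k) h2 (norm_nonneg _) ?_
          positivity
        calc _ ≤ M i k * (D₀ * v k * lam ^ n * (θ * ‖y‖) * (∑ t ∈ Finset.range n, θ ^ t))
              + (C * ‖y‖) * (lam ^ n * v k / vmin) := add_le_add hb1 hb2
        _ = M i k * v k * (D₀ * lam ^ n * (θ * ‖y‖) * (∑ t ∈ Finset.range n, θ ^ t))
              + (C * ‖y‖ * lam ^ n / vmin) * v k := by ring
      calc ‖Bc (n+1) y i j - (((M ^ (n+1)) i j : ℝ) : ℂ)‖
          ≤ ∑ k, ‖B y i k * (Bc n (R y) k j - (((M ^ n) k j : ℝ) : ℂ))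
              + (B y i k - ((M i k : ℝ) : ℂ)) * (((M ^ n) k j : ℝ) : ℂ)‖ := by
            rw [hsplit]; exact norm_sum_le _ _
      _ ≤ ∑ k, (M i k * v k * (D₀ * lam ^ n * (θ * ‖y‖) * (∑ t ∈ Finset.range n, θ ^ t))
              + (C * ‖y‖ * lam ^ n / vmin) * v k) :=
            Finset.sum_le_sum fun k _ => hterm k
      _ = (∑ k, M i k * v k) * (D₀ * lam ^ n * (θ * ‖y‖) * (∑ t ∈ Finset.range n, θ ^ t))
              + (C * ‖y‖ * lam ^ n / vmin) * (∑ k, v k) := by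
            rw [Finset.sum_add_distrib]
            congr 1
            · exact (Finset.sum_mul _ _ _).symm
            · exact (Finset.mul_sum _ _ _).symm
      _ = (lam * v i) * (D₀ * lam ^ n * (θ * ‖y‖) * (∑ t ∈ Finset.range n, θ ^ t))
              + (C * ‖y‖ * lam ^ n / vmin) := by rw [hMv i, hvsum, mul_one]
      _ ≤ (lam * v i) * (D₀ * lam ^ n * (θ * ‖y‖) * (∑ t ∈ Finset.range n, θ ^ t))
              + D₀ * v i * lam ^ (n+1) * ‖y‖ := by
            have hCeq : C * ‖y‖ * lam ^ n / vmin = D₀ * vmin * lam ^ n * ‖y‖ := by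
              rw [hD₀]; field_simp
            rw [hCeq]
            have h1 : lam ^ n ≤ lam ^ (n+1) :=
              pow_le_pow_right₀ hlam.le (Nat.le_succ n)
            have h2 : D₀ * vmin * lam ^ n * ‖y‖ ≤ D₀ * v i * lam ^ (n+1) * ‖y‖ := by
              have ha : D₀ * vmin ≤ D₀ * v i :=
                mul_le_mul_of_nonneg_left (hvminle i) hD₀pos.le
              have hb : D₀ * vmin * lam ^ n ≤ D₀ * v i * lam ^ (n+1) :=
                mul_le_mul ha h1 (pow_nonneg hlam0.le n)
                  (mul_nonneg hD₀pos.le (hvpos i).le)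
              exact mul_le_mul_of_nonneg_right hb (norm_nonneg y)
            linarith
      _ = D₀ * v i * lam ^ (n+1) * ‖y‖ * (∑ t ∈ Finset.range (n+1), θ ^ t) := by
            rw [geom_sum_succ]
            ring
  refine ⟨D₀ / (1 - θ), div_pos hD₀pos (by linarith), fun n y i j => ?_⟩
  refine (hmain n y i j).trans ?_
  have h1 : D₀ * v i * lam ^ n * ‖y‖ * (∑ t ∈ Finset.range n, θ ^ t)
      ≤ D₀ * 1 * lam ^ n * ‖y‖ * (1 / (1 - θ)) := by
    have ha : D₀ * v i ≤ D₀ * 1 := mul_le_mul_of_nonneg_left (hvle1 i) hD₀pos.le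
    have hb : D₀ * v i * lam ^ n * ‖y‖ ≤ D₀ * 1 * lam ^ n * ‖y‖ :=
      mul_le_mul_of_nonneg_right
        (mul_le_mul_of_nonneg_right ha (pow_nonneg hlam0.le n)) (norm_nonneg y)
    refine mul_le_mul hb (hgeo n) (hgeonn n) ?_
    have : (0:ℝ) ≤ D₀ * 1 := mul_nonneg hD₀pos.le zero_le_one
    exact mul_nonneg (mul_nonneg this (pow_nonneg hlam0.le n)) (norm_nonneg y)
  calc _ ≤ D₀ * 1 * lam ^ n * ‖y‖ * (1 / (1 - θ)) := h1
  _ = D₀ / (1 - θ) * lam ^ n * ‖y‖ := by ring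

end Stmt8Aux

/-- for every `ε > 0` there are `δ' > 0` and `n₀` such that
`‖λ⁻ⁿ B⁽ⁿ⁾(y) − P‖₂ < ε` for all `n ≥ n₀` and all `‖y‖₂ < δ'`, where `P = |v⟩⟨u|`
is the rank-one Perron projector of `M`. -/
theorem stmt8
    {N m : ℕ} (hN : 1 ≤ N) (hm : 1 ≤ m)
    (T : Fin N → Fin N → Finset (EuclideanSpace ℝ (Fin m)))
    (M : Matrix (Fin N) (Fin N) ℝ)
    (hM : ∀ i j, M i j = (T i j).card)
    (hprim : ∃ k : ℕ, ∀ i j, 0 < (M ^ k) i j)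
    (lam : ℝ) (hlam : 1 < lam)
    (u v : Fin N → ℝ)
    (hu : M.vecMul u = lam • u) (hv : M.mulVec v = lam • v)
    (hupos : ∀ i, 0 < u i) (hvpos : ∀ i, 0 < v i)
    (hvsum : ∑ i, v i = 1) (huv : ∑ i, u i * v i = 1)
    (P : Matrix (Fin N) (Fin N) ℝ)
    (hPdef : ∀ i j, P i j = v i * u j)
    (B : EuclideanSpace ℝ (Fin m) → Matrix (Fin N) (Fin N) ℂ)
    (hB : ∀ y i j, B y i j =
      ∑ x ∈ T i j, Complex.exp (2 * Real.pi * Complex.I * ((inner ℝ x y : ℝ) : ℂ)))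
    (R : EuclideanSpace ℝ (Fin m) →L[ℝ] EuclideanSpace ℝ (Fin m))
    (hRnormal : R.comp (ContinuousLinearMap.adjoint R) =
      (ContinuousLinearMap.adjoint R).comp R)
    (hRcontr : ‖R‖ < 1)
    (Bc : ℕ → EuclideanSpace ℝ (Fin m) → Matrix (Fin N) (Fin N) ℂ)
    (hBc0 : ∀ y, Bc 0 y = 1)
    (hBcS : ∀ n y, Bc (n + 1) y = B y * Bc n (R y)) :
    ∀ ε : ℝ, 0 < ε → ∃ δ' : ℝ, 0 < δ' ∧ ∃ n₀ : ℕ,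
      ∀ n : ℕ, n₀ ≤ n → ∀ y : EuclideanSpace ℝ (Fin m), ‖y‖ < δ' →
        ‖Matrix.toEuclideanCLM (𝕜 := ℂ)
          ((lam ^ n)⁻¹ • Bc n y - P.map Complex.ofReal)‖ < ε := by
  intro ε hε
  have hlam0 : (0:ℝ) < lam := lt_trans one_pos hlam
  have hneF : (Finset.univ : Finset (Fin N)).Nonempty :=
    ⟨⟨0, hN⟩, Finset.mem_univ _⟩
  have hMnn : ∀ i j, 0 ≤ M i j := fun i j => by rw [hM]; positivity
  have hMv : ∀ i, ∑ j, M i j * v j = lam * v i := by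
    intro i
    have := congrFun hv i
    simpa [Matrix.mulVec, dotProduct] using this
  -- constants
  set ε₁ : ℝ := ε / (2 * ((N:ℝ)^2 + 1)) with hε₁
  have hε₁pos : 0 < ε₁ := by
    rw [hε₁]; positivity
  obtain ⟨n₀, hn₀⟩ := Stmt8Aux.perron_conv hneF M hMnn hprim lam hlam u v hu hv
    hupos hvpos hvsum huv ε₁ hε₁pos
  obtain ⟨D, hDpos, hD⟩ := Stmt8Aux.cocycle_est hneF T M hM lam hlam v hvpos hvsum hMv
    B hB R hRcontr Bc hBc0 hBcS
  refine ⟨ε₁ / D, div_pos hε₁pos hDpos, n₀, fun n hn y hy => ?_⟩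
  have hentry : ∀ i j, ‖((lam ^ n)⁻¹ • Bc n y - P.map Complex.ofReal) i j‖
      ≤ D * ‖y‖ + ε₁ := by
    intro i j
    have heq : ((lam ^ n)⁻¹ • Bc n y - P.map Complex.ofReal) i j
        = (((lam ^ n)⁻¹ : ℝ) : ℂ) * (Bc n y i j - (((M ^ n) i j : ℝ) : ℂ))
          + ((((M ^ n) i j / lam ^ n - v i * u j : ℝ)) : ℂ) := by
      have hP := hPdef i j
      simp only [Matrix.sub_apply, Matrix.smul_apply, Matrix.map_apply, hP]
      rw [Complex.real_smul]
      push_cast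
      have hlne : ((lam:ℂ) ^ n) ≠ 0 :=
        pow_ne_zero n (Complex.ofReal_ne_zero.mpr hlam0.ne')
      field_simp
      try ring
    rw [heq]
    refine (norm_add_le _ _).trans ?_
    have h1 : ‖(((lam ^ n)⁻¹ : ℝ) : ℂ) * (Bc n y i j - (((M ^ n) i j : ℝ) : ℂ))‖
        ≤ D * ‖y‖ := by
      rw [norm_mul, Complex.norm_real, Real.norm_eq_abs,
        abs_of_nonneg (inv_nonneg.mpr (pow_nonneg hlam0.le n))]
      have h2 := hD n y i j
      calc (lam ^ n)⁻¹ * ‖Bc n y i j - (((M ^ n) i j : ℝ) : ℂ)‖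
          ≤ (lam ^ n)⁻¹ * (D * lam ^ n * ‖y‖) :=
            mul_le_mul_of_nonneg_left h2 (inv_nonneg.mpr (pow_nonneg hlam0.le n))
      _ = D * ‖y‖ := by
          field_simp
    have h2 : ‖((((M ^ n) i j / lam ^ n - v i * u j : ℝ)) : ℂ)‖ ≤ ε₁ := by
      rw [Complex.norm_real, Real.norm_eq_abs]
      exact hn₀ n hn i j
    linarith
  have hop := Stmt8Aux.opnorm_le_sum ((lam ^ n)⁻¹ • Bc n y - P.map Complex.ofReal)
  have hsum : ∑ i, ∑ j, ‖((lam ^ n)⁻¹ • Bc n y - P.map Complex.ofReal) i j‖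
      ≤ (N:ℝ)^2 * (D * ‖y‖ + ε₁) := by
    calc ∑ i, ∑ j, ‖((lam ^ n)⁻¹ • Bc n y - P.map Complex.ofReal) i j‖
        ≤ ∑ _i : Fin N, ∑ _j : Fin N, (D * ‖y‖ + ε₁) :=
          Finset.sum_le_sum fun i _ => Finset.sum_le_sum fun j _ => hentry i j
    _ = (N:ℝ)^2 * (D * ‖y‖ + ε₁) := by
        simp [Finset.sum_const]
        ring
  refine (hop.trans hsum).trans_lt ?_
  have hyD : D * ‖y‖ < ε₁ := by
    have := (mul_lt_mul_of_pos_left hy hDpos)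
    calc D * ‖y‖ < D * (ε₁ / D) := this
    _ = ε₁ := by field_simp
  have hlt : (N:ℝ)^2 * (D * ‖y‖ + ε₁) < (N:ℝ)^2 * (ε₁ + ε₁) := by
    have hN2 : (0:ℝ) < (N:ℝ)^2 := by
      have h1 : (1:ℝ) ≤ (N:ℝ) := by exact_mod_cast hN
      nlinarith
    exact mul_lt_mul_of_pos_left (by linarith) hN2
  have hle : (N:ℝ)^2 * (ε₁ + ε₁) ≤ ε := by
    rw [hε₁, ← add_div, ← mul_div_assoc,
      div_le_iff₀ (by positivity : (0:ℝ) < 2 * ((N:ℝ)^2 + 1))]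
    nlinarith [sq_nonneg (N:ℝ), hε.le]
  exact hlt.trans_le hle
end

section
/- The scaled internal cocycle sequence (λ^{−n} B^{(n)}(y))_{n∈ℕ} converges compactly on ℝ^m, i.e., uniformly on every compact subset of ℝ^m. Consequently, the matrix function C(y) := lim_{n→∞} λ^{−n} B^{(n)}(y) is well defined for every y ∈ ℝ^m and is continuous. -/
open MeasureTheory Filter Matrix Topology Set Finset

namespace Stmt9Aux

variable {N : ℕ}

lemma row_sum_mul [NeZero N] {A B : Matrix (Fin N) (Fin N) ℝ}
    (hA : ∀ i, ∑ j, A i j = 1) (hB : ∀ i, ∑ j, B i j = 1) (i : Fin N) :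
    ∑ j, (A * B) i j = 1 := by
  simp only [Matrix.mul_apply]
  rw [Finset.sum_comm]
  simp_rw [← Finset.mul_sum, hB, mul_one]
  exact hA i

lemma row_sum_pow [NeZero N] {S : Matrix (Fin N) (Fin N) ℝ}
    (hS : ∀ i, ∑ j, S i j = 1) (n : ℕ) : ∀ i : Fin N, ∑ j, (S ^ n) i j = 1 := by
  induction n with
  | zero => intro i; simp [Matrix.one_apply]
  | succ n ih => intro i; rw [pow_succ]; exact row_sum_mul ih hS i

lemma pow_nonneg_entries {S : Matrix (Fin N) (Fin N) ℝ}
    (hS : ∀ i j, 0 ≤ S i j) (n : ℕ) (i j : Fin N) : 0 ≤ (S ^ n) i j := by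
  induction n generalizing i j with
  | zero => by_cases h : i = j <;> simp [Matrix.one_apply, h]
  | succ n ih =>
      rw [pow_succ, Matrix.mul_apply]
      exact Finset.sum_nonneg fun k _ => mul_nonneg (ih i k) (hS k j)

variable [NeZero N]

noncomputable def mx (x : Fin N → ℝ) : ℝ := Finset.univ.sup' ⟨0, Finset.mem_univ 0⟩ x
noncomputable def mn (x : Fin N → ℝ) : ℝ := Finset.univ.inf' ⟨0, Finset.mem_univ 0⟩ x

lemma mn_le_mx (x : Fin N → ℝ) : mn x ≤ mx x :=
  le_trans (Finset.inf'_le _ (Finset.mem_univ 0)) (Finset.le_sup' _ (Finset.mem_univ 0))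

lemma mn_le (x : Fin N → ℝ) (i : Fin N) : mn x ≤ x i := Finset.inf'_le _ (Finset.mem_univ i)
lemma le_mx (x : Fin N → ℝ) (i : Fin N) : x i ≤ mx x := Finset.le_sup' _ (Finset.mem_univ i)

lemma mulVec_le_mx {A : Matrix (Fin N) (Fin N) ℝ}
    (hnn : ∀ i j, 0 ≤ A i j) (hrow : ∀ i, ∑ j, A i j = 1) (x : Fin N → ℝ) (i : Fin N) :
    (A *ᵥ x) i ≤ mx x := by
  simp only [Matrix.mulVec, dotProduct]
  have : ∑ j, A i j * x j ≤ ∑ j, A i j * mx x := by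
    refine Finset.sum_le_sum fun j _ => ?_
    exact mul_le_mul_of_nonneg_left (le_mx x j) (hnn i j)
  simpa [← Finset.sum_mul, hrow i] using this

lemma mn_le_mulVec {A : Matrix (Fin N) (Fin N) ℝ}
    (hnn : ∀ i j, 0 ≤ A i j) (hrow : ∀ i, ∑ j, A i j = 1) (x : Fin N → ℝ) (i : Fin N) :
    mn x ≤ (A *ᵥ x) i := by
  simp only [Matrix.mulVec, dotProduct]
  have : ∑ j, A i j * mn x ≤ ∑ j, A i j * x j := by
    refine Finset.sum_le_sum fun j _ => ?_
    exact mul_le_mul_of_nonneg_left (mn_le x j) (hnn i j)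
  simpa [← Finset.sum_mul, hrow i] using this

lemma osc_contract {A : Matrix (Fin N) (Fin N) ℝ} {δ : ℝ}
    (hnn : ∀ i j, 0 ≤ A i j) (hrow : ∀ i, ∑ j, A i j = 1) (hδ : ∀ i j, δ ≤ A i j)
    (x : Fin N → ℝ) :
    mx (A *ᵥ x) - mn (A *ᵥ x) ≤ (1 - 2 * δ) * (mx x - mn x) := by
  obtain ⟨j0, -, hj0⟩ := Finset.exists_mem_eq_inf' (⟨0, Finset.mem_univ 0⟩ : (Finset.univ : Finset (Fin N)).Nonempty) x
  obtain ⟨j1, -, hj1⟩ := Finset.exists_mem_eq_sup' (⟨0, Finset.mem_univ 0⟩ : (Finset.univ : Finset (Fin N)).Nonempty) x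
  have hoscnn : 0 ≤ mx x - mn x := sub_nonneg.mpr (mn_le_mx x)
  have hup : ∀ i, (A *ᵥ x) i ≤ mx x - δ * (mx x - mn x) := by
    intro i
    simp only [Matrix.mulVec, dotProduct]
    have h1 : ∑ j, A i j * x j ≤ ∑ j, A i j * (if j = j0 then mn x else mx x) := by
      refine Finset.sum_le_sum fun j _ => ?_
      by_cases h : j = j0
      · subst h; simp [← hj0, mn]
      · simp only [if_neg h]; exact mul_le_mul_of_nonneg_left (le_mx x j) (hnn i j)
    have h2 : ∑ j, A i j * (if j = j0 then mn x else mx x)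
        = mx x + A i j0 * (mn x - mx x) := by
      have : ∀ j, A i j * (if j = j0 then mn x else mx x)
          = A i j * mx x + (if j = j0 then A i j0 * (mn x - mx x) else 0) := by
        intro j
        by_cases h : j = j0 <;> simp [h] <;> ring
      rw [Finset.sum_congr rfl fun j _ => this j, Finset.sum_add_distrib,
        Finset.sum_ite_eq' Finset.univ j0, if_pos (Finset.mem_univ j0),
        ← Finset.sum_mul, hrow i, one_mul]
    have h3 : A i j0 * (mn x - mx x) ≤ δ * (mn x - mx x) :=
      mul_le_mul_of_nonpos_right (hδ i j0) (by linarith)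
    calc ∑ j, A i j * x j ≤ mx x + A i j0 * (mn x - mx x) := by rw [← h2]; exact h1
    _ ≤ mx x + δ * (mn x - mx x) := by linarith
    _ = mx x - δ * (mx x - mn x) := by ring
  have hlo : ∀ i, mn x + δ * (mx x - mn x) ≤ (A *ᵥ x) i := by
    intro i
    simp only [Matrix.mulVec, dotProduct]
    have h1 : ∑ j, A i j * (if j = j1 then mx x else mn x) ≤ ∑ j, A i j * x j := by
      refine Finset.sum_le_sum fun j _ => ?_
      by_cases h : j = j1
      · subst h; simp [← hj1, mx]
      · simp only [if_neg h]; exact mul_le_mul_of_nonneg_left (mn_le x j) (hnn i j)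
    have h2 : ∑ j, A i j * (if j = j1 then mx x else mn x)
        = mn x + A i j1 * (mx x - mn x) := by
      have : ∀ j, A i j * (if j = j1 then mx x else mn x)
          = A i j * mn x + (if j = j1 then A i j1 * (mx x - mn x) else 0) := by
        intro j
        by_cases h : j = j1 <;> simp [h] <;> ring
      rw [Finset.sum_congr rfl fun j _ => this j, Finset.sum_add_distrib,
        Finset.sum_ite_eq' Finset.univ j1, if_pos (Finset.mem_univ j1),
        ← Finset.sum_mul, hrow i, one_mul]
    have h3 : δ * (mx x - mn x) ≤ A i j1 * (mx x - mn x) :=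
      mul_le_mul_of_nonneg_right (hδ i j1) hoscnn
    calc mn x + δ * (mx x - mn x) ≤ mn x + A i j1 * (mx x - mn x) := by linarith
    _ = ∑ j, A i j * (if j = j1 then mx x else mn x) := h2.symm
    _ ≤ ∑ j, A i j * x j := h1
  have hmx : mx (A *ᵥ x) ≤ mx x - δ * (mx x - mn x) :=
    Finset.sup'_le _ _ fun i _ => hup i
  have hmn : mn x + δ * (mx x - mn x) ≤ mn (A *ᵥ x) :=
    Finset.le_inf' _ _ fun i _ => hlo i
  linarith


theorem stoch_conv {S : Matrix (Fin N) (Fin N) ℝ}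
    (hnn : ∀ i j, 0 ≤ S i j) (hrow : ∀ i, ∑ j, S i j = 1)
    {k : ℕ} (hk : 0 < k) {δ : ℝ} (hδ : 0 < δ) (hpos : ∀ i j, δ ≤ (S ^ k) i j)
    (x : Fin N → ℝ) :
    ∃ L : ℝ, ∀ i, Tendsto (fun n => ((S ^ n) *ᵥ x) i) atTop (𝓝 L) := by
  set xs : ℕ → Fin N → ℝ := fun n => (S ^ n) *ᵥ x with hxs
  have hstep : ∀ n, xs (n + 1) = S *ᵥ xs n := by
    intro n
    simp only [hxs, pow_succ' S n, ← Matrix.mulVec_mulVec]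
  have hstepk : ∀ n, xs (n + k) = (S ^ k) *ᵥ xs n := by
    intro n
    simp only [hxs, pow_add, Matrix.mulVec_mulVec]
    rw [Commute.eq (Commute.pow_pow (Commute.refl S) n k)]
  have hmx_anti : Antitone fun n => mx (xs n) := by
    refine antitone_nat_of_succ_le fun n => ?_
    rw [hstep]
    exact Finset.sup'_le _ _ fun i _ => mulVec_le_mx hnn hrow (xs n) i
  have hmn_mono : Monotone fun n => mn (xs n) := by
    refine monotone_nat_of_le_succ fun n => ?_
    rw [hstep]
    exact Finset.le_inf' _ _ fun i _ => mn_le_mulVec hnn hrow (xs n) i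
  have hoscnn : ∀ n, 0 ≤ mx (xs n) - mn (xs n) := fun n => sub_nonneg.mpr (mn_le_mx _)
  have hbdd : ∀ n, mn (xs 0) ≤ mx (xs n) := fun n =>
    le_trans (hmn_mono (Nat.zero_le n)) (mn_le_mx _)
  have hbdd2 : ∀ n, mn (xs n) ≤ mx (xs 0) := fun n =>
    le_trans (mn_le_mx _) (hmx_anti (Nat.zero_le n))
  set L : ℝ := ⨅ n, mx (xs n) with hL
  set L' : ℝ := ⨆ n, mn (xs n) with hL'
  have hmxT : Tendsto (fun n => mx (xs n)) atTop (𝓝 L) :=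
    tendsto_atTop_ciInf hmx_anti ⟨mn (xs 0), fun y ⟨n, hn⟩ => hn ▸ hbdd n⟩
  have hmnT : Tendsto (fun n => mn (xs n)) atTop (𝓝 L') :=
    tendsto_atTop_ciSup hmn_mono ⟨mx (xs 0), fun y ⟨n, hn⟩ => hn ▸ hbdd2 n⟩
  set τ : ℝ := max (1 - 2 * δ) 0 with hτ
  have hτ0 : 0 ≤ τ := le_max_right _ _
  have hτ1 : τ < 1 := max_lt (by linarith) one_pos
  have hosck : ∀ q : ℕ, mx (xs (k * q)) - mn (xs (k * q)) ≤ τ ^ q * (mx (xs 0) - mn (xs 0)) := by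
    intro q
    induction q with
    | zero => simp
    | succ q ih =>
        have h1 : k * (q + 1) = k * q + k := by ring
        rw [h1, hstepk]
        have h2 := osc_contract (pow_nonneg_entries hnn k) (row_sum_pow hrow k) hpos (xs (k * q))
        have h3 : (1 - 2 * δ) * (mx (xs (k * q)) - mn (xs (k * q)))
            ≤ τ * (mx (xs (k * q)) - mn (xs (k * q))) :=
          mul_le_mul_of_nonneg_right (le_max_left _ _) (hoscnn _)
        calc mx ((S ^ k) *ᵥ xs (k * q)) - mn ((S ^ k) *ᵥ xs (k * q))
            ≤ τ * (mx (xs (k * q)) - mn (xs (k * q))) := le_trans h2 h3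
          _ ≤ τ * (τ ^ q * (mx (xs 0) - mn (xs 0))) := mul_le_mul_of_nonneg_left ih hτ0
          _ = τ ^ (q + 1) * (mx (xs 0) - mn (xs 0)) := by ring
  have hsub : Tendsto (fun q => k * q) atTop atTop :=
    tendsto_atTop_mono (fun q => Nat.le_mul_of_pos_left q hk) tendsto_id
  have hosc0 : Tendsto (fun q => mx (xs (k * q)) - mn (xs (k * q))) atTop (𝓝 0) := by
    refine squeeze_zero (fun q => hoscnn _) hosck ?_
    simpa using (tendsto_pow_atTop_nhds_zero_of_lt_one hτ0 hτ1).mul_const (mx (xs 0) - mn (xs 0))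
  have hoscL : Tendsto (fun n => mx (xs n) - mn (xs n)) atTop (𝓝 (L - L')) := hmxT.sub hmnT
  have hLL' : L - L' = 0 := tendsto_nhds_unique (hoscL.comp hsub) hosc0
  have hL'eq : L' = L := by linarith
  refine ⟨L, fun i => ?_⟩
  have h1 : ∀ n, mn (xs n) ≤ xs n i := fun n => mn_le _ i
  have h2 : ∀ n, xs n i ≤ mx (xs n) := fun n => le_mx _ i
  exact tendsto_of_tendsto_of_tendsto_of_le_of_le (hL'eq ▸ hmnT) hmxT h1 h2

/-- weighted row-sum bound predicate -/
def nb (v : Fin N → ℝ) (X : Matrix (Fin N) (Fin N) ℂ) (c : ℝ) : Prop :=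
  ∀ i, ∑ j, ‖X i j‖ * v j ≤ c * v i

variable {v : Fin N → ℝ}

lemma nb_mono (hv : ∀ i, 0 < v i) {X : Matrix (Fin N) (Fin N) ℂ} {c c' : ℝ}
    (h : nb v X c) (hcc : c ≤ c') : nb v X c' :=
  fun i => le_trans (h i) (mul_le_mul_of_nonneg_right hcc (hv i).le)

lemma nb_one : nb v (1 : Matrix (Fin N) (Fin N) ℂ) 1 := by
  intro i
  have h : ∀ j, ‖(1 : Matrix (Fin N) (Fin N) ℂ) i j‖ * v j
      = if j = i then v i else 0 := by
    intro j
    by_cases h : j = i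
    · simp [Matrix.one_apply, h]
    · have h' : ¬ i = j := fun hh => h hh.symm
      simp [Matrix.one_apply, h', h]
  rw [Finset.sum_congr rfl fun j _ => h j]
  simp

lemma nb_zero : nb v (0 : Matrix (Fin N) (Fin N) ℂ) 0 := by
  intro i; simp

lemma nb_mul (hv : ∀ i, 0 < v i) {X Y : Matrix (Fin N) (Fin N) ℂ} {a b : ℝ}
    (hX : nb v X a) (hY : nb v Y b) (hb : 0 ≤ b) : nb v (X * Y) (a * b) := by
  intro i
  calc ∑ j, ‖(X * Y) i j‖ * v j
      ≤ ∑ j, (∑ k, ‖X i k‖ * ‖Y k j‖) * v j := by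
        refine Finset.sum_le_sum fun j _ => mul_le_mul_of_nonneg_right ?_ (hv j).le
        calc ‖(X * Y) i j‖ = ‖∑ k, X i k * Y k j‖ := by rw [Matrix.mul_apply]
          _ ≤ ∑ k, ‖X i k * Y k j‖ := norm_sum_le _ _
          _ = ∑ k, ‖X i k‖ * ‖Y k j‖ := by simp [norm_mul]
    _ = ∑ k, ‖X i k‖ * (∑ j, ‖Y k j‖ * v j) := by
        simp_rw [Finset.sum_mul]
        rw [Finset.sum_comm]
        simp_rw [Finset.mul_sum, mul_assoc]
    _ ≤ ∑ k, ‖X i k‖ * (b * v k) := by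
        refine Finset.sum_le_sum fun k _ => mul_le_mul_of_nonneg_left (hY k) (norm_nonneg _)
    _ = b * ∑ k, ‖X i k‖ * v k := by rw [Finset.mul_sum]; exact Finset.sum_congr rfl fun k _ => by ring
    _ ≤ b * (a * v i) := mul_le_mul_of_nonneg_left (hX i) hb
    _ = a * b * v i := by ring

lemma nb_add (hv : ∀ i, 0 < v i) {X Y : Matrix (Fin N) (Fin N) ℂ} {a b : ℝ}
    (hX : nb v X a) (hY : nb v Y b) : nb v (X + Y) (a + b) := by
  intro i
  calc ∑ j, ‖(X + Y) i j‖ * v j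
      ≤ ∑ j, (‖X i j‖ * v j + ‖Y i j‖ * v j) := by
        refine Finset.sum_le_sum fun j _ => ?_
        calc ‖(X + Y) i j‖ * v j ≤ (‖X i j‖ + ‖Y i j‖) * v j :=
              mul_le_mul_of_nonneg_right (norm_add_le _ _) (hv j).le
          _ = ‖X i j‖ * v j + ‖Y i j‖ * v j := add_mul _ _ _
    _ = (∑ j, ‖X i j‖ * v j) + ∑ j, ‖Y i j‖ * v j := Finset.sum_add_distrib
    _ ≤ a * v i + b * v i := add_le_add (hX i) (hY i)
    _ = (a + b) * v i := by ring

lemma nb_smul {X : Matrix (Fin N) (Fin N) ℂ} {a : ℝ} (r : ℝ)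
    (hX : nb v X a) : nb v (r • X) (|r| * a) := by
  intro i
  calc ∑ j, ‖(r • X) i j‖ * v j = ∑ j, |r| * (‖X i j‖ * v j) := by
        refine Finset.sum_congr rfl fun j _ => ?_
        rw [Matrix.smul_apply, norm_smul, Real.norm_eq_abs]; ring
    _ = |r| * ∑ j, ‖X i j‖ * v j := by rw [Finset.mul_sum]
    _ ≤ |r| * (a * v i) := mul_le_mul_of_nonneg_left (hX i) (abs_nonneg r)
    _ = |r| * a * v i := by ring

lemma nb_entry (hv : ∀ i, 0 < v i) {X : Matrix (Fin N) (Fin N) ℂ} {c : ℝ}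
    (hX : nb v X c) {vmn vmx : ℝ} (hmn : ∀ i, vmn ≤ v i) (hmn0 : 0 < vmn)
    (hmx : ∀ i, v i ≤ vmx) (hc : 0 ≤ c) (i j : Fin N) :
    ‖X i j‖ ≤ c * vmx / vmn := by
  have h1 : ‖X i j‖ * v j ≤ c * v i := by
    refine le_trans ?_ (hX i)
    exact Finset.single_le_sum (fun k _ => mul_nonneg (norm_nonneg _) (hv k).le) (Finset.mem_univ j)
  have h2 : c * v i ≤ c * vmx := mul_le_mul_of_nonneg_left (hmx i) hc
  have h3 : ‖X i j‖ * vmn ≤ ‖X i j‖ * v j := mul_le_mul_of_nonneg_left (hmn j) (norm_nonneg _)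
  rw [div_eq_mul_inv, ← mul_le_mul_iff_of_pos_right hmn0, mul_assoc, inv_mul_cancel₀ (ne_of_gt hmn0), mul_one]
  linarith

lemma nb_of_entry (hv : ∀ i, 0 < v i) {X : Matrix (Fin N) (Fin N) ℂ} {ε : ℝ}
    (hε : 0 ≤ ε) (h : ∀ i j, ‖X i j‖ ≤ ε) {vmn : ℝ} (hmn : ∀ i, vmn ≤ v i) (hmn0 : 0 < vmn) :
    nb v X (ε * (∑ j, v j) / vmn) := by
  intro i
  have h1 : ∑ j, ‖X i j‖ * v j ≤ ε * ∑ j, v j := by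
    rw [Finset.mul_sum]
    exact Finset.sum_le_sum fun j _ => mul_le_mul_of_nonneg_right (h i j) (hv j).le
  have h2 : ε * (∑ j, v j) / vmn * vmn ≤ ε * (∑ j, v j) / vmn * v i := by
    refine mul_le_mul_of_nonneg_left (hmn i) ?_
    have : 0 ≤ ∑ j, v j := Finset.sum_nonneg fun j _ => (hv j).le
    positivity
  rw [div_mul_cancel₀ _ (ne_of_gt hmn0)] at h2
  linarith

end Stmt9Aux
set_option maxHeartbeats 1000000 in
/-- the scaled internal cocycle `(λ⁻ⁿ B⁽ⁿ⁾(y))ₙ` converges compactly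
(uniformly on every compact subset of `ℝ^m`), so the limit matrix function
`C(y) = lim λ⁻ⁿ B⁽ⁿ⁾(y)` is well defined and continuous. -/
theorem stmt9
    {N m : ℕ} (hN : 1 ≤ N) (hm : 1 ≤ m)
    (T : Fin N → Fin N → Finset (EuclideanSpace ℝ (Fin m)))
    (M : Matrix (Fin N) (Fin N) ℝ)
    (hM : ∀ i j, M i j = (T i j).card)
    (hprim : ∃ k : ℕ, ∀ i j, 0 < (M ^ k) i j)
    (lam : ℝ) (hlam : 1 < lam)
    (hlamPF : ∃ v : Fin N → ℝ, (∀ i, 0 < v i) ∧ M.mulVec v = lam • v)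
    (B : EuclideanSpace ℝ (Fin m) → Matrix (Fin N) (Fin N) ℂ)
    (hB : ∀ y i j, B y i j =
      ∑ x ∈ T i j, Complex.exp (2 * Real.pi * Complex.I * ((inner ℝ x y : ℝ) : ℂ)))
    (R : EuclideanSpace ℝ (Fin m) →L[ℝ] EuclideanSpace ℝ (Fin m))
    (hRnormal : R.comp (ContinuousLinearMap.adjoint R) =
      (ContinuousLinearMap.adjoint R).comp R)
    (hRcontr : ‖R‖ < 1)
    (Bc : ℕ → EuclideanSpace ℝ (Fin m) → Matrix (Fin N) (Fin N) ℂ)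
    (hBc0 : ∀ y, Bc 0 y = 1)
    (hBcS : ∀ n y, Bc (n + 1) y = B y * Bc n (R y)) :
    ∃ C : EuclideanSpace ℝ (Fin m) → Matrix (Fin N) (Fin N) ℂ,
      (∀ y i j, Tendsto (fun n : ℕ => (lam ^ n)⁻¹ • Bc n y i j)
        atTop (𝓝 (C y i j))) ∧
      (∀ i j, Continuous fun y => C y i j) ∧
      (∀ K : Set (EuclideanSpace ℝ (Fin m)), IsCompact K → ∀ i j,
        TendstoUniformlyOn (fun (n : ℕ) y => (lam ^ n)⁻¹ • Bc n y i j)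
          (fun y => C y i j) atTop K) := by
  classical
  obtain ⟨v, hv, hMv⟩ := hlamPF
  haveI : NeZero N := ⟨by omega⟩
  obtain ⟨k0, hk0⟩ := hprim
  have hlam0 : (0:ℝ) < lam := lt_trans one_pos hlam
  have hMnn : ∀ i j, 0 ≤ M i j := fun i j => by rw [hM]; positivity
  have hMv' : ∀ i, ∑ j, M i j * v j = lam * v i := by
    intro i
    have h := congrFun hMv i
    simpa [Matrix.mulVec, dotProduct, smul_eq_mul] using h
  -- weight bounds
  obtain ⟨jmn, -, hjmn⟩ := Finset.exists_min_image Finset.univ v ⟨0, Finset.mem_univ 0⟩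
  obtain ⟨jmx, -, hjmx⟩ := Finset.exists_max_image Finset.univ v ⟨0, Finset.mem_univ 0⟩
  set vmn := v jmn with hvmndef
  set vmx := v jmx with hvmxdef
  have hvmn : ∀ i, vmn ≤ v i := fun i => hjmn i (Finset.mem_univ i)
  have hvmx : ∀ i, v i ≤ vmx := fun i => hjmx i (Finset.mem_univ i)
  have hvmn0 : 0 < vmn := hv jmn
  have hvmx0 : 0 < vmx := hv jmx
  -- primitivity with positive exponent
  have hrowpos : ∀ i, ∃ l, 0 < M i l := by
    intro i
    by_contra hcon
    push_neg at hcon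
    have hz : ∀ l, M i l = 0 := fun l => le_antisymm (hcon l) (hMnn i l)
    have : (0:ℝ) = lam * v i := by
      rw [← hMv' i]
      exact (Finset.sum_eq_zero fun l _ => by rw [hz l, zero_mul]).symm
    nlinarith [hv i]
  set k1 := k0 + 1 with hk1def
  have hk1 : ∀ i j, 0 < (M ^ k1) i j := by
    intro i j
    obtain ⟨l, hl⟩ := hrowpos i
    have hexp : (M ^ k1) i j = ∑ t, M i t * (M ^ k0) t j := by
      rw [hk1def, pow_succ', Matrix.mul_apply]
    rw [hexp]
    have hterm : 0 < M i l * (M ^ k0) l j := mul_pos hl (hk0 l j)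
    refine lt_of_lt_of_le hterm (Finset.single_le_sum
      (f := fun t => M i t * (M ^ k0) t j) (fun t _ => ?_) (Finset.mem_univ l))
    exact mul_nonneg (hMnn i t) (Stmt9Aux.pow_nonneg_entries hMnn k0 t j)
  -- the stochastic matrix S
  set S : Matrix (Fin N) (Fin N) ℝ := Matrix.of fun i j => M i j * v j / (lam * v i) with hSdef
  have hSnn : ∀ i j, 0 ≤ S i j := by
    intro i j
    have : 0 ≤ M i j * v j / (lam * v i) :=
      div_nonneg (mul_nonneg (hMnn i j) (hv j).le) (mul_pos hlam0 (hv i)).le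
    simpa [hSdef] using this
  have hSrow : ∀ i, ∑ j, S i j = 1 := by
    intro i
    have : ∑ j, M i j * v j / (lam * v i) = 1 := by
      rw [← Finset.sum_div, hMv' i]
      exact div_self (mul_pos hlam0 (hv i)).ne'
    simpa [hSdef] using this
  have hSpow : ∀ n i j, (S ^ n) i j = (M ^ n) i j * v j / (lam ^ n * v i) := by
    intro n
    induction n with
    | zero =>
        intro i j
        by_cases h : i = j
        · subst h; simp [Matrix.one_apply, (hv i).ne', div_self, mul_comm]
        · simp [Matrix.one_apply, h]
    | succ n ih =>
        intro i j
        have hMd : (M ^ (n+1)) i j = ∑ t, (M ^ n) i t * M t j := by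
          rw [pow_succ, Matrix.mul_apply]
        have hSd : (S ^ (n+1)) i j = ∑ t, (S ^ n) i t * S t j := by
          rw [pow_succ, Matrix.mul_apply]
        rw [hSd, hMd, Finset.sum_mul, Finset.sum_div]
        refine Finset.sum_congr rfl fun t _ => ?_
        rw [ih i t]
        have h1 : S t j = M t j * v j / (lam * v t) := by simp [hSdef]
        rw [h1, div_mul_div_comm,
          div_eq_div_iff (mul_ne_zero (mul_pos (pow_pos hlam0 n) (hv i)).ne'
            (mul_pos hlam0 (hv t)).ne') (mul_pos (pow_pos hlam0 (n+1)) (hv i)).ne']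
        ring
  -- positive lower bound for S ^ k1
  have hSk1pos : ∀ i j, 0 < (S ^ k1) i j := by
    intro i j
    rw [hSpow]
    exact div_pos (mul_pos (hk1 i j) (hv j)) (mul_pos (pow_pos hlam0 k1) (hv i))
  obtain ⟨p0pair, -, hp0pair⟩ := Finset.exists_min_image (Finset.univ : Finset (Fin N × Fin N))
    (fun p => (S ^ k1) p.1 p.2) ⟨(0,0), Finset.mem_univ _⟩
  set δ := (S ^ k1) p0pair.1 p0pair.2 with hδdef
  have hδ0 : 0 < δ := hSk1pos _ _
  have hδle : ∀ i j, δ ≤ (S ^ k1) i j := fun i j => hp0pair (i, j) (Finset.mem_univ _)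
  -- convergence of S ^ n
  have hconv : ∀ j : Fin N, ∃ L : ℝ, ∀ i, Tendsto (fun n => (S ^ n) i j) atTop (𝓝 L) := by
    intro j
    obtain ⟨L, hL⟩ := Stmt9Aux.stoch_conv hSnn hSrow (Nat.succ_pos k0) hδ0 hδle (Pi.single j 1)
    refine ⟨L, fun i => ?_⟩
    have h := hL i
    simpa [Matrix.mulVec_single] using h
  choose Lr hLr using hconv
  -- complex side
  set A : (EuclideanSpace ℝ (Fin m)) → Matrix (Fin N) (Fin N) ℂ := fun y => lam⁻¹ • B y with hAdef
  have hB0 : B 0 = M.map (fun r : ℝ => (r : ℂ)) := by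
    ext i j
    rw [hB 0 i j]
    have h1 : ∀ x ∈ T i j,
        Complex.exp (2 * Real.pi * Complex.I * ((inner ℝ x (0:(EuclideanSpace ℝ (Fin m))) : ℝ) : ℂ)) = 1 := by
      intro x hx
      rw [inner_zero_right]
      norm_num
    rw [Finset.sum_congr rfl h1, Finset.sum_const, Matrix.map_apply, hM]
    simp
  set Pc : Matrix (Fin N) (Fin N) ℂ := lam⁻¹ • M.map (fun r : ℝ => (r : ℂ)) with hPcdef
  have hPcA : A 0 = Pc := by show lam⁻¹ • B 0 = Pc; rw [hB0]
  have hexp_norm : ∀ (r : ℝ), ‖Complex.exp (2 * Real.pi * Complex.I * (r : ℂ))‖ = 1 := by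
    intro r
    rw [Complex.norm_exp]
    have h1 : (2 * Real.pi * Complex.I * (r:ℂ)).re = 0 := by
      simp [Complex.mul_re, Complex.mul_im]
    rw [h1, Real.exp_zero]
  have hBnorm : ∀ y i j, ‖B y i j‖ ≤ M i j := by
    intro y i j
    rw [hB y i j, hM]
    calc ‖∑ x ∈ T i j, Complex.exp (2 * Real.pi * Complex.I * ((inner ℝ x y : ℝ):ℂ))‖
        ≤ ∑ x ∈ T i j, ‖Complex.exp (2 * Real.pi * Complex.I * ((inner ℝ x y : ℝ):ℂ))‖ :=
          norm_sum_le _ _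
      _ = ∑ x ∈ T i j, 1 := Finset.sum_congr rfl fun x _ => hexp_norm _
      _ = ((T i j).card : ℝ) := by simp
  have nbA : ∀ y, Stmt9Aux.nb v (A y) 1 := by
    intro y i
    have h1 : ∑ j, ‖A y i j‖ * v j ≤ ∑ j, lam⁻¹ * (M i j * v j) := by
      refine Finset.sum_le_sum fun j _ => ?_
      have h2 : ‖A y i j‖ = lam⁻¹ * ‖B y i j‖ := by
        have h2a : A y i j = lam⁻¹ • B y i j := rfl
        rw [h2a, norm_smul, Real.norm_eq_abs, abs_of_pos (inv_pos.mpr hlam0)]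
      rw [h2, mul_assoc]
      exact mul_le_mul_of_nonneg_left
        (mul_le_mul_of_nonneg_right (hBnorm y i j) (hv j).le) (inv_pos.mpr hlam0).le
    rw [← Finset.mul_sum, hMv' i] at h1
    calc ∑ j, ‖A y i j‖ * v j ≤ lam⁻¹ * (lam * v i) := h1
      _ = 1 * v i := by field_simp
  -- Lipschitz bound near 0
  have hexp1 : ∀ (r : ℝ), ‖Complex.exp (2 * Real.pi * Complex.I * (r:ℂ)) - 1‖
      ≤ 2 * (2 * Real.pi * |r|) := by
    intro r
    have hz : ‖(2 * Real.pi * Complex.I * (r:ℂ))‖ = 2 * Real.pi * |r| := by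
      simp only [norm_mul, Complex.norm_real, Complex.norm_I, Real.norm_eq_abs]
      rw [abs_of_nonneg Real.pi_pos.le]
      norm_num
    by_cases h : ‖(2 * Real.pi * Complex.I * (r:ℂ))‖ ≤ 1
    · have h2 := Complex.norm_exp_sub_one_le (x := 2 * Real.pi * Complex.I * (r:ℂ))
        h
      rw [hz] at h2
      exact h2
    · push_neg at h
      rw [hz] at h
      have h2 : ‖Complex.exp (2 * Real.pi * Complex.I * (r:ℂ)) - 1‖
          ≤ ‖Complex.exp (2 * Real.pi * Complex.I * (r:ℂ))‖ + ‖(1:ℂ)‖ := norm_sub_le _ _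
      rw [hexp_norm, norm_one] at h2
      linarith
  set Sx : ℝ := ∑ i, ∑ j, ∑ x ∈ T i j, ‖x‖ with hSxdef
  have hSx0 : 0 ≤ Sx := by positivity
  set cB : ℝ := 4 * Real.pi * Sx with hcBdef
  have hcB0 : 0 ≤ cB := by positivity
  have hTsum : ∀ i j, ∑ x ∈ T i j, ‖x‖ ≤ Sx := by
    intro i j
    have h1 : ∑ x ∈ T i j, ‖x‖ ≤ ∑ j', ∑ x ∈ T i j', ‖x‖ :=
      Finset.single_le_sum (f := fun j' => ∑ x ∈ T i j', ‖x‖)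
        (fun j' _ => by positivity) (Finset.mem_univ j)
    refine h1.trans ?_
    exact Finset.single_le_sum (f := fun i' => ∑ j', ∑ x ∈ T i' j', ‖x‖)
      (fun i' _ => by positivity) (Finset.mem_univ i)
  have hBdiff : ∀ (y : (EuclideanSpace ℝ (Fin m))) i j, ‖B y i j - B 0 i j‖ ≤ cB * ‖y‖ := by
    intro y i j
    rw [hB y i j, hB 0 i j, ← Finset.sum_sub_distrib]
    have hterm : ∀ x ∈ T i j,
        ‖Complex.exp (2 * Real.pi * Complex.I * ((inner ℝ x y : ℝ):ℂ))
          - Complex.exp (2 * Real.pi * Complex.I * ((inner ℝ x (0:(EuclideanSpace ℝ (Fin m))) : ℝ):ℂ))‖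
        ≤ 4 * Real.pi * (‖x‖ * ‖y‖) := by
      intro x hx
      have h0 : Complex.exp (2 * Real.pi * Complex.I * ((inner ℝ x (0:(EuclideanSpace ℝ (Fin m))) : ℝ):ℂ)) = 1 := by
        rw [inner_zero_right]; norm_num
      rw [h0]
      refine (hexp1 (inner ℝ x y : ℝ)).trans ?_
      have h2 : |(inner ℝ x y : ℝ)| ≤ ‖x‖ * ‖y‖ := abs_real_inner_le_norm x y
      nlinarith [Real.pi_pos]
    calc ‖∑ x ∈ T i j, (Complex.exp (2 * Real.pi * Complex.I * ((inner ℝ x y : ℝ):ℂ))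
          - Complex.exp (2 * Real.pi * Complex.I * ((inner ℝ x (0:(EuclideanSpace ℝ (Fin m))) : ℝ):ℂ)))‖
        ≤ ∑ x ∈ T i j, ‖Complex.exp (2 * Real.pi * Complex.I * ((inner ℝ x y : ℝ):ℂ))
          - Complex.exp (2 * Real.pi * Complex.I * ((inner ℝ x (0:(EuclideanSpace ℝ (Fin m))) : ℝ):ℂ))‖ := norm_sum_le _ _
      _ ≤ ∑ x ∈ T i j, 4 * Real.pi * (‖x‖ * ‖y‖) := Finset.sum_le_sum hterm
      _ = 4 * Real.pi * (∑ x ∈ T i j, ‖x‖) * ‖y‖ := by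
          rw [Finset.mul_sum, Finset.sum_mul]
          exact Finset.sum_congr rfl fun x _ => by ring
      _ ≤ cB * ‖y‖ := by
          refine mul_le_mul_of_nonneg_right ?_ (norm_nonneg y)
          rw [hcBdef]
          nlinarith [Real.pi_pos, hTsum i j]
  set Sv : ℝ := ∑ j, v j with hSvdef
  have hSv0 : 0 < Sv := Finset.sum_pos (fun j _ => hv j) Finset.univ_nonempty
  set c0 : ℝ := lam⁻¹ * (cB * Sv / vmn) with hc0def
  have hc00 : 0 ≤ c0 := by positivity
  have hA0 : ∀ y : (EuclideanSpace ℝ (Fin m)), Stmt9Aux.nb v (A y - A 0) (c0 * ‖y‖) := by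
    intro y
    have h1 : A y - A 0 = lam⁻¹ • (B y - B 0) := by rw [hAdef, smul_sub]
    rw [h1]
    have h2 : Stmt9Aux.nb v (B y - B 0) (cB * ‖y‖ * Sv / vmn) :=
      Stmt9Aux.nb_of_entry hv (mul_nonneg hcB0 (norm_nonneg y))
        (fun i j => by simpa [Matrix.sub_apply] using hBdiff y i j) hvmn hvmn0
    have h3 := Stmt9Aux.nb_smul lam⁻¹ h2
    refine Stmt9Aux.nb_mono hv h3 (le_of_eq ?_)
    rw [abs_of_pos (inv_pos.mpr hlam0), hc0def]
    field_simp
  -- scaled cocycle W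
  set W : ℕ → (EuclideanSpace ℝ (Fin m)) → Matrix (Fin N) (Fin N) ℂ := fun n y => (lam ^ n)⁻¹ • Bc n y with hWdef
  have hW0 : ∀ y, W 0 y = 1 := by intro y; simp [hWdef, hBc0]
  have hWS : ∀ n y, W (n+1) y = A y * W n (R y) := by
    intro n y
    have hs : ((lam:ℝ) ^ (n+1))⁻¹ = lam⁻¹ * (lam ^ n)⁻¹ := by
      rw [pow_succ, mul_inv, mul_comm]
    show (lam ^ (n+1))⁻¹ • Bc (n+1) y = (lam⁻¹ • B y) * ((lam ^ n)⁻¹ • Bc n (R y))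
    rw [hBcS n y, hs, mul_smul, smul_mul_assoc, mul_smul_comm]
  have nbW : ∀ n (y : (EuclideanSpace ℝ (Fin m))), Stmt9Aux.nb v (W n y) 1 := by
    intro n
    induction n with
    | zero => intro y; rw [hW0]; exact Stmt9Aux.nb_one
    | succ n ih =>
        intro y
        rw [hWS]
        have h1 := Stmt9Aux.nb_mul hv (nbA y) (ih (R y)) zero_le_one
        simpa using h1
  have nbPc : Stmt9Aux.nb v Pc 1 := hPcA ▸ nbA 0
  have nbPcp : ∀ p, Stmt9Aux.nb v (Pc ^ p) 1 := by
    intro p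
    induction p with
    | zero => simpa [pow_zero] using (Stmt9Aux.nb_one (v := v))
    | succ p ih =>
        rw [pow_succ']
        simpa using Stmt9Aux.nb_mul hv nbPc ih zero_le_one
  -- iterates of R
  have hRit : ∀ (k : ℕ) (y : (EuclideanSpace ℝ (Fin m))), (R ^ (k+1)) y = (R ^ k) (R y) := by
    intro k y
    rw [pow_succ]
    rfl
  have hR0 : ∀ y : (EuclideanSpace ℝ (Fin m)), (R ^ 0) y = y := fun y => rfl
  set θ : ℝ := ‖R‖ with hθdef
  have hθ0 : 0 ≤ θ := norm_nonneg R
  have hRnormb : ∀ (k : ℕ) (y : (EuclideanSpace ℝ (Fin m))), ‖(R ^ k) y‖ ≤ θ ^ k * ‖y‖ := by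
    intro k
    induction k with
    | zero => intro y; simp [hR0]
    | succ k ih =>
        intro y
        rw [hRit]
        calc ‖(R ^ k) (R y)‖ ≤ θ ^ k * ‖R y‖ := ih (R y)
          _ ≤ θ ^ k * (θ * ‖y‖) :=
              mul_le_mul_of_nonneg_left (R.le_opNorm y) (pow_nonneg hθ0 k)
          _ = θ ^ (k+1) * ‖y‖ := by ring
  have hsplit : ∀ (n p : ℕ) (y : (EuclideanSpace ℝ (Fin m))), W (n + p) y = W n y * W p ((R ^ n) y) := by
    intro n
    induction n with
    | zero =>
        intro p y
        rw [Nat.zero_add]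
        rw [show ((R ^ 0) y) = y from rfl, hW0, one_mul]
    | succ n ih =>
        intro p y
        have h1 : n + 1 + p = (n + p) + 1 := by omega
        rw [h1, hWS (n+p) y, ih p (R y), hWS n y, hRit n y, mul_assoc]
  have htail : ∀ (n : ℕ) (y : (EuclideanSpace ℝ (Fin m))), Stmt9Aux.nb v (W n y - Pc ^ n)
      (c0 * ∑ k ∈ Finset.range n, ‖(R ^ k) y‖) := by
    intro n
    induction n with
    | zero =>
        intro y
        have h1 : W 0 y - Pc ^ 0 = 0 := by rw [hW0, pow_zero, sub_self]
        rw [h1]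
        have h2 : c0 * ∑ k ∈ Finset.range 0, ‖(R ^ k) y‖ = 0 := by simp
        rw [h2]
        exact Stmt9Aux.nb_zero
    | succ n ih =>
        intro y
        have hid : W (n+1) y - Pc ^ (n+1)
            = (A y - A 0) * W n (R y) + Pc * (W n (R y) - Pc ^ n) := by
          rw [hWS, pow_succ' Pc n, hPcA]
          noncomm_ring
        rw [hid]
        have h1 := Stmt9Aux.nb_mul hv (hA0 y) (nbW n (R y)) zero_le_one
        have h2 := Stmt9Aux.nb_mul hv nbPc (ih (R y))
          (mul_nonneg hc00 (Finset.sum_nonneg fun k _ => norm_nonneg _))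
        have h3 := Stmt9Aux.nb_add hv h1 h2
        refine Stmt9Aux.nb_mono hv h3 (le_of_eq ?_)
        rw [Finset.sum_range_succ' (fun k => ‖(R ^ k) y‖) n]
        simp only [hRit, hR0]
        ring
  have hgeo : ∀ (n : ℕ) (y : (EuclideanSpace ℝ (Fin m))), ∑ k ∈ Finset.range n, ‖(R ^ k) y‖ ≤ (1 - θ)⁻¹ * ‖y‖ := by
    intro n y
    calc ∑ k ∈ Finset.range n, ‖(R ^ k) y‖ ≤ ∑ k ∈ Finset.range n, θ ^ k * ‖y‖ :=
          Finset.sum_le_sum fun k _ => hRnormb k y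
      _ = (∑ k ∈ Finset.range n, θ ^ k) * ‖y‖ := by rw [Finset.sum_mul]
      _ ≤ (1 - θ)⁻¹ * ‖y‖ := by
          refine mul_le_mul_of_nonneg_right ?_ (norm_nonneg y)
          have hsum := (summable_geometric_of_lt_one hθ0 hRcontr).sum_le_tsum (Finset.range n)
            (fun k _ => pow_nonneg hθ0 k)
          rwa [tsum_geometric_of_lt_one hθ0 hRcontr] at hsum
  set c1 : ℝ := c0 * (1 - θ)⁻¹ with hc1def
  have hc10 : 0 ≤ c1 := mul_nonneg hc00 (inv_nonneg.mpr (by linarith))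
  have htail2 : ∀ (n : ℕ) (y : (EuclideanSpace ℝ (Fin m))), Stmt9Aux.nb v (W n y - Pc ^ n) (c1 * ‖y‖) := by
    intro n y
    refine Stmt9Aux.nb_mono hv (htail n y) ?_
    calc c0 * ∑ k ∈ Finset.range n, ‖(R ^ k) y‖ ≤ c0 * ((1 - θ)⁻¹ * ‖y‖) :=
          mul_le_mul_of_nonneg_left (hgeo n y) hc00
      _ = c1 * ‖y‖ := by rw [hc1def]; ring
  -- the limit matrix for powers of Pc
  set Pi0 : Matrix (Fin N) (Fin N) ℂ := Matrix.of fun i j => ((v i * Lr j / v j : ℝ) : ℂ)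
    with hPi0def
  have hPce : ∀ p i j, (Pc ^ p) i j = (((lam ^ p)⁻¹ * (M ^ p) i j : ℝ) : ℂ) := by
    have h1 : Pc = (Complex.ofRealHom.mapMatrix (lam⁻¹ • M) : Matrix (Fin N) (Fin N) ℂ) := by
      ext a b
      rw [hPcdef]
      simp [RingHom.mapMatrix_apply, Matrix.map_apply, Matrix.smul_apply, smul_eq_mul,
        Complex.ofReal_mul, Complex.real_smul]
    intro p i j
    rw [h1, ← map_pow, RingHom.mapMatrix_apply, Matrix.map_apply]
    have h2 : ((lam⁻¹ • M) ^ p) = (lam ^ p)⁻¹ • (M ^ p) := by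
      rw [smul_pow, inv_pow]
    rw [h2, Matrix.smul_apply, smul_eq_mul]
    simp
  have hrel : ∀ p i j, (lam ^ p)⁻¹ * (M ^ p) i j = v i * (S ^ p) i j / v j := by
    intro p i j
    rw [hSpow p i j]
    field_simp [(hv i).ne', (hv j).ne', (pow_ne_zero p hlam0.ne')]
  have hPcT : ∀ i j, Tendsto (fun p => (Pc ^ p) i j) atTop (𝓝 (Pi0 i j)) := by
    intro i j
    have hreal : Tendsto (fun p => (lam ^ p)⁻¹ * (M ^ p) i j) atTop (𝓝 (v i * Lr j / v j)) := by
      have h1 : Tendsto (fun p => v i * (S ^ p) i j / v j) atTop (𝓝 (v i * Lr j / v j)) :=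
        ((hLr j i).const_mul (v i)).div_const (v j)
      exact h1.congr fun p => (hrel p i j).symm
    have h2 : Tendsto (fun p => (((lam ^ p)⁻¹ * (M ^ p) i j : ℝ) : ℂ)) atTop
        (𝓝 ((v i * Lr j / v j : ℝ) : ℂ)) :=
      (Complex.continuous_ofReal.tendsto _).comp hreal
    have h3 : Pi0 i j = ((v i * Lr j / v j : ℝ) : ℂ) := rfl
    rw [h3]
    exact h2.congr fun p => (hPce p i j).symm
  have hPcM : Pc * Pi0 = Pi0 := by
    ext i j
    have h1 : Tendsto (fun p => (Pc ^ (p+1)) i j) atTop (𝓝 (Pi0 i j)) :=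
      (hPcT i j).comp (tendsto_add_atTop_nat 1)
    have h2 : ∀ p, (Pc ^ (p+1)) i j = ∑ k, Pc i k * (Pc ^ p) k j := by
      intro p
      rw [pow_succ', Matrix.mul_apply]
    have h3 : Tendsto (fun p => ∑ k, Pc i k * (Pc ^ p) k j) atTop
        (𝓝 (∑ k, Pc i k * Pi0 k j)) :=
      tendsto_finset_sum _ fun k _ => (hPcT k j).const_mul (Pc i k)
    have h5 : Tendsto (fun p => (Pc ^ (p+1)) i j) atTop (𝓝 (∑ k, Pc i k * Pi0 k j)) :=
      h3.congr fun p => (h2 p).symm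
    rw [Matrix.mul_apply]
    exact tendsto_nhds_unique h5 h1
  have hPcpM : ∀ p, Pc ^ p * Pi0 = Pi0 := by
    intro p
    induction p with
    | zero => rw [pow_zero, one_mul]
    | succ p ih => rw [pow_succ', mul_assoc, ih, hPcM]
  have nbPi0 : Stmt9Aux.nb v Pi0 1 := by
    intro i
    have h1 : Tendsto (fun p => ∑ j, ‖(Pc ^ p) i j‖ * v j) atTop
        (𝓝 (∑ j, ‖Pi0 i j‖ * v j)) :=
      tendsto_finset_sum _ fun j _ => ((hPcT i j).norm.mul_const (v j))
    exact le_of_tendsto' h1 fun p => nbPcp p i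
  -- master difference estimates
  have hUdiff : ∀ (y : EuclideanSpace ℝ (Fin m)) (n p : ℕ),
      Stmt9Aux.nb v (W (n + p) y * Pi0 - W n y * Pi0) (c1 * (θ ^ n * ‖y‖)) := by
    intro y n p
    have hid : W (n+p) y * Pi0 - W n y * Pi0
        = W n y * ((W p ((R ^ n) y) - Pc ^ p) * Pi0) := by
      rw [hsplit n p y]
      calc W n y * W p ((R ^ n) y) * Pi0 - W n y * Pi0
          = W n y * W p ((R ^ n) y) * Pi0 - W n y * (Pc ^ p * Pi0) := by rw [hPcpM p]
        _ = W n y * ((W p ((R ^ n) y) - Pc ^ p) * Pi0) := by noncomm_ring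
    rw [hid]
    have h1 := Stmt9Aux.nb_mul hv (htail2 p ((R ^ n) y)) nbPi0 zero_le_one
    have h2 := Stmt9Aux.nb_mul hv (nbW n y) h1
      (mul_nonneg (mul_nonneg hc10 (norm_nonneg _)) zero_le_one)
    refine Stmt9Aux.nb_mono hv h2 ?_
    have h3 : c1 * ‖(R ^ n) y‖ ≤ c1 * (θ ^ n * ‖y‖) :=
      mul_le_mul_of_nonneg_left (hRnormb n y) hc10
    calc 1 * (c1 * ‖(R ^ n) y‖ * 1) = c1 * ‖(R ^ n) y‖ := by ring
      _ ≤ c1 * (θ ^ n * ‖y‖) := h3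
  have hWdiffgen : ∀ (y : EuclideanSpace ℝ (Fin m)) (n p : ℕ) (e : ℝ), 0 ≤ e →
      Stmt9Aux.nb v (Pc ^ p - Pi0) e →
      Stmt9Aux.nb v (W (n + p) y - W n y * Pi0) (c1 * (θ ^ n * ‖y‖) + e) := by
    intro y n p e he hnbe
    have hid : W (n+p) y - W n y * Pi0
        = W n y * (W p ((R ^ n) y) - Pc ^ p) + W n y * (Pc ^ p - Pi0) := by
      rw [hsplit n p y]
      noncomm_ring
    rw [hid]
    have h1 := Stmt9Aux.nb_mul hv (nbW n y) (htail2 p ((R ^ n) y))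
      (mul_nonneg hc10 (norm_nonneg _))
    have h2 := Stmt9Aux.nb_mul hv (nbW n y) hnbe he
    have h3 := Stmt9Aux.nb_add hv h1 h2
    refine Stmt9Aux.nb_mono hv h3 ?_
    have h4 : c1 * ‖(R ^ n) y‖ ≤ c1 * (θ ^ n * ‖y‖) :=
      mul_le_mul_of_nonneg_left (hRnormb n y) hc10
    simp only [one_mul]
    linarith
  -- Cauchy sequences and the limit function
  have hUentry : ∀ (y : EuclideanSpace ℝ (Fin m)) (n p : ℕ) i j,
      ‖(W (n + p) y * Pi0) i j - (W n y * Pi0) i j‖ ≤ c1 * (θ ^ n * ‖y‖) * vmx / vmn := by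
    intro y n p i j
    have h1 := Stmt9Aux.nb_entry hv (hUdiff y n p) hvmn hvmn0 hvmx
      (mul_nonneg hc10 (mul_nonneg (pow_nonneg hθ0 n) (norm_nonneg y))) i j
    simpa [Matrix.sub_apply] using h1
  have hUcau : ∀ (y : EuclideanSpace ℝ (Fin m)) i j,
      CauchySeq (fun n => (W n y * Pi0) i j) := by
    intro y i j
    refine cauchySeq_of_le_tendsto_0 (fun Q => 2 * (c1 * (θ ^ Q * ‖y‖) * vmx / vmn)) ?_ ?_
    · intro a b Q haQ hbQ
      obtain ⟨p, rfl⟩ := Nat.exists_eq_add_of_le haQ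
      obtain ⟨q, rfl⟩ := Nat.exists_eq_add_of_le hbQ
      have h1 := hUentry y Q p i j
      have h2 := hUentry y Q q i j
      calc dist ((W (Q + p) y * Pi0) i j) ((W (Q + q) y * Pi0) i j)
          ≤ dist ((W (Q + p) y * Pi0) i j) ((W Q y * Pi0) i j)
            + dist ((W Q y * Pi0) i j) ((W (Q + q) y * Pi0) i j) := dist_triangle _ _ _
        _ ≤ c1 * (θ ^ Q * ‖y‖) * vmx / vmn + c1 * (θ ^ Q * ‖y‖) * vmx / vmn := by
            rw [dist_eq_norm, dist_eq_norm]
            exact add_le_add h1 (by rw [norm_sub_rev]; exact h2)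
        _ = 2 * (c1 * (θ ^ Q * ‖y‖) * vmx / vmn) := by ring
    · have h1 := tendsto_pow_atTop_nhds_zero_of_lt_one hθ0 hRcontr
      have h2 : (fun Q : ℕ => 2 * (c1 * (θ ^ Q * ‖y‖) * vmx / vmn))
          = fun Q => (2 * c1 * ‖y‖ * vmx / vmn) * θ ^ Q := by
        funext Q
        ring
      rw [h2]
      simpa using h1.const_mul (2 * c1 * ‖y‖ * vmx / vmn)
  have hex : ∀ (y : EuclideanSpace ℝ (Fin m)) i j, ∃ cl : ℂ,
      Tendsto (fun n => (W n y * Pi0) i j) atTop (𝓝 cl) :=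
    fun y i j => cauchySeq_tendsto_of_complete (hUcau y i j)
  choose Cf hCf using hex
  have hCb : ∀ (y : EuclideanSpace ℝ (Fin m)) (n : ℕ) i j,
      ‖Cf y i j - (W n y * Pi0) i j‖ ≤ c1 * (θ ^ n * ‖y‖) * vmx / vmn := by
    intro y n i j
    have h1 : Tendsto (fun p : ℕ => ‖(W (n + p) y * Pi0) i j - (W n y * Pi0) i j‖) atTop
        (𝓝 ‖Cf y i j - (W n y * Pi0) i j‖) := by
      have h2 : Tendsto (fun p : ℕ => (W (n + p) y * Pi0) i j) atTop (𝓝 (Cf y i j)) := by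
        have h3 := (hCf y i j).comp (tendsto_add_atTop_nat n)
        refine h3.congr fun p => ?_
        simp [Nat.add_comm]
      exact (h2.sub_const _).norm
    exact le_of_tendsto h1 (Filter.Eventually.of_forall fun p => hUentry y n p i j)
  -- the main uniform estimate
  have hMain : ∀ (r : ℝ), 0 ≤ r → ∀ ε > (0:ℝ), ∀ i j, ∀ᶠ n in atTop,
      ∀ y : EuclideanSpace ℝ (Fin m), ‖y‖ ≤ r → dist (Cf y i j) ((W n y) i j) < ε := by
    intro r hr ε hε i j
    have hDaux : 0 ≤ Sv / vmn * vmx / vmn :=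
      div_nonneg (mul_nonneg (div_nonneg hSv0.le hvmn0.le) hvmx0.le) hvmn0.le
    set D : ℝ := Sv / vmn * vmx / vmn + 1 with hDdef
    have hD0 : 0 < D := by rw [hDdef]; linarith
    set η : ℝ := ε / (4 * D) with hηdef
    have hη0 : 0 < η := by positivity
    have hgt : Tendsto (fun n : ℕ => c1 * (θ ^ n * r) * vmx / vmn) atTop (𝓝 0) := by
      have h1 := tendsto_pow_atTop_nhds_zero_of_lt_one hθ0 hRcontr
      have h2 : (fun n : ℕ => c1 * (θ ^ n * r) * vmx / vmn)
          = fun n => (c1 * r * vmx / vmn) * θ ^ n := by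
        funext n
        ring
      rw [h2]
      simpa using h1.const_mul (c1 * r * vmx / vmn)
    obtain ⟨n0, hn0⟩ := (hgt.eventually (gt_mem_nhds (show (0:ℝ) < ε/4 by positivity))).exists
    have hent : ∀ᶠ p in atTop, ∀ ij : Fin N × Fin N, ‖(Pc ^ p - Pi0) ij.1 ij.2‖ ≤ η := by
      rw [Filter.eventually_all]
      intro ij
      have h1 : Tendsto (fun p => ‖(Pc ^ p - Pi0) ij.1 ij.2‖) atTop (𝓝 0) := by
        have h2 := ((hPcT ij.1 ij.2).sub_const (Pi0 ij.1 ij.2)).norm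
        rw [sub_self, norm_zero] at h2
        refine h2.congr fun p => ?_
        rw [Matrix.sub_apply]
      exact (h1.eventually (gt_mem_nhds hη0)).mono fun p hp => le_of_lt hp
    obtain ⟨P0, hP0⟩ := eventually_atTop.mp hent
    rw [eventually_atTop]
    refine ⟨n0 + P0, fun n hn => ?_⟩
    intro y hy
    obtain ⟨p, rfl⟩ : ∃ p, n = n0 + p :=
      Nat.exists_eq_add_of_le (le_trans (Nat.le_add_right n0 P0) hn)
    have hpP0 : P0 ≤ p := by omega
    have hnbe : Stmt9Aux.nb v (Pc ^ p - Pi0) (η * Sv / vmn) := by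
      have h1 := Stmt9Aux.nb_of_entry hv hη0.le
        (fun a b => hP0 p hpP0 (a, b)) hvmn hvmn0
      exact h1
    have hη1 : 0 ≤ η * Sv / vmn := div_nonneg (mul_nonneg hη0.le hSv0.le) hvmn0.le
    have h1 := hWdiffgen y n0 p _ hη1 hnbe
    have h2 := Stmt9Aux.nb_entry hv h1 hvmn hvmn0 hvmx
      (add_nonneg (mul_nonneg hc10 (mul_nonneg (pow_nonneg hθ0 n0) (norm_nonneg y))) hη1) i j
    rw [Matrix.sub_apply] at h2
    have h3 := hCb y n0 i j
    have h4 : dist (Cf y i j) ((W (n0 + p) y) i j)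
        ≤ ‖Cf y i j - (W n0 y * Pi0) i j‖ + ‖(W n0 y * Pi0) i j - (W (n0 + p) y) i j‖ := by
      rw [dist_eq_norm]
      exact norm_sub_le_norm_sub_add_norm_sub _ _ _
    have h5 : ‖(W n0 y * Pi0) i j - (W (n0 + p) y) i j‖
        = ‖(W (n0 + p) y) i j - (W n0 y * Pi0) i j‖ := norm_sub_rev _ _
    -- numeric bookkeeping
    have hmono : c1 * (θ ^ n0 * ‖y‖) * vmx / vmn ≤ c1 * (θ ^ n0 * r) * vmx / vmn := by
      have hb1 : c1 * (θ ^ n0 * ‖y‖) ≤ c1 * (θ ^ n0 * r) :=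
        mul_le_mul_of_nonneg_left
          (mul_le_mul_of_nonneg_left hy (pow_nonneg hθ0 n0)) hc10
      have hb2 : c1 * (θ ^ n0 * ‖y‖) * vmx ≤ c1 * (θ ^ n0 * r) * vmx :=
        mul_le_mul_of_nonneg_right hb1 hvmx0.le
      exact by gcongr
    have hexp2 : (c1 * (θ ^ n0 * ‖y‖) + η * Sv / vmn) * vmx / vmn
        = c1 * (θ ^ n0 * ‖y‖) * vmx / vmn + η * (Sv / vmn * vmx / vmn) := by
      field_simp
    have hηD : η * D = ε / 4 := by
      rw [hηdef]
      field_simp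
    have hterm : η * (Sv / vmn * vmx / vmn) = η * D - η := by rw [hDdef]; ring
    rw [h5] at h4
    rw [hexp2] at h2
    have := hη0
    linarith
  -- final packaging
  have hBccont : ∀ (n : ℕ) (i j : Fin N),
      Continuous fun y : EuclideanSpace ℝ (Fin m) => Bc n y i j := by
    intro n
    induction n with
    | zero =>
        intro i j
        have h1 : (fun y : EuclideanSpace ℝ (Fin m) => Bc 0 y i j)
            = fun _ => (1 : Matrix (Fin N) (Fin N) ℂ) i j := by
          funext y; rw [hBc0]
        rw [h1]
        exact continuous_const
    | succ n ih =>
        intro i j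
        have h1 : (fun y : EuclideanSpace ℝ (Fin m) => Bc (n+1) y i j)
            = fun y => ∑ k, B y i k * Bc n (R y) k j := by
          funext y; rw [hBcS, Matrix.mul_apply]
        rw [h1]
        refine continuous_finset_sum _ fun k _ => Continuous.mul ?_ ((ih k j).comp R.continuous)
        have h2 : (fun y : EuclideanSpace ℝ (Fin m) => B y i k)
            = fun y => ∑ x ∈ T i k, Complex.exp (2 * Real.pi * Complex.I * ((inner ℝ x y : ℝ) : ℂ)) := by
          funext y; rw [hB]
        rw [h2]
        refine continuous_finset_sum _ fun x _ => Complex.continuous_exp.comp ?_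
        exact continuous_const.mul
          (Complex.continuous_ofReal.comp (continuous_const.inner continuous_id))
  have hWcont : ∀ n i j, Continuous fun y : EuclideanSpace ℝ (Fin m) => W n y i j := by
    intro n i j
    have h1 : (fun y : EuclideanSpace ℝ (Fin m) => W n y i j)
        = fun y => (lam ^ n)⁻¹ • Bc n y i j := rfl
    rw [h1]
    exact (hBccont n i j).const_smul ((lam ^ n)⁻¹ : ℝ)
  have hUnifK : ∀ K : Set (EuclideanSpace ℝ (Fin m)), IsCompact K → ∀ i j,
      TendstoUniformlyOn (fun n y => W n y i j) (fun y => Cf y i j) atTop K := by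
    intro K hK i j
    rw [Metric.tendstoUniformlyOn_iff]
    intro ε hε
    obtain ⟨r, hr0, hr⟩ : ∃ r : ℝ, 0 ≤ r ∧ ∀ y ∈ K, ‖y‖ ≤ r := by
      obtain ⟨r, hr⟩ := hK.isBounded.subset_closedBall 0
      refine ⟨max r 0, le_max_right _ _, fun y hy => ?_⟩
      have h1 := hr hy
      rw [Metric.mem_closedBall, dist_zero_right] at h1
      exact h1.trans (le_max_left _ _)
    exact (hMain r hr0 ε hε i j).mono fun n hn y hy => hn y (hr y hy)
  refine ⟨fun y => Matrix.of fun i j => Cf y i j, ?_, ?_, ?_⟩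
  · intro y i j
    rw [Metric.tendsto_atTop]
    intro ε hε
    obtain ⟨n1, hn1⟩ := eventually_atTop.mp (hMain ‖y‖ (norm_nonneg y) ε hε i j)
    refine ⟨n1, fun n hn => ?_⟩
    rw [dist_comm]
    exact hn1 n hn y le_rfl
  · intro i j
    have hloc : TendstoLocallyUniformly (fun n y => W n y i j) (fun y => Cf y i j) atTop :=
      tendstoLocallyUniformly_iff_forall_isCompact.mpr fun K hK => hUnifK K hK i j
    exact hloc.continuous (Filter.Eventually.of_forall fun n => hWcont n i j).frequently
  · intro K hK i j
    exact hUnifK K hK i j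
end

section
/- The limit matrix function C(y) = lim_{n→∞} λ^{−n} B^{(n)}(y) satisfies C(0) = P, and for every y ∈ ℝ^m one has C(y)·M = λ·C(y) and C(y) = C(y)·P. Consequently, every row of C(y) is a scalar multiple of the left Perron eigenvector ⟨u|, so that C(y) = |c(y)⟩⟨u| for a continuous vector-valued function c : ℝ^m → ℂ^N with c(0) = |v⟩; in particular, C(y) has rank at most 1 for every y. -/
open MeasureTheory Filter Matrix Topology Set

set_option maxHeartbeats 2000000
set_option synthInstance.maxHeartbeats 1000000

lemma pf_real {N : ℕ} {M : Matrix (Fin N) (Fin N) ℝ}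
    (k : ℕ) (hk : ∀ i j, 0 < (M ^ k) i j)
    {lam : ℝ} {v : Fin N → ℝ} (hvpos : ∀ i, 0 < v i)
    (hv : M.mulVec v = lam • v)
    {w : Fin N → ℝ} (hw : M.mulVec w = lam • w) :
    ∃ t : ℝ, ∀ i, w i = t * v i := by
  rcases isEmpty_or_nonempty (Fin N) with hE | hE
  · exact ⟨0, fun i => (hE.false i).elim⟩
  set t := Finset.univ.inf' Finset.univ_nonempty (fun i => w i / v i) with ht
  obtain ⟨i0, -, hi0⟩ := Finset.exists_mem_eq_inf' Finset.univ_nonempty (fun i => w i / v i)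
  have hti0 : t = w i0 / v i0 := ht.trans hi0
  refine ⟨t, ?_⟩
  set z : Fin N → ℝ := fun i => w i - t * v i with hz
  have hznn : ∀ i, 0 ≤ z i := by
    intro i
    have h1 : t ≤ w i / v i := Finset.inf'_le _ (Finset.mem_univ i)
    have h2 : t * v i ≤ w i := by rw [le_div_iff₀ (hvpos i)] at h1; exact h1
    simp only [hz]; linarith
  have hzi0 : z i0 = 0 := by
    simp only [hz, hti0, div_mul_cancel₀ _ (ne_of_gt (hvpos i0))]; ring
  have hveq : (z : Fin N → ℝ) = w - t • v := by funext i; simp [hz]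
  have hMz : M.mulVec z = lam • z := by
    rw [hveq, Matrix.mulVec_sub, Matrix.mulVec_smul, hw, hv, smul_comm, ← smul_sub]
  have hMkz : ∀ n, (M ^ n).mulVec z = (lam ^ n) • z := by
    intro n
    induction n with
    | zero => simp
    | succ n ih =>
        rw [pow_succ', ← Matrix.mulVec_mulVec, ih, Matrix.mulVec_smul, hMz,
          smul_smul, ← pow_succ]
  by_cases hz0 : z = 0
  · intro i
    have : w i - t * v i = 0 := by
      have := congrFun hz0 i; simpa [hz] using this
    linarith
  · exfalso
    obtain ⟨j, hj⟩ := Function.ne_iff.mp hz0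
    have hjpos : 0 < z j := lt_of_le_of_ne (hznn j) (Ne.symm hj)
    have hpos : 0 < ((M ^ k).mulVec z) i0 := by
      rw [Matrix.mulVec, dotProduct]
      refine Finset.sum_pos' (fun l _ => mul_nonneg (le_of_lt (hk i0 l)) (hznn l)) ?_
      exact ⟨j, Finset.mem_univ j, mul_pos (hk i0 j) hjpos⟩
    rw [hMkz k] at hpos
    simp only [Pi.smul_apply, smul_eq_mul, hzi0, mul_zero] at hpos
    exact lt_irrefl 0 hpos

lemma pf_complex {N : ℕ} {M : Matrix (Fin N) (Fin N) ℝ}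
    (k : ℕ) (hk : ∀ i j, 0 < (M ^ k) i j)
    {lam : ℝ} {v : Fin N → ℝ} (hvpos : ∀ i, 0 < v i)
    (hv : M.mulVec v = lam • v)
    {w : Fin N → ℂ} (hw : (M.map Complex.ofReal).mulVec w = (lam : ℂ) • w) :
    ∃ t : ℂ, ∀ i, w i = t * (v i : ℂ) := by
  have hre : M.mulVec (fun i => (w i).re) = lam • (fun i => (w i).re) := by
    funext j
    have h := congrFun hw j
    simp only [Matrix.mulVec, dotProduct, Matrix.map_apply, Pi.smul_apply,
      smul_eq_mul] at h ⊢
    have := congrArg Complex.re h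
    simpa [Complex.re_sum, Complex.re_ofReal_mul] using this
  have him : M.mulVec (fun i => (w i).im) = lam • (fun i => (w i).im) := by
    funext j
    have h := congrFun hw j
    simp only [Matrix.mulVec, dotProduct, Matrix.map_apply, Pi.smul_apply,
      smul_eq_mul] at h ⊢
    have := congrArg Complex.im h
    simpa [Complex.im_sum, Complex.im_ofReal_mul] using this
  obtain ⟨a, ha⟩ := pf_real k hk hvpos hv hre
  obtain ⟨b, hb⟩ := pf_real k hk hvpos hv him
  refine ⟨Complex.mk a b, fun i => ?_⟩
  apply Complex.ext
  · simpa [Complex.mul_re] using ha i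
  · simpa [Complex.mul_im] using hb i

/-- the limit `C(y) = lim λ⁻ⁿ B⁽ⁿ⁾(y)` satisfies `C(0) = P`,
`C(y)·M = λ·C(y)` and `C(y) = C(y)·P`; hence `C(y) = |c(y)⟩⟨u|` for a continuous
vector function `c` with `c(0) = v`, and `C(y)` has rank at most one. -/
theorem stmt10
    {N m : ℕ} (hN : 1 ≤ N) (hm : 1 ≤ m)
    (T : Fin N → Fin N → Finset (EuclideanSpace ℝ (Fin m)))
    (M : Matrix (Fin N) (Fin N) ℝ)
    (hM : ∀ i j, M i j = (T i j).card)
    (hprim : ∃ k : ℕ, ∀ i j, 0 < (M ^ k) i j)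
    (lam : ℝ) (hlam : 1 < lam)
    (u v : Fin N → ℝ)
    (hu : M.vecMul u = lam • u) (hv : M.mulVec v = lam • v)
    (hupos : ∀ i, 0 < u i) (hvpos : ∀ i, 0 < v i)
    (hvsum : ∑ i, v i = 1) (huv : ∑ i, u i * v i = 1)
    (P : Matrix (Fin N) (Fin N) ℝ)
    (hPdef : ∀ i j, P i j = v i * u j)
    (B : EuclideanSpace ℝ (Fin m) → Matrix (Fin N) (Fin N) ℂ)
    (hB : ∀ y i j, B y i j =
      ∑ x ∈ T i j, Complex.exp (2 * Real.pi * Complex.I * ((inner ℝ x y : ℝ) : ℂ)))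
    (R : EuclideanSpace ℝ (Fin m) →L[ℝ] EuclideanSpace ℝ (Fin m))
    (hRnormal : R.comp (ContinuousLinearMap.adjoint R) =
      (ContinuousLinearMap.adjoint R).comp R)
    (hRcontr : ‖R‖ < 1)
    (Bc : ℕ → EuclideanSpace ℝ (Fin m) → Matrix (Fin N) (Fin N) ℂ)
    (hBc0 : ∀ y, Bc 0 y = 1)
    (hBcS : ∀ n y, Bc (n + 1) y = B y * Bc n (R y))
    (C : EuclideanSpace ℝ (Fin m) → Matrix (Fin N) (Fin N) ℂ)
    (hC : ∀ y i j, Tendsto (fun n : ℕ => (lam ^ n)⁻¹ • Bc n y i j)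
      atTop (𝓝 (C y i j)))
    (hCcont : ∀ i j, Continuous fun y => C y i j) :
    C 0 = P.map Complex.ofReal ∧
    (∀ y, C y * M.map Complex.ofReal = lam • C y) ∧
    (∀ y, C y = C y * P.map Complex.ofReal) ∧
    (∃ c : EuclideanSpace ℝ (Fin m) → Fin N → ℂ,
      (∀ i, Continuous fun y => c y i) ∧
      (∀ i, c 0 i = (v i : ℂ)) ∧
      (∀ y i j, C y i j = c y i * (u j : ℂ))) ∧
    (∀ y, (C y).rank ≤ 1) := by
  obtain ⟨k, hk⟩ := hprim
  have hlam0 : (0:ℝ) < lam := lt_trans one_pos hlam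
  have hlamne : (lam : ℂ) ≠ 0 := by
    exact_mod_cast ne_of_gt hlam0
  -- B at 0 is M
  have hB0 : B 0 = M.map Complex.ofReal := by
    funext i j
    rw [hB]
    simp [Matrix.map_apply, hM, inner_zero_right]
  have hB0e : ∀ i j, B 0 i j = (M i j : ℂ) := fun i j => by
    rw [hB0]; rfl
  -- continuity of B
  have hBcont : ∀ i j, Continuous fun y => B y i j := by
    intro i j
    simp only [hB]
    apply continuous_finset_sum
    intro x hx
    exact Complex.continuous_exp.comp
      (continuous_const.mul (Complex.continuous_ofReal.comp
        (Continuous.inner continuous_const continuous_id)))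
  -- iterates of R tend to 0
  have hRy0 : ∀ y, Tendsto (fun n : ℕ => (R ^ n) y) atTop (𝓝 0) := by
    intro y
    have hb : ∀ n : ℕ, ‖(R ^ n) y‖ ≤ ‖R‖ ^ n * ‖y‖ := by
      intro n
      induction n with
      | zero => rw [pow_zero, pow_zero, one_mul, ContinuousLinearMap.one_apply]
      | succ n ih =>
          have h1 : (R ^ (n+1)) y = R ((R ^ n) y) := by rw [pow_succ']; rfl
          calc ‖(R ^ (n+1)) y‖ = ‖R ((R ^ n) y)‖ := by rw [h1]
            _ ≤ ‖R‖ * ‖(R ^ n) y‖ := R.le_opNorm _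
            _ ≤ ‖R‖ * (‖R‖ ^ n * ‖y‖) :=
                mul_le_mul_of_nonneg_left ih (norm_nonneg _)
            _ = ‖R‖ ^ (n+1) * ‖y‖ := by ring
    have h0 : Tendsto (fun n : ℕ => ‖R‖ ^ n * ‖y‖) atTop (𝓝 0) := by
      have h := (tendsto_pow_atTop_nhds_zero_of_lt_one (norm_nonneg R) hRcontr).mul_const ‖y‖
      rwa [zero_mul] at h
    exact tendsto_zero_iff_norm_tendsto_zero.mpr
      (squeeze_zero (fun n => norm_nonneg _) hb h0)
  -- cocycle step on the right
  have hBstep : ∀ n y, Bc (n+1) y = Bc n y * B ((R ^ n) y) := by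
    intro n
    induction n with
    | zero =>
        intro y
        rw [hBcS, hBc0, hBc0, one_mul, mul_one, pow_zero, ContinuousLinearMap.one_apply]
    | succ n ih =>
        intro y
        have h1 : (R ^ (n+1)) y = (R ^ n) (R y) := by rw [pow_succ]; rfl
        rw [hBcS (n+1) y, ih (R y), hBcS n y, mul_assoc, h1]
  -- convergence in multiplicative form
  have hCmul : ∀ y i j, Tendsto (fun n : ℕ => ((lam : ℂ) ^ n)⁻¹ * Bc n y i j)
      atTop (𝓝 (C y i j)) := by
    intro y i j
    have heq : (fun n : ℕ => ((lam : ℂ) ^ n)⁻¹ * Bc n y i j)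
        = fun n : ℕ => (lam ^ n)⁻¹ • Bc n y i j := by
      funext n
      rw [Complex.real_smul]
      push_cast
      ring
    rw [heq]
    exact hC y i j
  -- part 2 entrywise
  have part2' : ∀ y i j, ∑ l, C y i l * (M l j : ℂ) = (lam : ℂ) * C y i j := by
    intro y i j
    have hA : Tendsto (fun n : ℕ => ((lam : ℂ) ^ (n+1))⁻¹ * Bc (n+1) y i j)
        atTop (𝓝 (C y i j)) := (hCmul y i j).comp (tendsto_add_atTop_nat 1)
    have hBk : ∀ l, Tendsto (fun n : ℕ => B ((R ^ n) y) l j) atTop (𝓝 ((M l j : ℂ))) := by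
      intro l
      have h := ((hBcont l j).tendsto 0).comp (hRy0 y)
      rwa [hB0e l j] at h
    have hterm : ∀ l, Tendsto
        (fun n : ℕ => (((lam : ℂ) ^ n)⁻¹ * Bc n y i l) * B ((R ^ n) y) l j)
        atTop (𝓝 (C y i l * (M l j : ℂ))) :=
      fun l => (hCmul y i l).mul (hBk l)
    have hsum := tendsto_finset_sum Finset.univ (fun l _ => hterm l)
    have hBfold : Tendsto
        (fun n : ℕ => (lam : ℂ)⁻¹ * ∑ l, (((lam : ℂ) ^ n)⁻¹ * Bc n y i l) * B ((R ^ n) y) l j)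
        atTop (𝓝 ((lam : ℂ)⁻¹ * ∑ l, C y i l * (M l j : ℂ))) := hsum.const_mul _
    have hfun : (fun n : ℕ => ((lam : ℂ) ^ (n+1))⁻¹ * Bc (n+1) y i j)
        = fun n : ℕ => (lam : ℂ)⁻¹ * ∑ l, (((lam : ℂ) ^ n)⁻¹ * Bc n y i l) * B ((R ^ n) y) l j := by
      funext n
      rw [hBstep n y, Matrix.mul_apply, Finset.mul_sum, pow_succ, mul_inv, Finset.mul_sum]
      exact Finset.sum_congr rfl fun l _ => by ring
    rw [hfun] at hA
    have heq := tendsto_nhds_unique hA hBfold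
    rw [heq]
    field_simp
  -- part 2 matrix form
  have part2 : ∀ y, C y * M.map Complex.ofReal = lam • C y := by
    intro y
    ext i j
    rw [Matrix.mul_apply, Matrix.smul_apply]
    rw [Complex.real_smul]
    rw [← part2' y i j]
    exact Finset.sum_congr rfl fun l _ => by rw [Matrix.map_apply]
  -- columns at 0: M * C 0 = lam * C 0, entrywise
  have hMC0 : ∀ i j, ∑ l, (M i l : ℂ) * C 0 l j = (lam : ℂ) * C 0 i j := by
    intro i j
    have hA : Tendsto (fun n : ℕ => ((lam : ℂ) ^ (n+1))⁻¹ * Bc (n+1) 0 i j)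
        atTop (𝓝 (C 0 i j)) := (hCmul 0 i j).comp (tendsto_add_atTop_nat 1)
    have hterm : ∀ l, Tendsto
        (fun n : ℕ => (M i l : ℂ) * (((lam : ℂ) ^ n)⁻¹ * Bc n 0 l j))
        atTop (𝓝 ((M i l : ℂ) * C 0 l j)) :=
      fun l => (hCmul 0 l j).const_mul _
    have hsum := tendsto_finset_sum Finset.univ (fun l _ => hterm l)
    have hBfold : Tendsto
        (fun n : ℕ => (lam : ℂ)⁻¹ * ∑ l, (M i l : ℂ) * (((lam : ℂ) ^ n)⁻¹ * Bc n 0 l j))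
        atTop (𝓝 ((lam : ℂ)⁻¹ * ∑ l, (M i l : ℂ) * C 0 l j)) := hsum.const_mul _
    have hfun : (fun n : ℕ => ((lam : ℂ) ^ (n+1))⁻¹ * Bc (n+1) 0 i j)
        = fun n : ℕ => (lam : ℂ)⁻¹ * ∑ l, (M i l : ℂ) * (((lam : ℂ) ^ n)⁻¹ * Bc n 0 l j) := by
      funext n
      have h0 : Bc (n+1) 0 = B 0 * Bc n 0 := by
        have := hBcS n 0; rwa [map_zero R] at this
      rw [h0, Matrix.mul_apply, Finset.mul_sum, pow_succ, mul_inv, Finset.mul_sum]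
      refine Finset.sum_congr rfl fun l _ => ?_
      rw [hB0e i l]; ring
    rw [hfun] at hA
    have heq := tendsto_nhds_unique hA hBfold
    rw [heq]
    field_simp
  -- Bc at 0 is M^n
  have hBcn0 : ∀ n, Bc n 0 = (M.map Complex.ofReal) ^ n := by
    intro n
    induction n with
    | zero => rw [hBc0, pow_zero]
    | succ n ih =>
        have h0 : Bc (n+1) 0 = B 0 * Bc n 0 := by
          have := hBcS n 0; rwa [map_zero R] at this
        rw [h0, hB0, ih, ← pow_succ']
  -- u is a left eigenvector of M^n
  have huM : ∀ j, ∑ i, (u i : ℂ) * (M i j : ℂ) = (lam : ℂ) * (u j : ℂ) := by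
    intro j
    have h := congrFun hu j
    simp only [Matrix.vecMul, dotProduct, Pi.smul_apply, smul_eq_mul] at h
    exact_mod_cast congrArg Complex.ofReal h
  have huMn : ∀ n j, ∑ i, (u i : ℂ) * ((M.map Complex.ofReal) ^ n) i j
      = (lam : ℂ) ^ n * (u j : ℂ) := by
    intro n
    induction n with
    | zero =>
        intro j
        simp [Matrix.one_apply]
    | succ n ih =>
        intro j
        rw [pow_succ]
        simp only [Matrix.mul_apply, Finset.mul_sum]
        rw [Finset.sum_comm]
        have hinner : ∀ l, ∑ i, (u i : ℂ) * (((M.map Complex.ofReal) ^ n) i l *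
            (M.map Complex.ofReal) l j)
            = ((lam : ℂ) ^ n * (u l : ℂ)) * (M l j : ℂ) := by
          intro l
          rw [← ih l, Finset.sum_mul]
          refine Finset.sum_congr rfl fun i _ => ?_
          rw [Matrix.map_apply]; ring
        calc (∑ l, ∑ i, (u i : ℂ) * (((M.map Complex.ofReal) ^ n) i l *
              (M.map Complex.ofReal) l j))
            = ∑ l, ((lam : ℂ) ^ n * (u l : ℂ)) * (M l j : ℂ) :=
              Finset.sum_congr rfl fun l _ => hinner l
          _ = (lam : ℂ) ^ n * ∑ l, (u l : ℂ) * (M l j : ℂ) := by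
              rw [Finset.mul_sum]; exact Finset.sum_congr rfl fun l _ => by ring
          _ = (lam : ℂ) ^ (n+1) * (u j : ℂ) := by rw [huM j, pow_succ]; ring
  -- u ⬝ C 0 = u
  have hucol : ∀ j, ∑ i, (u i : ℂ) * C 0 i j = (u j : ℂ) := by
    intro j
    have h1 : Tendsto (fun n : ℕ => ∑ i, (u i : ℂ) * (((lam : ℂ) ^ n)⁻¹ * Bc n 0 i j))
        atTop (𝓝 (∑ i, (u i : ℂ) * C 0 i j)) :=
      tendsto_finset_sum Finset.univ (fun i _ => (hCmul 0 i j).const_mul _)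
    have hconst : ∀ n : ℕ, ∑ i, (u i : ℂ) * (((lam : ℂ) ^ n)⁻¹ * Bc n 0 i j) = (u j : ℂ) := by
      intro n
      have hlampow : ((lam : ℂ) ^ n) ≠ 0 := pow_ne_zero n hlamne
      calc ∑ i, (u i : ℂ) * (((lam : ℂ) ^ n)⁻¹ * Bc n 0 i j)
          = ((lam : ℂ) ^ n)⁻¹ * ∑ i, (u i : ℂ) * Bc n 0 i j := by
            rw [Finset.mul_sum]; exact Finset.sum_congr rfl fun i _ => by ring
        _ = ((lam : ℂ) ^ n)⁻¹ * ((lam : ℂ) ^ n * (u j : ℂ)) := by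
            rw [show ∑ i, (u i : ℂ) * Bc n 0 i j = (lam : ℂ) ^ n * (u j : ℂ) by
              rw [← huMn n j]
              exact Finset.sum_congr rfl fun i _ => by rw [hBcn0 n]]
        _ = (u j : ℂ) := by field_simp
    have h2 : Tendsto (fun n : ℕ => ∑ i, (u i : ℂ) * (((lam : ℂ) ^ n)⁻¹ * Bc n 0 i j))
        atTop (𝓝 ((u j : ℂ))) := by
      have : (fun n : ℕ => ∑ i, (u i : ℂ) * (((lam : ℂ) ^ n)⁻¹ * Bc n 0 i j))
          = fun _ : ℕ => (u j : ℂ) := funext hconst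
      rw [this]; exact tendsto_const_nhds
    exact tendsto_nhds_unique h1 h2
  -- C 0 = P
  have huvC : (∑ i, (u i : ℂ) * (v i : ℂ)) = 1 := by
    exact_mod_cast congrArg Complex.ofReal huv
  have hC0 : C 0 = P.map Complex.ofReal := by
    ext i j
    -- column j of C 0 is an eigenvector of M
    have hw : (M.map Complex.ofReal).mulVec (fun l => C 0 l j)
        = (lam : ℂ) • (fun l => C 0 l j) := by
      funext i'
      simp only [Matrix.mulVec, dotProduct, Matrix.map_apply, Pi.smul_apply, smul_eq_mul]
      exact hMC0 i' j
    obtain ⟨t, htc⟩ := pf_complex k hk hvpos hv hw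
    have htu : t = (u j : ℂ) := by
      have h := hucol j
      rw [show ∑ i, (u i : ℂ) * C 0 i j = t * ∑ i, (u i : ℂ) * (v i : ℂ) by
        rw [Finset.mul_sum]
        exact Finset.sum_congr rfl fun i _ => by rw [htc i]; ring] at h
      rwa [huvC, mul_one] at h
    rw [htc i, htu, Matrix.map_apply, hPdef]
    push_cast
    ring
  -- rows of C y are multiples of u
  have hkT : ∀ i j, 0 < ((Mᵀ) ^ k) i j := by
    intro i j
    rw [← Matrix.transpose_pow]
    exact hk j i
  have huT : (Mᵀ).mulVec u = lam • u := by
    funext j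
    have h := congrFun hu j
    simp only [Matrix.vecMul, dotProduct, Pi.smul_apply, smul_eq_mul] at h
    simp only [Matrix.mulVec, dotProduct, Matrix.transpose_apply, Pi.smul_apply, smul_eq_mul]
    rw [← h]
    exact Finset.sum_congr rfl fun i _ => mul_comm _ _
  have hrow : ∀ y i, ∃ t : ℂ, ∀ j, C y i j = t * (u j : ℂ) := by
    intro y i
    have hw : ((Mᵀ).map Complex.ofReal).mulVec (fun j => C y i j)
        = (lam : ℂ) • (fun j => C y i j) := by
      funext j
      simp only [Matrix.mulVec, dotProduct, Matrix.map_apply, Matrix.transpose_apply,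
        Pi.smul_apply, smul_eq_mul]
      rw [← part2' y i j]
      exact Finset.sum_congr rfl fun l _ => mul_comm _ _
    exact pf_complex k hkT hupos huT hw
  -- define c
  set c : EuclideanSpace ℝ (Fin m) → Fin N → ℂ :=
    fun y i => ∑ j, C y i j * (v j : ℂ) with hc
  have hCrow : ∀ y i j, C y i j = c y i * (u j : ℂ) := by
    intro y i j
    obtain ⟨t, htc⟩ := hrow y i
    have hcy : c y i = t := by
      simp only [hc]
      rw [show ∑ j, C y i j * (v j : ℂ) = t * ∑ j, (u j : ℂ) * (v j : ℂ) by
        rw [Finset.mul_sum]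
        exact Finset.sum_congr rfl fun j _ => by rw [htc j]; ring]
      rw [huvC, mul_one]
    rw [hcy, htc j]
  have hccont : ∀ i, Continuous fun y => c y i := by
    intro i
    simp only [hc]
    exact continuous_finset_sum _ fun j _ => (hCcont i j).mul continuous_const
  have hc0 : ∀ i, c 0 i = (v i : ℂ) := by
    intro i
    simp only [hc]
    have : ∀ j, C 0 i j * (v j : ℂ) = (v i : ℂ) * ((u j : ℂ) * (v j : ℂ)) := by
      intro j
      rw [hC0, Matrix.map_apply, hPdef]
      push_cast
      ring
    rw [Finset.sum_congr rfl fun j _ => this j, ← Finset.mul_sum, huvC, mul_one]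
  -- C y = C y * P
  have part3 : ∀ y, C y = C y * P.map Complex.ofReal := by
    intro y
    ext i j
    rw [Matrix.mul_apply]
    have : ∀ l, C y i l * (P.map Complex.ofReal) l j
        = (c y i * (u j : ℂ)) * ((u l : ℂ) * (v l : ℂ)) := by
      intro l
      rw [hCrow y i l, Matrix.map_apply, hPdef]
      push_cast
      ring
    rw [Finset.sum_congr rfl fun l _ => this l, ← Finset.mul_sum, huvC, mul_one]
    exact hCrow y i j
  -- rank
  have hrank : ∀ y, (C y).rank ≤ 1 := by
    intro y
    have hfac : C y = (Matrix.of fun i (_ : Fin 1) => c y i) *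
        (Matrix.of fun (_ : Fin 1) j => (u j : ℂ)) := by
      ext i j
      rw [Matrix.mul_apply, Fin.sum_univ_one]
      exact hCrow y i j
    calc (C y).rank = ((Matrix.of fun i (_ : Fin 1) => c y i) *
          (Matrix.of fun (_ : Fin 1) j => (u j : ℂ))).rank := by rw [hfac]
      _ ≤ (Matrix.of fun i (_ : Fin 1) => c y i).rank := Matrix.rank_mul_le_left _ _
      _ ≤ Fintype.card (Fin 1) := Matrix.rank_le_card_width _
      _ = 1 := by simp
  exact ⟨hC0, part2, part3, ⟨c, hccont, hc0, hCrow⟩, hrank⟩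
end

section
/- Suppose the unique solution (W_1,…,W_N) of the window IFS is row-wise measure-disjoint and vol(W_i) = η·v_i for all i with some η > 0. Let f_i(y) = ∫_{W_i} exp(2πi⟨x,y⟩) dx and set R = Qᵀ. Then, with C(y) = lim_{n→∞} λ^{−n} B^{(n)}(y) (taken with this R), the vector |f(y)⟩ = (f_1(y),…,f_N(y)) satisfies |f(y)⟩ = C(y)·|f(0)⟩ = η·C(y)·|v⟩ for all y ∈ ℝ^m; equivalently, writing C(y) = |c(y)⟩⟨u|, one has |f(y)⟩ = η·|c(y)⟩ with |c(y)⟩ = C(y)|v⟩. -/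
open MeasureTheory Filter Matrix Topology Set

lemma helper_biUnion {α : Type*} [MeasurableSpace α] {μ : Measure α}
    {ι : Type*} [DecidableEq ι] (s : Finset ι) {t : ι → Set α} {g : α → ℂ}
    (ht : ∀ i ∈ s, MeasurableSet (t i))
    (hd : ∀ i ∈ s, ∀ j ∈ s, i ≠ j → μ (t i ∩ t j) = 0)
    (hint : ∀ i ∈ s, IntegrableOn g (t i) μ) :
    ∫ x in ⋃ i ∈ s, t i, g x ∂μ = ∑ i ∈ s, ∫ x in t i, g x ∂μ := by
  induction s using Finset.induction_on with
  | empty => simp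
  | @insert a s ha ih =>
    rw [Finset.set_biUnion_insert, Finset.sum_insert ha]
    rw [integral_union_ae]
    · rw [ih (fun i hi => ht i (Finset.mem_insert_of_mem hi))
        (fun i hi j hj hij => hd i (Finset.mem_insert_of_mem hi) j (Finset.mem_insert_of_mem hj) hij)
        (fun i hi => hint i (Finset.mem_insert_of_mem hi))]
    · show μ _ = 0
      rw [Set.inter_iUnion₂]
      refine measure_biUnion_null_iff s.countable_toSet |>.2 fun i hi => ?_
      exact hd a (Finset.mem_insert_self a s) i (Finset.mem_insert_of_mem hi)
        (fun h => ha (h ▸ hi))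
    · exact (MeasurableSet.biUnion s.countable_toSet
        (fun i hi => ht i (Finset.mem_insert_of_mem hi))).nullMeasurableSet
    · exact hint a (Finset.mem_insert_self a s)
    · exact (integrableOn_finset_iUnion).2
        (fun i hi => hint i (Finset.mem_insert_of_mem hi))

lemma helper_norm_exp (r : ℝ) :
    ‖Complex.exp (2 * Real.pi * Complex.I * (r : ℂ))‖ = 1 := by
  have : (2 * Real.pi * Complex.I * (r : ℂ)) = ((2 * Real.pi * r : ℝ) : ℂ) * Complex.I := by
    push_cast; ring
  rw [this, Complex.norm_exp_ofReal_mul_I]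

/-- with `f_i(y) = ∫_{W_i} e^{2πi⟨x,y⟩}dx` and the limit
`C(y) = lim λ⁻ⁿ B⁽ⁿ⁾(y)` (cocycle taken with `R = Qᵀ`), one has
`|f(y)⟩ = C(y)|f(0)⟩ = η·C(y)|v⟩`. -/
theorem stmt11
    {N m : ℕ} (hN : 1 ≤ N) (hm : 1 ≤ m)
    (T : Fin N → Fin N → Finset (EuclideanSpace ℝ (Fin m)))
    (M : Matrix (Fin N) (Fin N) ℝ)
    (hM : ∀ i j, M i j = (T i j).card)
    (hprim : ∃ k : ℕ, ∀ i j, 0 < (M ^ k) i j)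
    (lam : ℝ) (hlam : 1 < lam)
    (u v : Fin N → ℝ)
    (hu : M.vecMul u = lam • u) (hv : M.mulVec v = lam • v)
    (hupos : ∀ i, 0 < u i) (hvpos : ∀ i, 0 < v i)
    (hvsum : ∑ i, v i = 1) (huv : ∑ i, u i * v i = 1)
    (B : EuclideanSpace ℝ (Fin m) → Matrix (Fin N) (Fin N) ℂ)
    (hB : ∀ y i j, B y i j =
      ∑ x ∈ T i j, Complex.exp (2 * Real.pi * Complex.I * ((inner ℝ x y : ℝ) : ℂ)))
    (Q : EuclideanSpace ℝ (Fin m) →L[ℝ] EuclideanSpace ℝ (Fin m))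
    (hQbij : Function.Bijective Q)
    (hQcontr : ‖Q‖ < 1)
    (hQdet : |Q.det| = 1 / lam)
    (hQnormal : Q.comp (ContinuousLinearMap.adjoint Q) =
      (ContinuousLinearMap.adjoint Q).comp Q)
    (W : Fin N → Set (EuclideanSpace ℝ (Fin m)))
    (hWne : ∀ i, (W i).Nonempty) (hWcp : ∀ i, IsCompact (W i))
    (hIFS : ∀ i, W i = ⋃ j, ⋃ t ∈ T i j, (fun x => Q x + t) '' W j)
    (hdisj : ∀ i j j' : Fin N, ∀ t ∈ T i j, ∀ t' ∈ T i j', (j, t) ≠ (j', t') →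
      volume (((fun x => Q x + t) '' W j) ∩ ((fun x => Q x + t') '' W j')) = 0)
    (η : ℝ) (hη : 0 < η)
    (hvol : ∀ i, volume (W i) = ENNReal.ofReal (η * v i))
    (f : Fin N → EuclideanSpace ℝ (Fin m) → ℂ)
    (hf : ∀ i y, f i y =
      ∫ x in W i, Complex.exp (2 * Real.pi * Complex.I * ((inner ℝ x y : ℝ) : ℂ)))
    (Bc : ℕ → EuclideanSpace ℝ (Fin m) → Matrix (Fin N) (Fin N) ℂ)
    (hBc0 : ∀ y, Bc 0 y = 1)
    (hBcS : ∀ n y, Bc (n + 1) y =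
      B y * Bc n (ContinuousLinearMap.adjoint Q y))
    (C : EuclideanSpace ℝ (Fin m) → Matrix (Fin N) (Fin N) ℂ)
    (hC : ∀ y i j, Tendsto (fun n : ℕ => (lam ^ n)⁻¹ • Bc n y i j)
      atTop (𝓝 (C y i j))) :
    ∀ (y : EuclideanSpace ℝ (Fin m)) (i : Fin N),
      f i y = (C y).mulVec (fun j => f j 0) i ∧
      f i y = (η : ℂ) * (C y).mulVec (fun j => (v j : ℂ)) i := by
  classical
  set A : EuclideanSpace ℝ (Fin m) →L[ℝ] EuclideanSpace ℝ (Fin m) := ContinuousLinearMap.adjoint Q with hA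
  set g : EuclideanSpace ℝ (Fin m) → EuclideanSpace ℝ (Fin m) → ℂ := fun y x =>
    Complex.exp (2 * Real.pi * Complex.I * ((inner ℝ x y : ℝ) : ℂ)) with hg
  have hlam0 : (0:ℝ) < lam := lt_trans one_pos hlam
  have gcont : ∀ y : EuclideanSpace ℝ (Fin m), Continuous (g y) := by
    intro y
    exact Complex.continuous_exp.comp <| continuous_const.mul <|
      Complex.continuous_ofReal.comp <| (continuous_id.inner continuous_const)
  -- integrability on compacts
  have gint : ∀ (y : EuclideanSpace ℝ (Fin m)) (K : Set (EuclideanSpace ℝ (Fin m))), IsCompact K → IntegrableOn (g y) K := by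
    intro y K hK
    exact (gcont y).continuousOn.integrableOn_compact hK
  -- change of variables
  have key1 : ∀ (y : EuclideanSpace ℝ (Fin m)) (j : Fin N) (t : EuclideanSpace ℝ (Fin m)),
      ∫ x in (fun x => Q x + t) '' W j, g y x
        = ((1/lam : ℝ) : ℂ) * (g y t * f j (A y)) := by
    intro y j t
    have hmeas : MeasurableSet (W j) := (hWcp j).isClosed.measurableSet
    have hderiv : ∀ x ∈ W j,
        HasFDerivWithinAt (fun x => Q x + t) Q (W j) x := fun x _ =>
      (Q.hasFDerivAt.add_const t).hasFDerivWithinAt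
    have hinj : Set.InjOn (fun x => Q x + t) (W j) := by
      intro a _ b _ hab
      exact hQbij.1 (by simpa using hab)
    rw [integral_image_eq_integral_abs_det_fderiv_smul volume hmeas hderiv hinj]
    have hpt : ∀ x, |(Q : EuclideanSpace ℝ (Fin m) →L[ℝ] EuclideanSpace ℝ (Fin m)).det| • g y (Q x + t)
        = (1/lam : ℝ) • (g y t * g (A y) x) := by
      intro x
      rw [hQdet]
      congr 1
      have h1 : (inner ℝ (Q x + t) y : ℝ) = (inner ℝ x (A y) : ℝ) + (inner ℝ t y : ℝ) := by
        rw [inner_add_left, ContinuousLinearMap.adjoint_inner_right]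
      simp only [hg]
      rw [h1]
      push_cast
      rw [mul_add, Complex.exp_add]
      ring
    simp only [hpt]
    rw [integral_smul, integral_const_mul, Complex.real_smul, ← hf]
  -- renewal equation
  have renewal : ∀ (y : EuclideanSpace ℝ (Fin m)) (i : Fin N),
      f i y = ((1/lam : ℝ) : ℂ) * ∑ j, B y i j * f j (A y) := by
    intro y i
    set P : Finset ((_ : Fin N) × EuclideanSpace ℝ (Fin m)) := Finset.univ.sigma (fun j => T i j) with hP
    set S : ((_ : Fin N) × EuclideanSpace ℝ (Fin m)) → Set (EuclideanSpace ℝ (Fin m)) := fun p => (fun x => Q x + p.2) '' W p.1 with hS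
    have hmemP : ∀ p : ((_ : Fin N) × EuclideanSpace ℝ (Fin m)), p ∈ P ↔ p.2 ∈ T i p.1 := by
      intro p; simp [hP]
    have hUnion : W i = ⋃ p ∈ P, S p := by
      rw [hIFS i]
      ext x
      simp only [Set.mem_iUnion, hS]
      constructor
      · rintro ⟨j, t, ht, hx⟩
        exact ⟨⟨j, t⟩, (hmemP ⟨j, t⟩).2 ht, hx⟩
      · rintro ⟨⟨j, t⟩, hp, hx⟩
        exact ⟨j, t, (hmemP ⟨j, t⟩).1 hp, hx⟩
    have hcp : ∀ p : ((_ : Fin N) × EuclideanSpace ℝ (Fin m)), IsCompact (S p) := by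
      intro p
      exact (hWcp p.1).image (Q.continuous.add continuous_const)
    rw [hf i y, hUnion, helper_biUnion P
      (fun p _ => (hcp p).isClosed.measurableSet)
      (fun p hp q hq hpq => by
        refine hdisj i p.1 q.1 p.2 ((hmemP p).1 hp) q.2 ((hmemP q).1 hq) ?_
        intro h
        apply hpq
        have h1 : p.1 = q.1 := congrArg Prod.fst h
        have h2 : p.2 = q.2 := congrArg Prod.snd h
        exact Sigma.ext h1 (by rw [h2]))
      (fun p _ => gint y (S p) (hcp p))]
    rw [hP, Finset.sum_sigma]
    rw [Finset.mul_sum]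
    refine Finset.sum_congr rfl fun j _ => ?_
    rw [hB y i j, Finset.sum_mul, Finset.mul_sum]
    refine Finset.sum_congr rfl fun t _ => ?_
    rw [key1 y j t]
  -- iterated renewal
  have iterate : ∀ (n : ℕ) (y : EuclideanSpace ℝ (Fin m)) (i : Fin N),
      f i y = ∑ j, ((lam ^ n)⁻¹ • Bc n y i j) * f j ((A ^ n) y) := by
    intro n
    induction n with
    | zero =>
      intro y i
      simp [hBc0, Matrix.one_apply]
    | succ n ih =>
      intro y i
      rw [renewal y i]
      have hstep : ∀ j, f j (A y) = ∑ k, ((lam ^ n)⁻¹ • Bc n (A y) j k) * f k ((A ^ n) (A y)) :=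
        fun j => ih (A y) j
      have hAp : (A ^ n) (A y) = (A ^ (n+1)) y := by
        rw [pow_succ]; rfl
      have hl : (lam : ℂ) ≠ 0 := by exact_mod_cast ne_of_gt hlam0
      simp only [hstep, hAp, hBcS n y, Matrix.mul_apply, smul_eq_mul, Complex.real_smul,
        Finset.mul_sum, Finset.sum_mul]
      rw [Finset.sum_comm]
      refine Finset.sum_congr rfl fun k _ => Finset.sum_congr rfl fun j _ => ?_
      push_cast
      rw [pow_succ]
      field_simp
  -- norm of adjoint
  have hAnorm : ‖A‖ < 1 := by
    rw [hA]
    calc ‖ContinuousLinearMap.adjoint Q‖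
        = ‖Q‖ := ContinuousLinearMap.adjoint.norm_map Q
      _ < 1 := hQcontr
  -- orbit tends to zero
  have hzn : ∀ y : EuclideanSpace ℝ (Fin m),
      Tendsto (fun n : ℕ => (A ^ n) y) atTop (𝓝 0) := by
    intro y
    have hb : ∀ n : ℕ, ‖(A ^ n) y‖ ≤ ‖A‖ ^ n * ‖y‖ := by
      intro n
      induction n with
      | zero =>
        rw [pow_zero, pow_zero, one_mul, ContinuousLinearMap.one_apply]
      | succ n ih =>
        have h1 : (A ^ (n+1)) y = A ((A ^ n) y) := by rw [pow_succ']; rfl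
        calc ‖(A ^ (n+1)) y‖ = ‖A ((A ^ n) y)‖ := by rw [h1]
          _ ≤ ‖A‖ * ‖(A ^ n) y‖ := A.le_opNorm _
          _ ≤ ‖A‖ * (‖A‖ ^ n * ‖y‖) := by
              exact mul_le_mul_of_nonneg_left ih (norm_nonneg A)
          _ = ‖A‖ ^ (n+1) * ‖y‖ := by ring
    have hg0 : Tendsto (fun n : ℕ => ‖A‖ ^ n * ‖y‖) atTop (𝓝 0) := by
      have := (tendsto_pow_atTop_nhds_zero_of_lt_one (norm_nonneg A) hAnorm).mul_const ‖y‖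
      rwa [zero_mul] at this
    exact squeeze_zero_norm hb hg0
  -- continuity of f j at 0 along sequences
  have hfz : ∀ (j : Fin N) (z : ℕ → EuclideanSpace ℝ (Fin m)),
      Tendsto z atTop (𝓝 0) → Tendsto (fun n => f j (z n)) atTop (𝓝 (f j 0)) := by
    intro j z hz
    have hfin : volume (W j) ≠ ⊤ := by rw [hvol j]; exact ENNReal.ofReal_ne_top
    haveI : IsFiniteMeasure (volume.restrict (W j)) :=
      ⟨by rwa [Measure.restrict_apply_univ, lt_top_iff_ne_top]⟩
    have hconv := tendsto_integral_of_dominated_convergence (μ := volume.restrict (W j))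
      (F := fun n x => g (z n) x) (f := g 0) (bound := fun _ => 1)
      (fun n => (gcont (z n)).aestronglyMeasurable)
      (integrable_const 1)
      (fun n => Eventually.of_forall fun x => by
        simpa [hg] using (helper_norm_exp (inner ℝ x (z n))).le)
      (Eventually.of_forall fun x => by
        have hcy : Continuous fun y : EuclideanSpace ℝ (Fin m) => g y x := by
          exact Complex.continuous_exp.comp <| continuous_const.mul <|
            Complex.continuous_ofReal.comp <| (continuous_const.inner continuous_id)
        exact (hcy.tendsto 0).comp hz)
    have h1 : (fun n => ∫ x in W j, g (z n) x) = fun n => f j (z n) :=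
      funext fun n => (hf j (z n)).symm
    rw [h1] at hconv
    rw [← hf j 0] at hconv
    exact hconv
  -- the limit identity
  have key : ∀ (y : EuclideanSpace ℝ (Fin m)) (i : Fin N),
      f i y = ∑ j, C y i j * f j 0 := by
    intro y i
    have h1 : Tendsto (fun n : ℕ => ∑ j, ((lam ^ n)⁻¹ • Bc n y i j) * f j ((A ^ n) y))
        atTop (𝓝 (∑ j, C y i j * f j 0)) :=
      tendsto_finset_sum _ fun j _ => (hC y i j).mul (hfz j _ (hzn y))
    have h2 : (fun n : ℕ => ∑ j, ((lam ^ n)⁻¹ • Bc n y i j) * f j ((A ^ n) y))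
        = fun _ => f i y := funext fun n => (iterate n y i).symm
    rw [h2] at h1
    exact tendsto_nhds_unique tendsto_const_nhds h1
  -- the value at zero
  have hf0 : ∀ j, f j 0 = ((η * v j : ℝ) : ℂ) := by
    intro j
    have hone : (fun x : EuclideanSpace ℝ (Fin m) => g 0 x) = fun _ => (1:ℂ) := by
      funext x
      simp [hg, inner_zero_right]
    rw [hf j 0]
    calc (∫ x in W j, g 0 x) = ∫ _x in W j, (1:ℂ) := by rw [hone]
      _ = (volume (W j)).toReal • (1:ℂ) := setIntegral_const 1
      _ = ((η * v j : ℝ) : ℂ) := by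
          rw [hvol j, ENNReal.toReal_ofReal (le_of_lt (mul_pos hη (hvpos j)))]
          rw [Complex.real_smul, mul_one]
  -- conclusion
  intro y i
  have e1 : (C y).mulVec (fun j => f j 0) i = ∑ j, C y i j * f j 0 := by
    simp [Matrix.mulVec, dotProduct]
  have e2 : (C y).mulVec (fun j => (v j : ℂ)) i = ∑ j, C y i j * (v j : ℂ) := by
    simp [Matrix.mulVec, dotProduct]
  refine ⟨by rw [e1]; exact key y i, ?_⟩
  rw [e2, key y i, Finset.mul_sum]
  refine Finset.sum_congr rfl fun j _ => ?_
  rw [hf0 j]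
  push_cast
  ring
end

section
/- Suppose the unique solution (W_1,…,W_N) of the window IFS is row-wise measure-disjoint and each vol(W_i) > 0, so that vol(W_i) = η·v_i for some η > 0. Fix α > 0. Then the absolutely continuous measures μ_i := (α·v_i / vol(W_i)) · (Lebesgue measure restricted to W_i), equivalently μ_i with Radon–Nikodym density g_i = (α·v_i/vol(W_i))·1_{W_i}, satisfy μ_i = λ^{−1} Σ_{j=1}^{N} Σ_{t∈T_{ij}} (x ↦ Q·x + t)_*(μ_j) for every 1 ≤ i ≤ N, together with total mass ‖μ_i‖ = α·v_i. -/
open MeasureTheory Filter Matrix Topology Set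

/-- the absolutely continuous measures
`μ_i = (α v_i / vol W_i) · Leb|_{W_i}` satisfy the measure IFS
`μ_i = λ⁻¹ Σ_j Σ_{t∈T_{ij}} (x ↦ Qx+t)_*(μ_j)` and have total mass `α v_i`. -/
theorem stmt12
    {N m : ℕ} (hN : 1 ≤ N) (hm : 1 ≤ m)
    (T : Fin N → Fin N → Finset (EuclideanSpace ℝ (Fin m)))
    (M : Matrix (Fin N) (Fin N) ℝ)
    (hM : ∀ i j, M i j = (T i j).card)
    (hprim : ∃ k : ℕ, ∀ i j, 0 < (M ^ k) i j)
    (lam : ℝ) (hlam : 1 < lam)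
    (v : Fin N → ℝ)
    (hv : M.mulVec v = lam • v) (hvpos : ∀ i, 0 < v i) (hvsum : ∑ i, v i = 1)
    (Q : EuclideanSpace ℝ (Fin m) →L[ℝ] EuclideanSpace ℝ (Fin m))
    (hQbij : Function.Bijective Q)
    (hQcontr : ‖Q‖ < 1)
    (hQdet : |Q.det| = 1 / lam)
    (W : Fin N → Set (EuclideanSpace ℝ (Fin m)))
    (hWne : ∀ i, (W i).Nonempty) (hWcp : ∀ i, IsCompact (W i))
    (hIFS : ∀ i, W i = ⋃ j, ⋃ t ∈ T i j, (fun x => Q x + t) '' W j)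
    (hdisj : ∀ i j j' : Fin N, ∀ t ∈ T i j, ∀ t' ∈ T i j', (j, t) ≠ (j', t') →
      volume (((fun x => Q x + t) '' W j) ∩ ((fun x => Q x + t') '' W j')) = 0)
    (η : ℝ) (hη : 0 < η)
    (hvol : ∀ i, volume (W i) = ENNReal.ofReal (η * v i))
    (α : ℝ) (hα : 0 < α)
    (μ : Fin N → Measure (EuclideanSpace ℝ (Fin m)))
    (hμ : ∀ i, μ i =
      (ENNReal.ofReal (α * v i) / volume (W i)) • volume.restrict (W i)) :
    ∀ i, μ i = (ENNReal.ofReal lam)⁻¹ •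
        ∑ j, ∑ t ∈ T i j, Measure.map (fun x => Q x + t) (μ j) ∧
      μ i Set.univ = ENNReal.ofReal (α * v i) := by
  have hlam0 : (0:ℝ) < lam := lt_trans one_pos hlam
  -- basic facts about Q
  have hQcont : Continuous Q := Q.continuous
  have hQdet_ne : LinearMap.det (Q : EuclideanSpace ℝ (Fin m) →ₗ[ℝ] EuclideanSpace ℝ (Fin m)) ≠ 0 := by
    intro h
    have : |Q.det| = 0 := by rw [ContinuousLinearMap.det, h, abs_zero]
    rw [hQdet] at this
    have := one_div_pos.mpr hlam0
    linarith
  have hfcont : ∀ t : EuclideanSpace ℝ (Fin m), Continuous (fun x => Q x + t) :=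
    fun t => hQcont.add continuous_const
  have hfmeas : ∀ t : EuclideanSpace ℝ (Fin m), Measurable (fun x => Q x + t) :=
    fun t => (hfcont t).measurable
  have hfinj : ∀ t : EuclideanSpace ℝ (Fin m), Function.Injective (fun x => Q x + t) := by
    intro t a b h
    exact hQbij.1 (by simpa using h)
  have himg : ∀ (j : Fin N) (t : EuclideanSpace ℝ (Fin m)),
      MeasurableSet ((fun x => Q x + t) '' W j) :=
    fun j t => ((hWcp j).image (hfcont t)).measurableSet
  -- pushforward of volume under x ↦ Qx + t
  have hmapvol : ∀ t : EuclideanSpace ℝ (Fin m),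
      Measure.map (fun x => Q x + t) volume = ENNReal.ofReal lam • volume := by
    intro t
    have h1 : Measure.map (fun x => Q x) volume
        = ENNReal.ofReal |(LinearMap.det (Q : EuclideanSpace ℝ (Fin m) →ₗ[ℝ] EuclideanSpace ℝ (Fin m)))⁻¹| • volume := by
      exact Measure.map_linearMap_addHaar_eq_smul_addHaar volume hQdet_ne
    have habs : |(LinearMap.det (Q : EuclideanSpace ℝ (Fin m) →ₗ[ℝ] EuclideanSpace ℝ (Fin m)))⁻¹| = lam := by
      rw [abs_inv]
      rw [show |LinearMap.det (Q : EuclideanSpace ℝ (Fin m) →ₗ[ℝ] EuclideanSpace ℝ (Fin m))| = |Q.det| from rfl]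
      rw [hQdet]
      field_simp
    have h2 : (fun x => Q x + t) = (fun y => y + t) ∘ (fun x => Q x) := rfl
    rw [h2, ← Measure.map_map (measurable_add_const t) hQcont.measurable, h1, habs,
      Measure.map_smul, map_add_right_eq_self volume t]
  -- pushforward of restricted volume
  have hmaprestrict : ∀ (j : Fin N) (t : EuclideanSpace ℝ (Fin m)),
      Measure.map (fun x => Q x + t) (volume.restrict (W j))
        = ENNReal.ofReal lam • volume.restrict ((fun x => Q x + t) '' W j) := by
    intro j t
    calc Measure.map (fun x => Q x + t) (volume.restrict (W j))
        = Measure.map (fun x => Q x + t)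
            (volume.restrict ((fun x => Q x + t) ⁻¹' ((fun x => Q x + t) '' W j))) := by
          rw [preimage_image_eq _ (hfinj t)]
      _ = (Measure.map (fun x => Q x + t) volume).restrict ((fun x => Q x + t) '' W j) :=
          (Measure.restrict_map (hfmeas t) (himg j t)).symm
      _ = ENNReal.ofReal lam • volume.restrict ((fun x => Q x + t) '' W j) := by
          rw [hmapvol t, Measure.restrict_smul]
  -- the common density constant
  set c : ENNReal := ENNReal.ofReal (α / η) with hc_def
  have hμ' : ∀ j, μ j = c • volume.restrict (W j) := by
    intro j
    rw [hμ j, hvol j, ← ENNReal.ofReal_div_of_pos (mul_pos hη (hvpos j))]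
    congr 2
    rw [mul_div_mul_right _ _ (ne_of_gt (hvpos j))]
  intro i
  -- decomposition of the restricted volume
  have hdecomp : volume.restrict (W i)
      = ∑ j, ∑ t ∈ T i j, volume.restrict ((fun x => Q x + t) '' W j) := by
    ext s hs
    set S : Finset ((_ : Fin N) × EuclideanSpace ℝ (Fin m)) :=
      Finset.univ.sigma (fun j => T i j) with hS_def
    have hWi : W i = ⋃ p ∈ S, (fun x => Q x + p.2) '' W p.1 := by
      rw [hIFS i]
      ext x
      simp only [mem_iUnion, hS_def, Finset.mem_sigma, Finset.mem_univ, true_and]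
      constructor
      · rintro ⟨j, t, ht, hx⟩
        exact ⟨⟨j, t⟩, ht, hx⟩
      · rintro ⟨⟨j, t⟩, ht, hx⟩
        exact ⟨j, t, ht, hx⟩
    have hmeas_sum : volume (s ∩ W i)
        = ∑ p ∈ S, volume (s ∩ (fun x => Q x + p.2) '' W p.1) := by
      rw [hWi, inter_iUnion₂]
      refine measure_biUnion_finset₀ ?_ ?_
      · intro p hp q hq hpq
        refine measure_mono_null (Set.inter_subset_inter Set.inter_subset_right Set.inter_subset_right) ?_
        have hp' := (Finset.mem_sigma.mp hp).2
        have hq' := (Finset.mem_sigma.mp hq).2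
        refine hdisj i p.1 q.1 p.2 hp' q.2 hq' ?_
        intro h
        apply hpq
        obtain ⟨j, t⟩ := p; obtain ⟨j', t'⟩ := q
        simp only [Prod.mk.injEq] at h
        simp [h.1, h.2]
      · intro p _
        exact (hs.inter (himg p.1 p.2)).nullMeasurableSet
    rw [Measure.restrict_apply hs, hmeas_sum, hS_def, Finset.sum_sigma]
    simp only [Measure.finset_sum_apply, Measure.restrict_apply hs]
  constructor
  · -- the IFS equation
    have hRHS : ∀ j t, Measure.map (fun x => Q x + t) (μ j)
        = (c * ENNReal.ofReal lam) • volume.restrict ((fun x => Q x + t) '' W j) := by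
      intro j t
      rw [hμ' j, Measure.map_smul, hmaprestrict j t, smul_smul]
    calc μ i = c • volume.restrict (W i) := hμ' i
      _ = ((ENNReal.ofReal lam)⁻¹ * (c * ENNReal.ofReal lam))
            • volume.restrict (W i) := by
          congr 1
          rw [mul_comm c, ← mul_assoc,
            ENNReal.inv_mul_cancel (by positivity) ENNReal.ofReal_ne_top, one_mul]
      _ = (ENNReal.ofReal lam)⁻¹ • (c * ENNReal.ofReal lam) • volume.restrict (W i) := by
          rw [smul_smul]
      _ = (ENNReal.ofReal lam)⁻¹ •
          ∑ j, ∑ t ∈ T i j, Measure.map (fun x => Q x + t) (μ j) := by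
          congr 1
          rw [hdecomp, Finset.smul_sum]
          refine Finset.sum_congr rfl fun j _ => ?_
          rw [Finset.smul_sum]
          exact Finset.sum_congr rfl fun t _ => (hRHS j t).symm
  · -- total mass
    rw [hμ i]
    simp only [Measure.smul_apply, Measure.restrict_apply_univ, smul_eq_mul]
    rw [ENNReal.div_mul_cancel]
    · rw [hvol i]
      exact (ENNReal.ofReal_pos.mpr (mul_pos hη (hvpos i))).ne'
    · rw [hvol i]; exact ENNReal.ofReal_ne_top
end

section
/- The quadruple of compact sets W_a = W_ā = [τ−2, τ−1] and W_b = W_b̄ = [−1, τ−2] is the unique quadruple (W_a, W_ā, W_b, W_b̄) of nonempty compact subsets of ℝ satisfying the system W_a = σ·W_a ∪ σ·W_b̄, W_ā = σ·W_ā ∪ σ·W_b, W_b = σ·W_a + σ, W_b̄ = σ·W_ā + σ. -/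
open Set EMetric
open scoped NNReal ENNReal

/-- Image of a closed interval under multiplication by a negative constant. -/
lemma img_mul_neg_Icc {c a b : ℝ} (hc : c < 0) (_hab : a ≤ b) :
    (fun s => c * s) '' Icc a b = Icc (c * b) (c * a) := by
  ext x
  simp only [mem_image, mem_Icc]
  constructor
  · rintro ⟨y, ⟨h1, h2⟩, rfl⟩
    constructor <;> nlinarith
  · rintro ⟨h1, h2⟩
    have hx : c * (x / c) = x := by
      rw [mul_comm]; exact div_mul_cancel₀ x hc.ne
    refine ⟨x / c, ⟨?_, ?_⟩, hx⟩ <;> nlinarith [hx]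

/-- Lipschitz maps contract `infEdist` to the image. -/
lemma lip_infEdist {f : ℝ → ℝ} {c : ℝ≥0} (hc : c ≠ 0) (hf : LipschitzWith c f)
    (x : ℝ) (t : Set ℝ) :
    infEdist (f x) (f '' t) ≤ c * infEdist x t := by
  have hdef : infEdist x t = ⨅ y ∈ t, edist x y := rfl
  rw [hdef, ENNReal.mul_iInf_of_ne (by exact_mod_cast hc) ENNReal.coe_ne_top]
  refine le_iInf fun y => ?_
  rw [ENNReal.mul_iInf_of_ne (by exact_mod_cast hc) ENNReal.coe_ne_top]
  refine le_iInf fun hy => ?_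
  exact (infEdist_le_edist_of_mem (mem_image_of_mem f hy)).trans (hf x y)

/-- Lipschitz maps contract Hausdorff edistance. -/
lemma lip_hausdorffEdist {f : ℝ → ℝ} {c : ℝ≥0} (hc : c ≠ 0) (hf : LipschitzWith c f)
    (s t : Set ℝ) :
    hausdorffEdist (f '' s) (f '' t) ≤ c * hausdorffEdist s t := by
  apply hausdorffEdist_le_of_infEdist
  · rintro z ⟨x, hx, rfl⟩
    exact (lip_infEdist hc hf x t).trans
      (mul_le_mul_right (infEdist_le_hausdorffEdist_of_mem hx) (c : ℝ≥0∞))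
  · rintro z ⟨x, hx, rfl⟩
    refine (lip_infEdist hc hf x s).trans (mul_le_mul_right ?_ (c : ℝ≥0∞))
    rw [hausdorffEdist, hausdorffEdist_comm]
    exact infEdist_le_hausdorffEdist_of_mem hx

/-- Hausdorff edistance of unions. -/
lemma hausdorffEdist_union_le (s t s' t' : Set ℝ) :
    hausdorffEdist (s ∪ t) (s' ∪ t') ≤
      max (hausdorffEdist s s') (hausdorffEdist t t') := by
  apply hausdorffEdist_le_of_infEdist
  · rintro x (hx | hx)
    · exact ((infEdist_anti subset_union_left).trans
        (infEdist_le_hausdorffEdist_of_mem hx)).trans (le_max_left _ _)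
    · exact ((infEdist_anti subset_union_right).trans
        (infEdist_le_hausdorffEdist_of_mem hx)).trans (le_max_right _ _)
  · rintro x (hx | hx)
    · refine ((infEdist_anti subset_union_left).trans ?_).trans (le_max_left _ _)
      rw [hausdorffEdist, hausdorffEdist_comm]
      exact infEdist_le_hausdorffEdist_of_mem hx
    · refine ((infEdist_anti subset_union_right).trans ?_).trans (le_max_right _ _)
      rw [hausdorffEdist, hausdorffEdist_comm]
      exact infEdist_le_hausdorffEdist_of_mem hx

/-- the quadruple `W_a = W_ā = [τ−2,τ−1]`, `W_b = W_b̄ = [−1,τ−2]`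
is the unique quadruple of nonempty compact subsets of `ℝ` solving the window IFS
of the twisted Fibonacci substitution. -/
theorem stmt14
    (τ σ : ℝ) (hτ : τ = (1 + Real.sqrt 5) / 2) (hσ : σ = 1 - τ) :
    (((Icc (τ - 2) (τ - 1) : Set ℝ)).Nonempty ∧ IsCompact (Icc (τ - 2) (τ - 1)) ∧
     ((Icc (-1) (τ - 2) : Set ℝ)).Nonempty ∧ IsCompact (Icc (-1) (τ - 2)) ∧
     Icc (τ - 2) (τ - 1) =
       (fun s => σ * s) '' Icc (τ - 2) (τ - 1) ∪
         (fun s => σ * s) '' Icc (-1) (τ - 2) ∧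
     Icc (-1) (τ - 2) = (fun s => σ * s + σ) '' Icc (τ - 2) (τ - 1)) ∧
    (∀ Wa Wab Wb Wbb : Set ℝ,
      Wa.Nonempty → IsCompact Wa → Wab.Nonempty → IsCompact Wab →
      Wb.Nonempty → IsCompact Wb → Wbb.Nonempty → IsCompact Wbb →
      Wa = (fun s => σ * s) '' Wa ∪ (fun s => σ * s) '' Wbb →
      Wab = (fun s => σ * s) '' Wab ∪ (fun s => σ * s) '' Wb →
      Wb = (fun s => σ * s + σ) '' Wa →
      Wbb = (fun s => σ * s + σ) '' Wab →
      Wa = Icc (τ - 2) (τ - 1) ∧ Wab = Icc (τ - 2) (τ - 1) ∧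
        Wb = Icc (-1) (τ - 2) ∧ Wbb = Icc (-1) (τ - 2)) := by
  have h5 : Real.sqrt 5 ^ 2 = 5 := Real.sq_sqrt (by norm_num)
  have h5n : (0:ℝ) ≤ Real.sqrt 5 := Real.sqrt_nonneg 5
  have hl : (2:ℝ) < Real.sqrt 5 := by nlinarith
  have hr : Real.sqrt 5 < 3 := by nlinarith
  have hτ1 : (1:ℝ) < τ := by rw [hτ]; linarith
  have hτ2 : τ < 2 := by rw [hτ]; linarith
  have hττ : τ * τ = τ + 1 := by rw [hτ]; nlinarith
  have hσneg : σ < 0 := by rw [hσ]; linarith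
  -- the images of the two intervals
  have m1 : σ * (τ - 1) = τ - 2 := by rw [hσ]; linear_combination -hττ
  have m2 : σ * (τ - 2) = 2 * τ - 3 := by rw [hσ]; linear_combination -hττ
  have m3 : σ * (-1) = τ - 1 := by rw [hσ]; ring
  have hA : (fun s => σ * s) '' Icc (τ - 2) (τ - 1) = Icc (τ - 2) (2 * τ - 3) := by
    rw [img_mul_neg_Icc hσneg (by linarith), m1, m2]
  have hB : (fun s => σ * s) '' Icc (-1) (τ - 2) = Icc (2 * τ - 3) (τ - 1) := by
    rw [img_mul_neg_Icc hσneg (by linarith), m2, m3]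
  have hUnion : Icc (τ - 2) (τ - 1) =
      (fun s => σ * s) '' Icc (τ - 2) (τ - 1) ∪ (fun s => σ * s) '' Icc (-1) (τ - 2) := by
    rw [hA, hB, Icc_union_Icc_eq_Icc (by nlinarith) (by nlinarith)]
  have hG : Icc (-1) (τ - 2) = (fun s => σ * s + σ) '' Icc (τ - 2) (τ - 1) := by
    have : (fun s => σ * s + σ) = (fun x => x + σ) ∘ (fun s => σ * s) := rfl
    rw [this, image_comp, hA, image_add_const_Icc]
    have n1 : τ - 2 + σ = -1 := by rw [hσ]; ring
    have n2 : 2 * τ - 3 + σ = τ - 2 := by rw [hσ]; ring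
    rw [n1, n2]
  refine ⟨⟨⟨τ - 2, by constructor <;> linarith⟩, isCompact_Icc,
    ⟨-1, by constructor <;> linarith⟩, isCompact_Icc, hUnion, hG⟩, ?_⟩
  intro Wa Wab Wb Wbb hWa hWac hWab hWabc hWb hWbc hWbb hWbbc e1 e2 e3 e4
  -- the Lipschitz constant
  set c : ℝ≥0 := Real.toNNReal (τ - 1) with hc
  have hcc : (c : ℝ) = τ - 1 := Real.coe_toNNReal _ (by linarith)
  have hc0 : c ≠ 0 := by
    simp only [hc, ne_eq, Real.toNNReal_eq_zero, not_le]; linarith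
  have hc1 : (c : ℝ≥0∞) < 1 := by
    rw [← ENNReal.coe_one, ENNReal.coe_lt_coe, ← NNReal.coe_lt_coe, hcc, NNReal.coe_one]
    linarith
  have hf : LipschitzWith c (fun s : ℝ => σ * s) := by
    apply LipschitzWith.of_dist_le_mul
    intro x y
    rw [hcc, Real.dist_eq, Real.dist_eq, ← mul_sub, abs_mul]
    have : |σ| = τ - 1 := by rw [hσ, abs_of_neg (by linarith)]; ring
    rw [this]
  have hg : LipschitzWith c (fun s : ℝ => σ * s + σ) := by
    apply LipschitzWith.of_dist_le_mul
    intro x y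
    rw [hcc, Real.dist_eq, Real.dist_eq]
    have : σ * x + σ - (σ * y + σ) = σ * (x - y) := by ring
    rw [this, abs_mul]
    have : |σ| = τ - 1 := by rw [hσ, abs_of_neg (by linarith)]; ring
    rw [this]
  set Ia := Icc (τ - 2) (τ - 1) with hIa
  set Ib := Icc (-1) (τ - 2) with hIb
  have hIan : Ia.Nonempty := ⟨τ - 2, by constructor <;> linarith⟩
  have hIbn : Ib.Nonempty := ⟨-1, by constructor <;> linarith⟩
  -- Hausdorff distances are finite
  have fin : ∀ (s t : Set ℝ), s.Nonempty → IsCompact s → t.Nonempty → IsCompact t →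
      hausdorffEdist s t ≠ ⊤ := fun s t hs hsc ht htc =>
    Metric.hausdorffEdist_ne_top_of_nonempty_of_bounded hs ht hsc.isBounded htc.isBounded
  set D : ℝ≥0∞ := max (max (hausdorffEdist Wa Ia) (hausdorffEdist Wab Ia))
    (max (hausdorffEdist Wb Ib) (hausdorffEdist Wbb Ib)) with hD
  have hDtop : D ≠ ⊤ := by
    have : D < ⊤ := by
      refine max_lt (max_lt ?_ ?_) (max_lt ?_ ?_) <;> rw [lt_top_iff_ne_top]
      exacts [fin _ _ hWa hWac hIan isCompact_Icc, fin _ _ hWab hWabc hIan isCompact_Icc,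
        fin _ _ hWb hWbc hIbn isCompact_Icc, fin _ _ hWbb hWbbc hIbn isCompact_Icc]
    exact this.ne
  have key : D ≤ c * D := by
    have k1 : hausdorffEdist Wa Ia ≤ c * D := by
      rw [e1, hUnion]
      refine (hausdorffEdist_union_le _ _ _ _).trans (max_le ?_ ?_)
      · exact (lip_hausdorffEdist hc0 hf _ _).trans (mul_le_mul_right
          (le_trans (le_max_left _ _) (le_max_left _ _)) (c : ℝ≥0∞))
      · exact (lip_hausdorffEdist hc0 hf _ _).trans (mul_le_mul_right
          (le_trans (le_max_right _ _) (le_max_right _ _)) (c : ℝ≥0∞))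
    have k2 : hausdorffEdist Wab Ia ≤ c * D := by
      rw [e2, hUnion]
      refine (hausdorffEdist_union_le _ _ _ _).trans (max_le ?_ ?_)
      · exact (lip_hausdorffEdist hc0 hf _ _).trans (mul_le_mul_right
          (le_trans (le_max_right _ _) (le_max_left _ _)) (c : ℝ≥0∞))
      · exact (lip_hausdorffEdist hc0 hf _ _).trans (mul_le_mul_right
          (le_trans (le_max_left _ _) (le_max_right _ _)) (c : ℝ≥0∞))
    have k3 : hausdorffEdist Wb Ib ≤ c * D := by
      rw [e3, hG]
      exact (lip_hausdorffEdist hc0 hg _ _).trans (mul_le_mul_right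
        (le_trans (le_max_left _ _) (le_max_left _ _)) (c : ℝ≥0∞))
    have k4 : hausdorffEdist Wbb Ib ≤ c * D := by
      rw [e4, hG]
      exact (lip_hausdorffEdist hc0 hg _ _).trans (mul_le_mul_right
        (le_trans (le_max_right _ _) (le_max_left _ _)) (c : ℝ≥0∞))
    exact max_le (max_le k1 k2) (max_le k3 k4)
  have hD0 : D = 0 := by
    by_contra h
    have : c * D < 1 * D := ENNReal.mul_lt_mul_left h hDtop hc1
    rw [one_mul] at this
    exact absurd (key.trans_lt this) (lt_irrefl D)
  have z1 : hausdorffEdist Wa Ia = 0 := le_antisymm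
    (by rw [← hD0]; exact (le_max_left _ _).trans (le_max_left _ _)) zero_le
  have z2 : hausdorffEdist Wab Ia = 0 := le_antisymm
    (by rw [← hD0]; exact (le_max_right _ _).trans (le_max_left _ _)) zero_le
  have z3 : hausdorffEdist Wb Ib = 0 := le_antisymm
    (by rw [← hD0]; exact (le_max_left _ _).trans (le_max_right _ _)) zero_le
  have z4 : hausdorffEdist Wbb Ib = 0 := le_antisymm
    (by rw [← hD0]; exact (le_max_right _ _).trans (le_max_right _ _)) zero_le
  exact ⟨(hausdorffEdist_zero_iff_eq_of_closed hWac.isClosed isClosed_Icc).1 z1,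
    (hausdorffEdist_zero_iff_eq_of_closed hWabc.isClosed isClosed_Icc).1 z2,
    (hausdorffEdist_zero_iff_eq_of_closed hWbc.isClosed isClosed_Icc).1 z3,
    (hausdorffEdist_zero_iff_eq_of_closed hWbbc.isClosed isClosed_Icc).1 z4⟩
end
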